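/- arXiv:1806.08936 — 9 statements merged into one kernel-verified Lean document; each statement's English description precedes it below -/
import Mathlib

section
/- For every integer k ≥ 1 there exist a connected simple graph G = (V,E) with |V| = k² + k + 1 vertices and |E| = 2k² edges, a family U of K = k^k scenarios with edge costs c^ξ_e ∈ {0,1}, and a fractional solution x : E → [0,1] such that: Σ_{e∈E} x_e = |V| − 1; Σ_{e∈δ(S)} x_e ≥ 1 for every nonempty proper subset S ⊂ V; Σ_{e∈E} c^ξ_e x_e = 1 for every scenario ξ ∈ U; and every spanning tree T of G satisfies max_{ξ∈U} Σ_{e∈T} c^ξ_e ≥ k. Consequently, the cut-set LP relaxation of the min-max spanning tree problem has integrality gap at least k = Ω(log K / log log K). -/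
open SimpleGraph

namespace MMSTAux

open scoped Classical

variable (k : ℕ)

noncomputable def enc : (Unit ⊕ Fin k ⊕ Fin k × Fin k) ≃ Fin (k ^ 2 + k + 1) :=
  Fintype.equivFinOfCardEq (by simp; ring)

noncomputable def root : Fin (k ^ 2 + k + 1) := enc k (Sum.inl ())
noncomputable def hub (i : Fin k) : Fin (k ^ 2 + k + 1) := enc k (Sum.inr (Sum.inl i))
noncomputable def leaf (i j : Fin k) : Fin (k ^ 2 + k + 1) := enc k (Sum.inr (Sum.inr (i, j)))

lemma root_ne_hub (i : Fin k) : root k ≠ hub k i := by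
  simp [root, hub, (enc k).injective.ne_iff]

lemma root_ne_leaf (i j : Fin k) : root k ≠ leaf k i j := by
  simp [root, leaf, (enc k).injective.ne_iff]

lemma hub_ne_leaf (i a b : Fin k) : hub k i ≠ leaf k a b := by
  simp [hub, leaf, (enc k).injective.ne_iff]

lemma hub_inj {i i' : Fin k} (h : hub k i = hub k i') : i = i' := by
  simpa [hub, (enc k).apply_eq_iff_eq] using h

lemma leaf_inj {i j i' j' : Fin k} (h : leaf k i j = leaf k i' j') : i = i' ∧ j = j' := by
  simpa [leaf, (enc k).apply_eq_iff_eq, Prod.ext_iff] using h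

noncomputable def E1 : Finset (Sym2 (Fin (k ^ 2 + k + 1))) :=
  Finset.univ.image (fun p : Fin k × Fin k => s(hub k p.1, leaf k p.1 p.2))

noncomputable def E2 : Finset (Sym2 (Fin (k ^ 2 + k + 1))) :=
  Finset.univ.image (fun p : Fin k × Fin k => s(leaf k p.1 p.2, root k))

noncomputable def Eall : Finset (Sym2 (Fin (k ^ 2 + k + 1))) := E1 k ∪ E2 k

lemma mem_E1 {e} : e ∈ E1 k ↔ ∃ p : Fin k × Fin k, e = s(hub k p.1, leaf k p.1 p.2) := by
  simp [E1, eq_comm]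

lemma mem_E2 {e} : e ∈ E2 k ↔ ∃ p : Fin k × Fin k, e = s(leaf k p.1 p.2, root k) := by
  simp [E2, eq_comm]

lemma E1_inj : Function.Injective (fun p : Fin k × Fin k => s(hub k p.1, leaf k p.1 p.2)) := by
  rintro ⟨a, b⟩ ⟨c, d⟩ h
  simp only [Sym2.eq_iff] at h
  rcases h with ⟨h1, h2⟩ | ⟨h1, h2⟩
  · obtain ⟨rfl, rfl⟩ := leaf_inj k h2
    rfl
  · exact absurd h1 (hub_ne_leaf k _ _ _)

lemma E2_inj : Function.Injective (fun p : Fin k × Fin k => s(leaf k p.1 p.2, root k)) := by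
  rintro ⟨a, b⟩ ⟨c, d⟩ h
  simp only [Sym2.eq_iff] at h
  rcases h with ⟨h1, h2⟩ | ⟨h1, h2⟩
  · obtain ⟨rfl, rfl⟩ := leaf_inj k h1
    rfl
  · exact absurd h2 (root_ne_leaf k _ _)

lemma disjoint_E1_E2 : Disjoint (E1 k) (E2 k) := by
  rw [Finset.disjoint_left]
  intro e h1 h2
  rw [mem_E1] at h1
  rw [mem_E2] at h2
  obtain ⟨p, rfl⟩ := h1
  obtain ⟨q, hq⟩ := h2
  rw [Sym2.eq_iff] at hq
  rcases hq with ⟨h1, h2⟩ | ⟨h1, h2⟩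
  · exact root_ne_leaf k _ _ h2.symm
  · exact root_ne_hub k _ h1.symm

lemma card_E1 : (E1 k).card = k ^ 2 := by
  rw [E1, Finset.card_image_of_injective _ (E1_inj k)]
  simp [sq]

lemma card_E2 : (E2 k).card = k ^ 2 := by
  rw [E2, Finset.card_image_of_injective _ (E2_inj k)]
  simp [sq]

lemma not_isDiag (e) (he : e ∈ Eall k) : ¬ e.IsDiag := by
  rw [Eall, Finset.mem_union] at he
  rcases he with h | h
  · obtain ⟨p, rfl⟩ := (mem_E1 k).1 h
    simpa using hub_ne_leaf k p.1 p.1 p.2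
  · obtain ⟨p, rfl⟩ := (mem_E2 k).1 h
    simpa using (root_ne_leaf k p.1 p.2).symm

noncomputable def G : SimpleGraph (Fin (k ^ 2 + k + 1)) := fromEdgeSet ↑(Eall k)

lemma edgeSet_G : (G k).edgeSet = ↑(Eall k) := by
  rw [G, edgeSet_fromEdgeSet]
  ext e
  simp only [Set.mem_diff, Finset.mem_coe, Set.mem_setOf_eq, and_iff_left_iff_imp]
  exact not_isDiag k e

lemma edgeFinset_G : (G k).edgeFinset = Eall k := by
  apply Finset.coe_injective
  rw [coe_edgeFinset, edgeSet_G]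

lemma adj_hub_leaf (i j : Fin k) : (G k).Adj (hub k i) (leaf k i j) := by
  rw [G, fromEdgeSet_adj]
  refine ⟨?_, hub_ne_leaf k i i j⟩
  simp only [Finset.mem_coe, Eall, Finset.mem_union]
  exact Or.inl ((mem_E1 k).2 ⟨(i, j), rfl⟩)

lemma adj_leaf_root (i j : Fin k) : (G k).Adj (leaf k i j) (root k) := by
  rw [G, fromEdgeSet_adj]
  refine ⟨?_, (root_ne_leaf k i j).symm⟩
  simp only [Finset.mem_coe, Eall, Finset.mem_union]
  exact Or.inr ((mem_E2 k).2 ⟨(i, j), rfl⟩)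

lemma connected_G (hk : 1 ≤ k) : (G k).Connected := by
  have j0 : Fin k := ⟨0, hk⟩
  have hre : ∀ v : Fin (k ^ 2 + k + 1), (G k).Reachable v (root k) := by
    intro v
    obtain ⟨w, rfl⟩ := (enc k).surjective v
    rcases w with _ | i | ⟨i, j⟩
    · exact Reachable.refl _
    · exact ((adj_hub_leaf k i j0).reachable).trans (adj_leaf_root k i j0).reachable
    · exact (adj_leaf_root k i j).reachable
  have : Nonempty (Fin (k ^ 2 + k + 1)) := ⟨root k⟩
  exact ⟨fun u v => (hre u).trans (hre v).symm⟩

noncomputable def xx (e : Sym2 (Fin (k ^ 2 + k + 1))) : ℝ :=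
  if e ∈ E1 k then 1 else if e ∈ E2 k then 1 / k else 0

noncomputable def sc : (Fin k → Fin k) ≃ Fin (k ^ k) :=
  Fintype.equivFinOfCardEq (by simp)

noncomputable def cc (ξ : Fin (k ^ k)) (e : Sym2 (Fin (k ^ 2 + k + 1))) : ℝ :=
  if ∃ i : Fin k, e = s(leaf k i ((sc k).symm ξ i), root k) then 1 else 0

lemma cc_nonneg (ξ e) : 0 ≤ cc k ξ e := by
  rw [cc]; split <;> norm_num

lemma xx_nonneg (e) : 0 ≤ xx k e := by
  rw [xx]; split
  · norm_num
  · split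
    · positivity
    · exact le_refl 0

lemma xx_E1 {e} (he : e ∈ E1 k) : xx k e = 1 := by simp [xx, he]

lemma xx_E2 {e} (he : e ∈ E2 k) : xx k e = 1 / k := by
  have h1 : e ∉ E1 k := Finset.disjoint_right.1 (disjoint_E1_E2 k) he
  simp [xx, he, h1]

end MMSTAux

namespace MMSTAux

variable (k : ℕ)

lemma sum_xx (hk : 1 ≤ k) : ∑ e ∈ Eall k, xx k e = (k : ℝ) ^ 2 + k := by
  have hk0 : (k : ℝ) ≠ 0 := by positivity
  rw [Eall, Finset.sum_union (disjoint_E1_E2 k)]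
  have h1 : ∑ e ∈ E1 k, xx k e = (k : ℝ) ^ 2 := by
    rw [Finset.sum_congr rfl (fun e he => xx_E1 k he), Finset.sum_const, card_E1]
    simp
  have h2 : ∑ e ∈ E2 k, xx k e = (k : ℝ) := by
    rw [Finset.sum_congr rfl (fun e he => xx_E2 k he), Finset.sum_const, card_E2]
    field_simp
    ring_nf
    rw [sq, mul_assoc, mul_inv_cancel₀ hk0, mul_one]
  rw [h1, h2]

lemma cc_E1 (ξ) {e} (he : e ∈ E1 k) : cc k ξ e = 0 := by
  obtain ⟨p, rfl⟩ := (mem_E1 k).1 he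
  rw [cc, if_neg]
  rintro ⟨i, h⟩
  rw [Sym2.eq_iff] at h
  rcases h with ⟨h1, h2⟩ | ⟨h1, h2⟩
  · exact hub_ne_leaf k _ _ _ h1
  · exact root_ne_hub k _ h1.symm

lemma cc_leaf_root (ξ) (p : Fin k × Fin k) :
    cc k ξ (s(leaf k p.1 p.2, root k)) =
      if p.2 = (sc k).symm ξ p.1 then 1 else 0 := by
  have hiff : (∃ i, s(leaf k p.1 p.2, root k) = s(leaf k i ((sc k).symm ξ i), root k)) ↔
      p.2 = (sc k).symm ξ p.1 := by
    constructor
    · rintro ⟨i, h⟩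
      rw [Sym2.eq_iff] at h
      rcases h with ⟨h1, h2⟩ | ⟨h1, h2⟩
      · obtain ⟨h3, h4⟩ := leaf_inj k h1
        subst h3
        exact h4
      · exact absurd h2 (root_ne_leaf k _ _)
    · intro h
      exact ⟨p.1, by rw [h]⟩
  rw [cc, if_congr hiff rfl rfl]

lemma sum_cx (hk : 1 ≤ k) (ξ) : ∑ e ∈ Eall k, cc k ξ e * xx k e = 1 := by
  have hk0 : (k : ℝ) ≠ 0 := by positivity
  rw [Eall, Finset.sum_union (disjoint_E1_E2 k)]
  have h1 : ∑ e ∈ E1 k, cc k ξ e * xx k e = 0 := by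
    apply Finset.sum_eq_zero
    intro e he
    rw [cc_E1 k ξ he, zero_mul]
  have h2 : ∑ e ∈ E2 k, cc k ξ e * xx k e = 1 := by
    rw [E2, Finset.sum_image (fun a _ b _ h => E2_inj k h)]
    have : ∀ p : Fin k × Fin k,
        cc k ξ (s(leaf k p.1 p.2, root k)) * xx k (s(leaf k p.1 p.2, root k)) =
          (if p.2 = (sc k).symm ξ p.1 then 1 else 0) * (1 / k) := by
      intro p
      rw [cc_leaf_root, xx_E2 k ((mem_E2 k).2 ⟨p, rfl⟩)]
    rw [Finset.sum_congr rfl (fun p _ => this p)]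
    rw [← Finset.sum_mul, Fintype.sum_prod_type]
    simp only [Finset.sum_ite_eq', Finset.mem_univ, if_true]
    rw [Finset.sum_const]
    simp only [Finset.card_univ, Fintype.card_fin, nsmul_eq_mul, mul_one]
    field_simp
  rw [h1, h2, zero_add]

lemma cut_bound (hk : 1 ≤ k) (S : Finset (Fin (k ^ 2 + k + 1))) (hne : S.Nonempty)
    (hSu : S ≠ Finset.univ) :
    1 ≤ ∑ e ∈ (Eall k).filter
        (fun e => ∃ a b, e = s(a, b) ∧ a ∈ S ∧ b ∉ S), xx k e := by
  classical
  have hk0 : (k : ℝ) ≠ 0 := by positivity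
  by_cases hA : ∃ p : Fin k × Fin k, ¬(hub k p.1 ∈ S ↔ leaf k p.1 p.2 ∈ S)
  · obtain ⟨p, hp⟩ := hA
    have hEm : s(hub k p.1, leaf k p.1 p.2) ∈ Eall k :=
      Finset.mem_union_left _ ((mem_E1 k).2 ⟨p, rfl⟩)
    have hpred : ∃ a b, s(hub k p.1, leaf k p.1 p.2) = s(a, b) ∧ a ∈ S ∧ b ∉ S := by
      rcases Classical.em (hub k p.1 ∈ S) with h1 | h1
      · have h2 : leaf k p.1 p.2 ∉ S := fun h => hp ⟨fun _ => h, fun _ => h1⟩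
        exact ⟨_, _, rfl, h1, h2⟩
      · have h2 : leaf k p.1 p.2 ∈ S := by
          by_contra h2
          exact hp ⟨fun h => absurd h h1, fun h => absurd h h2⟩
        exact ⟨leaf k p.1 p.2, hub k p.1, Sym2.eq_swap.symm, h2, h1⟩
    have hmem : s(hub k p.1, leaf k p.1 p.2) ∈ (Eall k).filter
        (fun e => ∃ a b, e = s(a, b) ∧ a ∈ S ∧ b ∉ S) :=
      Finset.mem_filter.2 ⟨hEm, hpred⟩
    calc (1 : ℝ) = xx k (s(hub k p.1, leaf k p.1 p.2)) :=
          (xx_E1 k ((mem_E1 k).2 ⟨p, rfl⟩)).symm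
      _ ≤ _ := Finset.single_le_sum (fun e _ => xx_nonneg k e) hmem
  · push_neg at hA
    -- hA : ∀ p, hub ∈ S ↔ leaf ∈ S
    have main : ∀ i : Fin k, (∀ j, (leaf k i j ∈ S ↔ hub k i ∈ S)) := by
      intro i j
      exact (hA (i, j)).symm
    -- find block entirely on the opposite side of root
    have key : ∃ i : Fin k, (root k ∈ S → hub k i ∉ S) ∧ (root k ∉ S → hub k i ∈ S) := by
      by_cases hr : root k ∈ S
      · obtain ⟨v, hv⟩ : ∃ v, v ∉ S := by
          by_contra h
          push_neg at h
          exact hSu (Finset.eq_univ_of_forall h)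
        obtain ⟨w, rfl⟩ := (enc k).surjective v
        rcases w with _ | i | ⟨i, j⟩
        · exact absurd hr hv
        · exact ⟨i, fun _ => hv, fun h => absurd hr h⟩
        · exact ⟨i, fun _ => fun hh => hv ((main i j).2 hh),
            fun h => absurd hr h⟩
      · obtain ⟨v, hv⟩ := hne
        obtain ⟨w, rfl⟩ := (enc k).surjective v
        rcases w with _ | i | ⟨i, j⟩
        · exact absurd hv hr
        · exact ⟨i, fun h => absurd h hr, fun _ => hv⟩
        · exact ⟨i, fun h => absurd h hr, fun _ => (main i j).1 hv⟩
    obtain ⟨i, hi1, hi2⟩ := key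
    set F : Finset (Sym2 (Fin (k ^ 2 + k + 1))) :=
      Finset.univ.image (fun j : Fin k => s(leaf k i j, root k)) with hF
    have hFinj : Function.Injective (fun j : Fin k => s(leaf k i j, root k)) := by
      intro a b h
      simp only [Sym2.eq_iff] at h
      rcases h with ⟨h1, _⟩ | ⟨h1, _⟩
      · exact (leaf_inj k h1).2
      · exact absurd h1 (root_ne_leaf k _ _).symm
    have hFsub : F ⊆ (Eall k).filter (fun e => ∃ a b, e = s(a, b) ∧ a ∈ S ∧ b ∉ S) := by
      intro e he
      rw [hF, Finset.mem_image] at he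
      obtain ⟨j, _, rfl⟩ := he
      refine Finset.mem_filter.2 ⟨Finset.mem_union_right _ ((mem_E2 k).2 ⟨(i, j), rfl⟩), ?_⟩
      by_cases hr : root k ∈ S
      · have hl : leaf k i j ∉ S := fun h => (hi1 hr) ((main i j).1 h)
        exact ⟨root k, leaf k i j, Sym2.eq_swap.symm, hr, hl⟩
      · have hl : leaf k i j ∈ S := (main i j).2 (hi2 hr)
        exact ⟨leaf k i j, root k, rfl, hl, hr⟩
    have hFsum : ∑ e ∈ F, xx k e = 1 := by
      rw [hF, Finset.sum_image (fun a _ b _ h => hFinj h)]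
      have : ∀ j : Fin k, xx k (s(leaf k i j, root k)) = 1 / k := by
        intro j
        exact xx_E2 k ((mem_E2 k).2 ⟨(i, j), rfl⟩)
      rw [Finset.sum_congr rfl (fun j _ => this j), Finset.sum_const]
      simp only [Finset.card_univ, Fintype.card_fin, nsmul_eq_mul]
      field_simp
    rw [← hFsum]
    exact Finset.sum_le_sum_of_subset_of_nonneg hFsub (fun e _ _ => xx_nonneg k e)

lemma tree_bound (T : Finset (Sym2 (Fin (k ^ 2 + k + 1))))
    (hT : ↑T ⊆ (G k).edgeSet)
    (hc : (fromEdgeSet (↑T : Set (Sym2 (Fin (k ^ 2 + k + 1))))).Connected) :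
    ∃ ξ, (k : ℝ) ≤ ∑ e ∈ T, cc k ξ e := by
  classical
  have key : ∀ i : Fin k, ∃ j : Fin k, s(leaf k i j, root k) ∈ T := by
    intro i
    set B : Set (Fin (k ^ 2 + k + 1)) := {v | v = hub k i ∨ ∃ j, v = leaf k i j} with hB
    have hrootB : root k ∉ B := by
      rintro (h | ⟨j, h⟩)
      · exact root_ne_hub k i h
      · exact root_ne_leaf k i j h
    obtain ⟨p⟩ := hc.preconnected (hub k i) (root k)
    obtain ⟨d, _, hd1, hd2⟩ := p.exists_boundary_dart B (Or.inl rfl) hrootB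
    have hdT : s(d.toProd.1, d.toProd.2) ∈ T := by
      have := d.adj
      rw [fromEdgeSet_adj] at this
      exact this.1
    have hdE : s(d.toProd.1, d.toProd.2) ∈ Eall k := by
      have := hT hdT
      rw [edgeSet_G] at this
      exact this
    rw [Eall, Finset.mem_union] at hdE
    rcases hdE with hE | hE
    · exfalso
      obtain ⟨q, hq⟩ := (mem_E1 k).1 hE
      rw [Sym2.eq_iff] at hq
      rcases hq with ⟨h1, h2⟩ | ⟨h1, h2⟩
      · -- d.1 = hub q.1, d.2 = leaf q.1 q.2
        rcases hd1 with h | ⟨j, h⟩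
        · have : q.1 = i := hub_inj k (h1 ▸ h)
          exact hd2 (Or.inr ⟨q.2, by rw [h2, this]⟩)
        · exact hub_ne_leaf k _ _ _ (h1.symm.trans h)
      · -- d.1 = leaf q.1 q.2, d.2 = hub q.1
        rcases hd1 with h | ⟨j, h⟩
        · exact hub_ne_leaf k _ _ _ (h.symm.trans h1)
        · have : q.1 = i := ((leaf_inj k (h1 ▸ h).symm)).1.symm
          exact hd2 (Or.inl (by rw [h2, this]))
    · obtain ⟨q, hq⟩ := (mem_E2 k).1 hE
      rw [Sym2.eq_iff] at hq
      rcases hq with ⟨h1, h2⟩ | ⟨h1, h2⟩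
      · -- d.1 = leaf q.1 q.2, d.2 = root
        rcases hd1 with h | ⟨j, h⟩
        · exact absurd (h.symm.trans h1).symm (hub_ne_leaf k _ _ _).symm
        · obtain ⟨hq1, hq2⟩ := leaf_inj k (h1 ▸ h).symm
          refine ⟨q.2, ?_⟩
          rw [hq1, ← h1, ← h2]
          exact hdT
      · -- d.1 = root: contradiction with d.1 ∈ B
        exact absurd (h1 ▸ hd1) hrootB
  choose f hf using key
  refine ⟨sc k f, ?_⟩
  set F : Finset (Sym2 (Fin (k ^ 2 + k + 1))) :=
    Finset.univ.image (fun i : Fin k => s(leaf k i (f i), root k)) with hFdef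
  have hFinj : Function.Injective (fun i : Fin k => s(leaf k i (f i), root k)) := by
    intro a b h
    simp only [Sym2.eq_iff] at h
    rcases h with ⟨h1, _⟩ | ⟨h1, _⟩
    · exact (leaf_inj k h1).1
    · exact absurd h1 (root_ne_leaf k _ _).symm
  have hFsub : F ⊆ T := by
    intro e he
    rw [hFdef, Finset.mem_image] at he
    obtain ⟨i, _, rfl⟩ := he
    exact hf i
  have hFsum : ∑ e ∈ F, cc k (sc k f) e = k := by
    rw [hFdef, Finset.sum_image (fun a _ b _ h => hFinj h)]
    have : ∀ i : Fin k, cc k (sc k f) (s(leaf k i (f i), root k)) = 1 := by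
      intro i
      rw [cc, if_pos]
      refine ⟨i, ?_⟩
      rw [Equiv.symm_apply_apply]
    rw [Finset.sum_congr rfl (fun i _ => this i), Finset.sum_const]
    simp
  calc (k : ℝ) = ∑ e ∈ F, cc k (sc k f) e := hFsum.symm
    _ ≤ ∑ e ∈ T, cc k (sc k f) e :=
        Finset.sum_le_sum_of_subset_of_nonneg hFsub (fun e _ _ => cc_nonneg k _ e)

end MMSTAux


open scoped Classical in
/-- Integrality gap `Ω(log K / log log K)` of the cut-set LP relaxation of the
min-max spanning tree problem: for every `k ≥ 1` there is a connected simple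
graph on `k²+k+1` vertices with `2k²` edges, `K = k^k` scenarios of `0/1` edge
costs, and a fractional solution `x` of total weight `|V|-1`, covering every
cut, of scenario cost exactly `1`, while every spanning tree has max scenario
cost `≥ k`. -/
theorem stmt1 (k : ℕ) (hk : 1 ≤ k) :
    ∃ (G : SimpleGraph (Fin (k ^ 2 + k + 1)))
      (c : Fin (k ^ k) → Sym2 (Fin (k ^ 2 + k + 1)) → ℝ)
      (x : Sym2 (Fin (k ^ 2 + k + 1)) → ℝ),
      G.Connected ∧
      G.edgeFinset.card = 2 * k ^ 2 ∧
      (∀ ξ, ∀ e ∈ G.edgeFinset, c ξ e = 0 ∨ c ξ e = 1) ∧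
      (∀ e, 0 ≤ x e ∧ x e ≤ 1) ∧
      (∑ e ∈ G.edgeFinset, x e) = (k ^ 2 + k : ℝ) ∧
      (∀ S : Finset (Fin (k ^ 2 + k + 1)), S.Nonempty → S ≠ Finset.univ →
        1 ≤ ∑ e ∈ G.edgeFinset.filter
          (fun e => ∃ a b, e = s(a, b) ∧ a ∈ S ∧ b ∉ S), x e) ∧
      (∀ ξ, ∑ e ∈ G.edgeFinset, c ξ e * x e = 1) ∧
      (∀ T : Finset (Sym2 (Fin (k ^ 2 + k + 1))),
        ↑T ⊆ G.edgeSet →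
        (fromEdgeSet (↑T : Set (Sym2 (Fin (k ^ 2 + k + 1))))).Connected →
        (fromEdgeSet (↑T : Set (Sym2 (Fin (k ^ 2 + k + 1))))).IsAcyclic →
        ∃ ξ, (k : ℝ) ≤ ∑ e ∈ T, c ξ e) := by
  refine ⟨MMSTAux.G k, MMSTAux.cc k, MMSTAux.xx k, MMSTAux.connected_G k hk,
    ?_, ?_, ?_, ?_, ?_, ?_, ?_⟩
  · rw [MMSTAux.edgeFinset_G, MMSTAux.Eall,
      Finset.card_union_of_disjoint (MMSTAux.disjoint_E1_E2 k),
      MMSTAux.card_E1, MMSTAux.card_E2]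
    ring
  · intro ξ e _
    rw [MMSTAux.cc]
    split
    · exact Or.inr rfl
    · exact Or.inl rfl
  · intro e
    refine ⟨MMSTAux.xx_nonneg k e, ?_⟩
    rw [MMSTAux.xx]
    split
    · exact le_refl 1
    · split
      · rw [div_le_one_iff]
        left
        constructor
        · exact_mod_cast hk
        · exact_mod_cast hk
      · norm_num
  · rw [MMSTAux.edgeFinset_G]
    rw [MMSTAux.sum_xx k hk]
  · intro S hne hSu
    rw [MMSTAux.edgeFinset_G]
    exact MMSTAux.cut_bound k hk S hne hSu
  · intro ξ
    rw [MMSTAux.edgeFinset_G]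
    exact MMSTAux.sum_cx k hk ξ
  · intro T hT hconn _
    exact MMSTAux.tree_bound k T hT hconn
end

section
/- There exists a universal constant C > 0 such that the following holds. Let G = (V,E) be a connected simple graph on n ≥ 2 vertices, U a finite set of scenarios with |U| = K ≥ 2, L > 0, where each scenario ξ assigns a cost c^ξ_e ∈ [0, L] to every edge e ∈ E. Suppose x : E → [0,1] satisfies Σ_{e∈δ(S)} x_e ≥ 1 for every nonempty proper subset S ⊂ V, and Σ_{e∈E} c^ξ_e x_e ≤ L for every ξ ∈ U. Then there exists a spanning tree T of G with Σ_{e∈T} c^ξ_e ≤ C · (ln n + ln K) · L for every ξ ∈ U. -/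
open SimpleGraph
open scoped Classical

-- exp t ≤ 1 + 3t on [0,1]
lemma auxExpLe {t : ℝ} (h0 : 0 ≤ t) (h1 : t ≤ 1) : Real.exp t ≤ 1 + 3 * t := by
  have hc := convexOn_exp.2 (Set.mem_univ (0:ℝ)) (Set.mem_univ (1:ℝ))
    (show (0:ℝ) ≤ 1 - t by linarith) h0 (by ring)
  simp only [smul_eq_mul, mul_zero, mul_one, zero_add, Real.exp_zero] at hc
  have he : Real.exp 1 ≤ 4 := by
    have := Real.exp_one_lt_d9
    linarith
  nlinarith [Real.exp_pos (1:ℝ)]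

-- log a + 1/(a+1) ≤ log (a+1) for a ≥ 1
lemma auxLog {a : ℝ} (ha : 1 ≤ a) : Real.log a + 1 / (a + 1) ≤ Real.log (a + 1) := by
  have h0 : 0 < a := by linarith
  have h1 : 0 < a + 1 := by linarith
  have := Real.log_le_sub_one_of_pos (x := a / (a + 1)) (by positivity)
  rw [Real.log_div (ne_of_gt h0) (ne_of_gt h1)] at this
  have : Real.log a - Real.log (a+1) ≤ a / (a+1) - 1 := this
  have key : a / (a + 1) - 1 = - (1 / (a+1)) := by field_simp; ring
  linarith [key ▸ this]

-- if a-b is reachable after deleting edge s(a,b), then all reachability is preserved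
lemma auxReroute {V : Type} {H : SimpleGraph V} {a b : V}
    (h : (H \ fromEdgeSet {s(a, b)}).Reachable a b) :
    ∀ u v : V, H.Reachable u v → (H \ fromEdgeSet {s(a, b)}).Reachable u v := by
  intro u v huv
  obtain ⟨p⟩ := huv
  induction p with
  | nil => exact Reachable.refl _
  | @cons u y v hadj p ih =>
    refine Reachable.trans ?_ ih
    by_cases he : s(u, y) = s(a, b)
    · rcases Sym2.eq_iff.mp he with ⟨rfl, rfl⟩ | ⟨rfl, rfl⟩
      · exact h
      · exact h.symm
    · exact Adj.reachable (by
        simp only [SimpleGraph.sdiff_adj, fromEdgeSet_adj, Set.mem_singleton_iff]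
        exact ⟨hadj, fun hx => he hx.1⟩)

-- extraction of a spanning tree (as an edge Finset) from a connected edge Finset
lemma auxExtract {V : Type} [Fintype V] [DecidableEq V] :
    ∀ (T : Finset (Sym2 V)), (fromEdgeSet (↑T : Set (Sym2 V))).Connected →
    ∃ T' ⊆ T, (fromEdgeSet (↑T' : Set (Sym2 V))).Connected ∧
      (fromEdgeSet (↑T' : Set (Sym2 V))).IsAcyclic := by
  intro T
  induction T using Finset.strongInduction with
  | _ T ih =>
    intro hconn
    by_cases hacyc : (fromEdgeSet (↑T : Set (Sym2 V))).IsAcyclic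
    · exact ⟨T, Finset.Subset.refl T, hconn, hacyc⟩
    · simp only [IsAcyclic, not_forall, not_not] at hacyc
      obtain ⟨u, p, hp⟩ := hacyc
      -- the cycle has at least one edge
      have hne : p.edges ≠ [] := by
        intro h0
        have h3 := hp.three_le_length
        have h4 := p.length_edges
        rw [h0] at h4
        simp at h4
        omega
      obtain ⟨e, hep⟩ : ∃ e, e ∈ p.edges := by
        cases hco : p.edges with
        | nil => exact absurd hco hne
        | cons e l => exact ⟨e, hco ▸ List.mem_cons_self (a := e) (l := l)⟩
      induction e using Sym2.ind with
      | _ a b =>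
      have hkey : (fromEdgeSet (↑T : Set (Sym2 V))).Adj a b ∧
          ((fromEdgeSet (↑T : Set (Sym2 V))) \ fromEdgeSet {s(a, b)}).Reachable a b :=
        SimpleGraph.adj_and_reachable_delete_edges_iff_exists_cycle.mpr ⟨u, p, hp, hep⟩
      have heT : s(a, b) ∈ T := by
        have := hkey.1
        rw [fromEdgeSet_adj] at this
        exact this.1
      have hgraph : fromEdgeSet (↑(T.erase s(a, b)) : Set (Sym2 V))
          = (fromEdgeSet (↑T : Set (Sym2 V))) \ fromEdgeSet {s(a, b)} := by
        ext v w
        simp only [fromEdgeSet_adj, Finset.coe_erase, Set.mem_diff, Set.mem_singleton_iff,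
          SimpleGraph.sdiff_adj]
        constructor
        · rintro ⟨⟨h1, h2⟩, h3⟩
          exact ⟨⟨h1, h3⟩, fun hx => h2 hx.1⟩
        · rintro ⟨⟨h1, h3⟩, h2⟩
          exact ⟨⟨h1, fun hx => h2 ⟨hx, h3⟩⟩, h3⟩
      have hconn' : (fromEdgeSet (↑(T.erase s(a, b)) : Set (Sym2 V))).Connected := by
        rw [hgraph]
        haveI := hconn.nonempty
        exact ⟨fun v w => auxReroute hkey.2 v w (hconn.preconnected v w)⟩
      obtain ⟨T', hsub, hc, ha⟩ := ih (T.erase s(a, b)) (Finset.erase_ssubset heT) hconn'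
      exact ⟨T', hsub.trans (Finset.erase_subset _ _), hc, ha⟩

set_option maxHeartbeats 1000000 in
-- the main merging step when there are at least two components
lemma auxStep (V : Type) [Fintype V] [DecidableEq V] (G : SimpleGraph V) (K : ℕ)
    (c : Fin K → Sym2 V → ℝ) (x : Sym2 V → ℝ) (L : ℝ)
    (hL : 0 < L)
    (hcL : ∀ ξ, ∀ e ∈ G.edgeSet, 0 ≤ c ξ e ∧ c ξ e ≤ L)
    (hx : ∀ e, 0 ≤ x e ∧ x e ≤ 1)
    (hcut : ∀ S : Finset V, S.Nonempty → S ≠ Finset.univ →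
          1 ≤ ∑ e ∈ G.edgeFinset.filter
            (fun e => ∃ a b, e = s(a, b) ∧ a ∈ S ∧ b ∉ S), x e)
    (hLP : ∀ ξ, ∑ e ∈ G.edgeFinset, c ξ e * x e ≤ L)
    (r : ℕ) (T : Finset (Sym2 V)) (hTE : (↑T : Set (Sym2 V)) ⊆ G.edgeSet)
    (hTr : Nat.card (fromEdgeSet (↑T : Set (Sym2 V))).ConnectedComponent = r)
    (hr2 : 1 < r)
    (hTΦ : (∑ ξ : Fin K, Real.exp ((∑ e ∈ T, c ξ e) / L)) ≤
        (K : ℝ) * Real.exp (6 * (Real.log (Fintype.card V) - Real.log r)))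
    (hK : 2 ≤ K) :
    ∃ (e : Sym2 V) (r2 : ℕ), e ∈ G.edgeFinset ∧ e ∉ T ∧
      Nat.card (fromEdgeSet (↑(insert e T) : Set (Sym2 V))).ConnectedComponent = r2 ∧
      r2 < r ∧
      (∑ ξ : Fin K, Real.exp ((∑ e' ∈ insert e T, c ξ e') / L)) ≤
        (K : ℝ) * Real.exp (6 * (Real.log (Fintype.card V) - Real.log r2)) := by
  classical
  haveI hVne : Nonempty V := by
    rcases Finset.univ.eq_empty_or_nonempty (α := V) with h | h
    · exfalso
      haveI : IsEmpty V := Finset.univ_eq_empty_iff.mp h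
      haveI : IsEmpty (fromEdgeSet (↑T : Set (Sym2 V))).ConnectedComponent := by
        constructor; intro κ; exact κ.exists_rep.elim (fun v _ => (IsEmpty.false v))
      rw [Nat.card_of_isEmpty] at hTr; omega
    · exact ⟨h.choose⟩
  set H := fromEdgeSet (↑T : Set (Sym2 V)) with hH
  haveI : Finite H.ConnectedComponent := Quot.finite _
  haveI : Fintype H.ConnectedComponent := Fintype.ofFinite _
  set cm : V → H.ConnectedComponent := H.connectedComponentMk with hcm
  set F : Finset (Sym2 V) :=
    G.edgeFinset.filter (fun e => ∃ a b, e = s(a, b) ∧ cm a ≠ cm b) with hF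
  have hrcard : Fintype.card H.ConnectedComponent = r := by
    rw [← Nat.card_eq_fintype_card]; exact hTr
  -- Cut lower bound:  r ≤ 2 Σ_{e∈F} x e
  have hcutF : (r : ℝ) ≤ 2 * ∑ e ∈ F, x e := by
    set S : H.ConnectedComponent → Finset V :=
      fun κ => Finset.univ.filter (fun v => cm v = κ) with hS
    have hc1 : ∀ κ : H.ConnectedComponent,
        1 ≤ ∑ e ∈ G.edgeFinset.filter
          (fun e => ∃ a b, e = s(a, b) ∧ a ∈ S κ ∧ b ∉ S κ), x e := by
      intro κ
      apply hcut
      · obtain ⟨v, hv⟩ := κ.exists_rep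
        exact ⟨v, by simp only [hS, Finset.mem_filter, Finset.mem_univ, true_and]; exact hv⟩
      · obtain ⟨κ', hκ'⟩ := Fintype.exists_ne_of_one_lt_card (by omega : 1 < Fintype.card H.ConnectedComponent) κ
        obtain ⟨v, hv⟩ := κ'.exists_rep
        intro hSu
        have : v ∈ S κ := hSu ▸ Finset.mem_univ v
        rw [hS] at this
        simp only [Finset.mem_filter, Finset.mem_univ, true_and] at this
        exact hκ' (by rw [← this, ← hv]; rfl)
    have hsum1 : (r : ℝ) ≤ ∑ κ : H.ConnectedComponent,
        ∑ e ∈ G.edgeFinset.filter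
          (fun e => ∃ a b, e = s(a, b) ∧ a ∈ S κ ∧ b ∉ S κ), x e := by
      calc (r : ℝ) = ∑ _κ : H.ConnectedComponent, (1:ℝ) := by
            simp [hrcard]
        _ ≤ _ := Finset.sum_le_sum (fun κ _ => hc1 κ)
    have hswap : ∑ κ : H.ConnectedComponent,
        ∑ e ∈ G.edgeFinset.filter
          (fun e => ∃ a b, e = s(a, b) ∧ a ∈ S κ ∧ b ∉ S κ), x e
        = ∑ e ∈ G.edgeFinset, ∑ κ : H.ConnectedComponent,
            (if ∃ a b, e = s(a, b) ∧ a ∈ S κ ∧ b ∉ S κ then x e else 0) := by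
      simp_rw [Finset.sum_filter]
      exact Finset.sum_comm
    have hperE : ∀ e ∈ G.edgeFinset, (∑ κ : H.ConnectedComponent,
        (if ∃ a b, e = s(a, b) ∧ a ∈ S κ ∧ b ∉ S κ then x e else 0))
        ≤ (if ∃ a b, e = s(a, b) ∧ cm a ≠ cm b then 2 * x e else 0) := by
      intro e he
      induction e using Sym2.ind with
      | _ u v =>
      by_cases hcr : ∃ a b, s(u, v) = s(a, b) ∧ cm a ≠ cm b
      · rw [if_pos hcr, ← Finset.sum_filter, Finset.sum_const, nsmul_eq_mul]
        have hsub : Finset.univ.filter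
            (fun κ => ∃ a b, s(u, v) = s(a, b) ∧ a ∈ S κ ∧ b ∉ S κ) ⊆ {cm u, cm v} := by
          intro κ hκ
          simp only [Finset.mem_filter, Finset.mem_univ, true_and] at hκ
          obtain ⟨a, b, hab, haS, -⟩ := hκ
          have haκ : cm a = κ := by
            have := haS; rw [hS] at this
            simpa using this
          rcases Sym2.eq_iff.mp hab with ⟨rfl, rfl⟩ | ⟨rfl, rfl⟩
          · simp [← haκ]
          · simp [← haκ]
        have hcard : ((Finset.univ.filter
            (fun κ => ∃ a b, s(u, v) = s(a, b) ∧ a ∈ S κ ∧ b ∉ S κ)).card : ℝ) ≤ 2 := by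
          have := Finset.card_le_card hsub
          have h2 : ({cm u, cm v} : Finset H.ConnectedComponent).card ≤ 2 :=
            Finset.card_insert_le _ _ |>.trans (by simp)
          exact_mod_cast this.trans h2
        exact mul_le_mul_of_nonneg_right hcard (hx _).1 |>.trans_eq (by ring) |>.trans_eq rfl
      · rw [if_neg hcr]
        apply le_of_eq
        apply Finset.sum_eq_zero
        intro κ _
        rw [if_neg]
        rintro ⟨a, b, hab, haS, hbS⟩
        refine hcr ⟨a, b, hab, ?_⟩
        have haκ : cm a = κ := by
          have := haS; rw [hS] at this; simpa using this
        intro hcc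
        apply hbS
        rw [hS]
        simp [← hcc, ← haκ]
    calc (r : ℝ) ≤ _ := hsum1
      _ = _ := hswap
      _ ≤ ∑ e ∈ G.edgeFinset,
          (if ∃ a b, e = s(a, b) ∧ cm a ≠ cm b then 2 * x e else 0) :=
            Finset.sum_le_sum hperE
      _ = ∑ e ∈ F, 2 * x e := by rw [hF, Finset.sum_filter]
      _ = 2 * ∑ e ∈ F, x e := by rw [Finset.mul_sum]
  -- Weighted cost upper bound on F
  have hnonnegW : ∀ e ∈ G.edgeFinset,
      0 ≤ (∑ ξ : Fin K, Real.exp ((∑ e' ∈ T, c ξ e') / L) * c ξ e) * x e := by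
    intro e he
    apply mul_nonneg _ (hx e).1
    apply Finset.sum_nonneg
    intro ξ _
    exact mul_nonneg (Real.exp_pos _).le (hcL ξ e (mem_edgeFinset.mp he)).1
  have hW : ∑ e ∈ F, (∑ ξ : Fin K, Real.exp ((∑ e' ∈ T, c ξ e') / L) * c ξ e) * x e ≤
      (∑ ξ : Fin K, Real.exp ((∑ e' ∈ T, c ξ e') / L)) * L := by
    have hFsub : F ⊆ G.edgeFinset := Finset.filter_subset _ _
    calc ∑ e ∈ F, (∑ ξ : Fin K, Real.exp ((∑ e' ∈ T, c ξ e') / L) * c ξ e) * x e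
        ≤ ∑ e ∈ G.edgeFinset,
            (∑ ξ : Fin K, Real.exp ((∑ e' ∈ T, c ξ e') / L) * c ξ e) * x e :=
          Finset.sum_le_sum_of_subset_of_nonneg hFsub (fun e he _ => hnonnegW e he)
      _ = ∑ ξ : Fin K, Real.exp ((∑ e' ∈ T, c ξ e') / L) *
            (∑ e ∈ G.edgeFinset, c ξ e * x e) := by
          simp_rw [Finset.sum_mul, Finset.mul_sum]
          rw [Finset.sum_comm]
          congr 1; ext ξ; congr 1; ext e; ring
      _ ≤ ∑ ξ : Fin K, Real.exp ((∑ e' ∈ T, c ξ e') / L) * L :=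
          Finset.sum_le_sum (fun ξ _ =>
            mul_le_mul_of_nonneg_left (hLP ξ) (Real.exp_pos _).le)
      _ = (∑ ξ : Fin K, Real.exp ((∑ e' ∈ T, c ξ e') / L)) * L := by
          rw [Finset.sum_mul]
  -- Averaging: find a cheap crossing edge
  obtain ⟨e, heF, hxe, hwe⟩ : ∃ e ∈ F, 0 < x e ∧
      (∑ ξ : Fin K, Real.exp ((∑ e' ∈ T, c ξ e') / L) * c ξ e) ≤
        2 / r * ((∑ ξ : Fin K, Real.exp ((∑ e' ∈ T, c ξ e') / L)) * L) := by
    set Φ : ℝ := ∑ ξ : Fin K, Real.exp ((∑ e' ∈ T, c ξ e') / L) with hΦdef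
    have hΦpos : 0 < Φ := by
      rw [hΦdef]
      apply Finset.sum_pos (fun ξ _ => Real.exp_pos _)
      exact ⟨⟨0, by omega⟩, Finset.mem_univ _⟩
    by_contra hcon
    push_neg at hcon
    set Fp : Finset (Sym2 V) := F.filter (fun e => 0 < x e) with hFp
    have hxFsum : ∑ e ∈ F, x e = ∑ e ∈ Fp, x e := by
      rw [hFp]
      refine (Finset.sum_filter_of_ne ?_).symm
      intro e _ hne
      rcases lt_or_eq_of_le (hx e).1 with h | h
      · exact h
      · exact absurd h.symm hne
    have hr0 : (0:ℝ) < r := by exact_mod_cast (by omega : 0 < r)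
    have hFpsum : (r : ℝ) / 2 ≤ ∑ e ∈ Fp, x e := by
      rw [← hxFsum]; linarith
    have hFpne : Fp.Nonempty := by
      by_contra hemp
      rw [Finset.not_nonempty_iff_eq_empty] at hemp
      rw [hemp, Finset.sum_empty] at hFpsum
      linarith
    have hchain : Φ * L < ∑ e ∈ Fp,
        (∑ ξ : Fin K, Real.exp ((∑ e' ∈ T, c ξ e') / L) * c ξ e) * x e := by
      calc Φ * L = 2 / r * (Φ * L) * (r / 2) := by field_simp
        _ ≤ 2 / r * (Φ * L) * ∑ e ∈ Fp, x e := by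
            apply mul_le_mul_of_nonneg_left hFpsum
            positivity
        _ = ∑ e ∈ Fp, 2 / r * (Φ * L) * x e := by rw [Finset.mul_sum]
        _ < ∑ e ∈ Fp, (∑ ξ : Fin K, Real.exp ((∑ e' ∈ T, c ξ e') / L) * c ξ e) * x e := by
            apply Finset.sum_lt_sum_of_nonempty hFpne
            intro e he
            rw [hFp, Finset.mem_filter] at he
            exact mul_lt_mul_of_pos_right (hcon e he.1 he.2) he.2
    have hfinal : ∑ e ∈ Fp,
        (∑ ξ : Fin K, Real.exp ((∑ e' ∈ T, c ξ e') / L) * c ξ e) * x e ≤ Φ * L := by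
      calc ∑ e ∈ Fp, (∑ ξ : Fin K, Real.exp ((∑ e' ∈ T, c ξ e') / L) * c ξ e) * x e
          ≤ ∑ e ∈ F, (∑ ξ : Fin K, Real.exp ((∑ e' ∈ T, c ξ e') / L) * c ξ e) * x e :=
            Finset.sum_le_sum_of_subset_of_nonneg (Finset.filter_subset _ _)
              (fun e he _ => hnonnegW e (Finset.filter_subset _ _ he))
        _ ≤ Φ * L := hW
    linarith
  -- unpack the crossing edge
  rw [hF, Finset.mem_filter] at heF
  obtain ⟨heG, a, b, hab, hcmab⟩ := heF
  have heGs : e ∈ G.edgeSet := mem_edgeFinset.mp heG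
  have habne : a ≠ b := by
    have hGab : G.Adj a b := by
      rw [← SimpleGraph.mem_edgeSet, ← hab]; exact heGs
    exact hGab.ne
  have heT : e ∉ T := by
    intro hmem
    apply hcmab
    apply ConnectedComponent.sound
    apply Adj.reachable
    rw [hH, fromEdgeSet_adj]
    exact ⟨by rw [← hab]; exact_mod_cast hmem, habne⟩
  set T2 : Finset (Sym2 V) := insert e T with hT2
  set H2 := fromEdgeSet (↑T2 : Set (Sym2 V)) with hH2
  haveI : Finite H2.ConnectedComponent := Quot.finite _
  haveI : Fintype H2.ConnectedComponent := Fintype.ofFinite _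
  have hle : H ≤ H2 := by
    rw [hH, hH2]
    apply fromEdgeSet_mono
    rw [hT2]
    exact_mod_cast Finset.subset_insert e T
  have hadj2 : H2.Adj a b := by
    rw [hH2, fromEdgeSet_adj]
    exact ⟨by rw [hT2, ← hab]; exact_mod_cast Finset.mem_insert_self e T, habne⟩
  set φ : H.ConnectedComponent → H2.ConnectedComponent :=
    ConnectedComponent.map (Hom.ofLE hle) with hφ
  have hsurj : Function.Surjective φ := by
    intro κ2
    obtain ⟨v, hv⟩ := κ2.exists_rep
    exact ⟨cm v, by rw [hφ, hcm]; exact hv ▸ rfl⟩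
  have hninj : ¬ Function.Injective φ := by
    intro hinj
    apply hcmab
    apply hinj
    rw [hφ, hcm]
    show (H.connectedComponentMk a).map _ = (H.connectedComponentMk b).map _
    rw [ConnectedComponent.map_mk, ConnectedComponent.map_mk]
    exact ConnectedComponent.sound (Adj.reachable (by simpa using hadj2))
  have hlt : Nat.card H2.ConnectedComponent < r := by
    rw [← hTr, Nat.card_eq_fintype_card, Nat.card_eq_fintype_card]
    exact Fintype.card_lt_of_surjective_not_injective φ hsurj hninj
  set r2 : ℕ := Nat.card H2.ConnectedComponent with hr2def
  have hr2pos : 1 ≤ r2 := by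
    haveI : Nonempty H2.ConnectedComponent := ⟨H2.connectedComponentMk a⟩
    exact Nat.card_pos
  refine ⟨e, r2, heG, heT, rfl, hlt, ?_⟩
  set Φ : ℝ := ∑ ξ : Fin K, Real.exp ((∑ e' ∈ T, c ξ e') / L) with hΦdef
  have hΦpos : 0 < Φ := by
    rw [hΦdef]
    exact Finset.sum_pos (fun ξ _ => Real.exp_pos _) ⟨⟨0, by omega⟩, Finset.mem_univ _⟩
  have hstep : (∑ ξ : Fin K, Real.exp ((∑ e' ∈ T2, c ξ e') / L)) ≤ Φ * (1 + 6 / r) := by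
    have hterm : ∀ ξ : Fin K, Real.exp ((∑ e' ∈ T2, c ξ e') / L) ≤
        Real.exp ((∑ e' ∈ T, c ξ e') / L) * (1 + 3 * (c ξ e / L)) := by
      intro ξ
      have hsum : (∑ e' ∈ T2, c ξ e') = c ξ e + ∑ e' ∈ T, c ξ e' := by
        rw [hT2, Finset.sum_insert heT]
      rw [hsum, add_div, Real.exp_add]
      rw [mul_comm (Real.exp (c ξ e / L))]
      apply mul_le_mul_of_nonneg_left _ (Real.exp_pos _).le
      apply auxExpLe
      · exact div_nonneg (hcL ξ e heGs).1 hL.le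
      · rw [div_le_one hL]; exact (hcL ξ e heGs).2
    calc (∑ ξ : Fin K, Real.exp ((∑ e' ∈ T2, c ξ e') / L))
        ≤ ∑ ξ : Fin K, Real.exp ((∑ e' ∈ T, c ξ e') / L) * (1 + 3 * (c ξ e / L)) :=
          Finset.sum_le_sum (fun ξ _ => hterm ξ)
      _ = Φ + 3 / L * (∑ ξ : Fin K, Real.exp ((∑ e' ∈ T, c ξ e') / L) * c ξ e) := by
          rw [hΦdef, Finset.mul_sum, ← Finset.sum_add_distrib]
          congr 1; ext ξ; ring
      _ ≤ Φ + 3 / L * (2 / r * (Φ * L)) := by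
          have h3L : (0:ℝ) ≤ 3 / L := by positivity
          have := mul_le_mul_of_nonneg_left hwe h3L
          linarith
      _ = Φ * (1 + 6 / r) := by
          have hr0 : (0:ℝ) < r := by exact_mod_cast (by omega : 0 < r)
          field_simp
          ring
  have hr0 : (0:ℝ) < r := by exact_mod_cast (by omega : 0 < r)
  have hr20 : (0:ℝ) < r2 := by exact_mod_cast (by omega : 0 < r2)
  have hmono : Real.log r2 + 1 / r ≤ Real.log r := by
    have hcast : (r2 : ℝ) ≤ (r : ℝ) - 1 := by
      have h' : r2 + 1 ≤ r := hlt
      have h'' : ((r2 + 1 : ℕ) : ℝ) ≤ (r : ℝ) := by exact_mod_cast h'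
      push_cast at h''
      linarith
    have h1 : Real.log r2 ≤ Real.log ((r:ℝ) - 1) := Real.log_le_log hr20 hcast
    have h2 : Real.log ((r:ℝ) - 1) + 1 / ((r:ℝ) - 1 + 1) ≤ Real.log ((r:ℝ) - 1 + 1) := by
      apply auxLog
      have : (2:ℝ) ≤ r := by exact_mod_cast hr2
      linarith
    rw [sub_add_cancel] at h2
    linarith
  calc (∑ ξ : Fin K, Real.exp ((∑ e' ∈ T2, c ξ e') / L))
      ≤ Φ * (1 + 6 / r) := hstep
    _ ≤ Φ * Real.exp (6 / r) := by
        apply mul_le_mul_of_nonneg_left _ hΦpos.le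
        have := Real.add_one_le_exp (6 / (r:ℝ))
        linarith
    _ ≤ ((K:ℝ) * Real.exp (6 * (Real.log (Fintype.card V) - Real.log r))) * Real.exp (6 / r) :=
        mul_le_mul_of_nonneg_right hTΦ (Real.exp_pos _).le
    _ = (K:ℝ) * Real.exp (6 * (Real.log (Fintype.card V) - Real.log r) + 6 / r) := by
        rw [mul_assoc, ← Real.exp_add]
    _ ≤ (K:ℝ) * Real.exp (6 * (Real.log (Fintype.card V) - Real.log r2)) := by
        apply mul_le_mul_of_nonneg_left _ (by positivity : (0:ℝ) ≤ (K:ℝ))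
        apply Real.exp_le_exp.mpr
        have h6 : 6 / (r:ℝ) = 6 * (1/r) := by ring
        linarith [hmono, h6]

set_option maxHeartbeats 1000000 in
open scoped Classical in
/-- Existence form of the randomized `O(log n)`-approximation for min-max
spanning tree: if `x : E → [0,1]` crosses every cut with weight `≥ 1` and has
scenario cost `≤ L` for every scenario (all edge costs lying in `[0,L]`), then
some spanning tree `T` (a subset of the edges whose graph is connected and
acyclic) has `Σ_{e∈T} c ξ e ≤ C·(ln n + ln K)·L` for every scenario `ξ`. -/
theorem stmt5 :
    ∃ C : ℝ, 0 < C ∧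
      ∀ (V : Type) [Fintype V] [DecidableEq V] (G : SimpleGraph V) (K : ℕ)
        (c : Fin K → Sym2 V → ℝ) (x : Sym2 V → ℝ) (L : ℝ),
        2 ≤ Fintype.card V → G.Connected → 2 ≤ K → 0 < L →
        (∀ ξ, ∀ e ∈ G.edgeSet, 0 ≤ c ξ e ∧ c ξ e ≤ L) →
        (∀ e, 0 ≤ x e ∧ x e ≤ 1) →
        (∀ S : Finset V, S.Nonempty → S ≠ Finset.univ →
          1 ≤ ∑ e ∈ G.edgeFinset.filter
            (fun e => ∃ a b, e = s(a, b) ∧ a ∈ S ∧ b ∉ S), x e) →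
        (∀ ξ, ∑ e ∈ G.edgeFinset, c ξ e * x e ≤ L) →
        ∃ T : Finset (Sym2 V), ↑T ⊆ G.edgeSet ∧
          (fromEdgeSet (↑T : Set (Sym2 V))).Connected ∧
          (fromEdgeSet (↑T : Set (Sym2 V))).IsAcyclic ∧
          ∀ ξ, ∑ e ∈ T, c ξ e ≤
            C * (Real.log (Fintype.card V) + Real.log K) * L := by
  refine ⟨7, by norm_num, ?_⟩
  intro V _ _ G K c x L hn hGconn hK hL hcL hx hcut hLP
  classical
  haveI hVne : Nonempty V := Fintype.card_pos_iff.mp (by omega)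
  have hK0 : (0:ℝ) < K := by positivity
  have hlogn : 0 ≤ Real.log (Fintype.card V) := Real.log_nonneg (by exact_mod_cast by omega)
  have hlogK : 0 ≤ Real.log K := Real.log_nonneg (by exact_mod_cast by omega)
  -- the key inductive construction
  have key : ∀ r : ℕ, ∀ T : Finset (Sym2 V), (↑T : Set (Sym2 V)) ⊆ G.edgeSet →
      Nat.card (fromEdgeSet (↑T : Set (Sym2 V))).ConnectedComponent = r →
      (∑ ξ : Fin K, Real.exp ((∑ e ∈ T, c ξ e) / L)) ≤
        K * Real.exp (6 * (Real.log (Fintype.card V) - Real.log r)) →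
      ∃ T2 : Finset (Sym2 V), T ⊆ T2 ∧ (↑T2 : Set (Sym2 V)) ⊆ G.edgeSet ∧
        (fromEdgeSet (↑T2 : Set (Sym2 V))).Connected ∧
        (∑ ξ : Fin K, Real.exp ((∑ e ∈ T2, c ξ e) / L)) ≤
          K * Real.exp (6 * Real.log (Fintype.card V)) := by
    intro r
    induction r using Nat.strong_induction_on with
    | _ r ih =>
    intro T hTE hTr hTΦ
    haveI : Finite (fromEdgeSet (↑T : Set (Sym2 V))).ConnectedComponent := Quot.finite _
    haveI : Nonempty (fromEdgeSet (↑T : Set (Sym2 V))).ConnectedComponent :=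
      ⟨(fromEdgeSet (↑T : Set (Sym2 V))).connectedComponentMk (Classical.arbitrary V)⟩
    have hr1 : 1 ≤ r := hTr ▸ Nat.card_pos
    rcases eq_or_lt_of_le hr1 with hr | hr2
    · -- one component: connected, done
      refine ⟨T, Finset.Subset.refl T, hTE, ?_, ?_⟩
      · have hsub : Subsingleton (fromEdgeSet (↑T : Set (Sym2 V))).ConnectedComponent :=
          (Nat.card_eq_one_iff_unique.mp (hTr.trans hr.symm)).1
        exact ⟨fun u v => (ConnectedComponent.eq).mp (Subsingleton.elim _ _)⟩
      · have : Real.log ((1:ℕ):ℝ) = 0 := by norm_num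
        calc (∑ ξ : Fin K, Real.exp ((∑ e ∈ T, c ξ e) / L))
            ≤ K * Real.exp (6 * (Real.log (Fintype.card V) - Real.log r)) := hTΦ
          _ = K * Real.exp (6 * Real.log (Fintype.card V)) := by
              rw [← hr]; norm_num
    · -- at least two components: find a cheap crossing edge and recurse
      obtain ⟨e, r2, heG, heT, hcard2, hlt, hΦ2⟩ :=
        auxStep V G K c x L hL hcL hx hcut hLP r T hTE hTr hr2 hTΦ hK
      have hins : (↑(insert e T) : Set (Sym2 V)) ⊆ G.edgeSet := by
        rw [Finset.coe_insert]
        exact Set.insert_subset (mem_edgeFinset.mp heG) hTE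
      obtain ⟨T3, hsub3, hE3, hconn3, hΦ3⟩ := ih r2 hlt (insert e T) hins hcard2 hΦ2
      exact ⟨T3, (Finset.subset_insert e T).trans hsub3, hE3, hconn3, hΦ3⟩
  -- start the induction with the empty edge set
  have hbot : Nat.card (fromEdgeSet (↑(∅ : Finset (Sym2 V)) :
      Set (Sym2 V))).ConnectedComponent = Fintype.card V := by
    have hb : (fromEdgeSet (↑(∅ : Finset (Sym2 V)) : Set (Sym2 V))) = ⊥ := by simp
    rw [hb]
    have hbij : Function.Bijective ((⊥ : SimpleGraph V).connectedComponentMk) := by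
      constructor
      · intro v w h
        exact reachable_bot.mp (ConnectedComponent.exact h)
      · exact fun κ => κ.exists_rep
    rw [← Nat.card_eq_fintype_card, Nat.card_eq_of_bijective _ hbij]
  have hinit : (∑ ξ : Fin K, Real.exp ((∑ e ∈ (∅ : Finset (Sym2 V)), c ξ e) / L)) ≤
      K * Real.exp (6 * (Real.log (Fintype.card V) - Real.log (Fintype.card V))) := by
    simp
  obtain ⟨T2, -, hT2E, hT2conn, hT2Φ⟩ :=
    key (Fintype.card V) ∅ (by simp) hbot hinit
  obtain ⟨T', hT'sub, hT'conn, hT'acyc⟩ := auxExtract T2 hT2conn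
  refine ⟨T', (Finset.coe_subset.mpr hT'sub).trans hT2E, hT'conn, hT'acyc, fun ξ => ?_⟩
  have hc0 : ∀ e ∈ T2, 0 ≤ c ξ e := fun e he => (hcL ξ e (hT2E he)).1
  have h1 : ∑ e ∈ T', c ξ e ≤ ∑ e ∈ T2, c ξ e :=
    Finset.sum_le_sum_of_subset_of_nonneg hT'sub (fun e he _ => hc0 e he)
  have h2 : Real.exp ((∑ e ∈ T2, c ξ e) / L) ≤
      Real.exp (Real.log K + 6 * Real.log (Fintype.card V)) := by
    calc Real.exp ((∑ e ∈ T2, c ξ e) / L)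
        ≤ ∑ ξ' : Fin K, Real.exp ((∑ e ∈ T2, c ξ' e) / L) :=
          Finset.single_le_sum (f := fun ξ' => Real.exp ((∑ e ∈ T2, c ξ' e) / L))
            (fun ξ' _ => (Real.exp_pos _).le) (Finset.mem_univ ξ)
      _ ≤ K * Real.exp (6 * Real.log (Fintype.card V)) := hT2Φ
      _ = Real.exp (Real.log K + 6 * Real.log (Fintype.card V)) := by
          rw [Real.exp_add, Real.exp_log hK0]
  have h3 : (∑ e ∈ T2, c ξ e) / L ≤ Real.log K + 6 * Real.log (Fintype.card V) :=
    Real.exp_le_exp.mp h2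
  have h4 : ∑ e ∈ T2, c ξ e ≤ (Real.log K + 6 * Real.log (Fintype.card V)) * L :=
    (div_le_iff₀ hL).mp h3
  nlinarith [hL, hlogn, hlogK]
end

section
/- There exists a universal constant C > 0 such that the following holds. Let G = (V,E) be a connected simple graph on n ≥ 2 vertices and let α > 1 be a real number with the property that for every partition of V into parts each of which induces a connected subgraph of G, the quotient graph H on the parts (two distinct parts adjacent if and only if some edge of G joins them) has an independent set of size at least (number of parts)/α. Let U be a finite set of scenarios with |U| = K ≥ 3, each scenario ξ assigning a nonnegative cost c^ξ_e to every edge e ∈ E, and let x : E → [0,1] satisfy Σ_{e∈δ(S)} x_e ≥ 1 for every nonempty proper S ⊂ V, Σ_{e∈E} c^ξ_e x_e ≤ L for every ξ ∈ U (with L > 0), and c^ξ_e ≤ L whenever x_e > 0. Then there exists a spanning tree T of G with Σ_{e∈T} c^ξ_e ≤ C · α · ln n · (ln K / ln ln K) · L for every ξ ∈ U. -/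
open SimpleGraph



-- confinement
lemma confine {V : Type} {s : Set (Sym2 V)} {S : V → Prop}
    (hs : ∀ e ∈ s, ∀ u v : V, e = s(u, v) → (S u ↔ S v))
    {a b : V} (h : (fromEdgeSet s).Reachable a b) (ha : S a) : S b := by
  obtain ⟨w⟩ := h
  induction w with
  | nil => exact ha
  | cons hadj w ih =>
    rw [fromEdgeSet_adj] at hadj
    exact ih ((hs _ hadj.1 _ _ rfl).mp ha)

lemma reach_insert {V : Type} {s : Set (Sym2 V)} {u v a b : V}
    (h : (fromEdgeSet (insert s(u, v) s)).Reachable a b) :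
    (fromEdgeSet s).Reachable a b ∨
    ((fromEdgeSet s).Reachable a u ∧ (fromEdgeSet s).Reachable v b) ∨
    ((fromEdgeSet s).Reachable a v ∧ (fromEdgeSet s).Reachable u b) := by
  obtain ⟨w⟩ := h
  induction w with
  | nil => exact Or.inl (Reachable.refl _)
  | @cons a c b hadj w ih =>
    rw [fromEdgeSet_adj] at hadj
    obtain ⟨hmem, hne⟩ := hadj
    rcases Set.mem_insert_iff.mp hmem with heq | hmem'
    · -- s(a,c) = s(u,v)
      rw [Sym2.eq_iff] at heq
      rcases heq with ⟨rfl, rfl⟩ | ⟨rfl, rfl⟩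
      · rcases ih with h1 | ⟨h1, h2⟩ | ⟨h1, h2⟩
        · exact Or.inr (Or.inl ⟨Reachable.refl _, h1⟩)
        · exact Or.inr (Or.inl ⟨Reachable.refl _, h2⟩)
        · exact Or.inl h2
      · rcases ih with h1 | ⟨h1, h2⟩ | ⟨h1, h2⟩
        · exact Or.inr (Or.inr ⟨Reachable.refl _, h1⟩)
        · exact Or.inl h2
        · exact Or.inr (Or.inr ⟨Reachable.refl _, h2⟩)
    · have hac : (fromEdgeSet s).Reachable a c :=
        ((fromEdgeSet_adj _).mpr ⟨hmem', hne⟩).reachable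
      rcases ih with h1 | ⟨h1, h2⟩ | ⟨h1, h2⟩
      · exact Or.inl (hac.trans h1)
      · exact Or.inr (Or.inl ⟨hac.trans h1, h2⟩)
      · exact Or.inr (Or.inr ⟨hac.trans h1, h2⟩)

lemma reach_induce {V : Type} {G : SimpleGraph V} {F : Set (Sym2 V)}
    (hFG : F ⊆ G.edgeSet) {p : Set V}
    (hcl : ∀ e ∈ F, ∀ u v : V, e = s(u, v) → (u ∈ p ↔ v ∈ p))
    {a b : V} (h : (fromEdgeSet F).Reachable a b) (ha : a ∈ p) (hb : b ∈ p) :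
    (G.induce p).Reachable ⟨a, ha⟩ ⟨b, hb⟩ := by
  obtain ⟨w⟩ := h
  revert ha hb
  induction w with
  | nil =>
    intro ha hb
    exact Reachable.refl _
  | @cons a c b hadj w ih =>
    intro ha hb
    rw [fromEdgeSet_adj] at hadj
    obtain ⟨hmem, hne⟩ := hadj
    have hc : c ∈ p := (hcl _ hmem _ _ rfl).mp ha
    have hGadj : G.Adj a c := hFG hmem
    have hadj2 : (G.induce p).Adj ⟨a, ha⟩ ⟨c, hc⟩ := by
      simpa [SimpleGraph.comap_adj] using hGadj
    exact hadj2.reachable.trans (ih hc hb)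


lemma fromEdgeSet_sdiff' {V : Type} (A B : Set (Sym2 V)) :
    fromEdgeSet A \ fromEdgeSet B = fromEdgeSet (A \ B) := by
  ext a b
  simp only [SimpleGraph.sdiff_adj, fromEdgeSet_adj, Set.mem_diff]
  tauto

lemma extend_acyclic {V : Type} {s : Set (Sym2 V)} {u v : V} (huv : u ≠ v)
    (hacy : (fromEdgeSet s).IsAcyclic)
    (hr : ¬ (fromEdgeSet s).Reachable u v) :
    (fromEdgeSet (insert s(u, v) s)).IsAcyclic := by
  rw [isAcyclic_iff_forall_adj_isBridge]
  intro w z hadj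
  have hadj' := hadj
  rw [fromEdgeSet_adj] at hadj'
  obtain ⟨hmem, hne⟩ := hadj'
  refine (isBridge_iff).mpr ?_
  rw [deleteEdges, fromEdgeSet_sdiff']
  by_cases hwz : s(w, z) = s(u, v)
  · intro hcon
    have hsub : (insert s(u,v) s) \ {s(w,z)} ⊆ s \ {s(w,z)} := by
      rw [hwz]
      intro e he
      rcases he with ⟨he1, he2⟩
      rcases Set.mem_insert_iff.mp he1 with rfl | h'
      · exact absurd rfl he2
      · exact ⟨h', he2⟩
    have hcon2 : (fromEdgeSet (s \ {s(w,z)})).Reachable w z :=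
      hcon.mono (fromEdgeSet_mono hsub)
    have hcon3 : (fromEdgeSet s).Reachable w z :=
      hcon2.mono (fromEdgeSet_mono (Set.diff_subset))
    rw [Sym2.eq_iff] at hwz
    rcases hwz with ⟨rfl, rfl⟩ | ⟨rfl, rfl⟩
    · exact hr hcon3
    · exact hr hcon3.symm
  · -- old edge f = s(w,z) ∈ s
    have hmem' : s(w, z) ∈ s := by
      rcases Set.mem_insert_iff.mp hmem with h' | h'
      · exact absurd h' hwz
      · exact h'
    intro hcon
    have hset : (insert s(u,v) s) \ {s(w,z)} = insert s(u,v) (s \ {s(w,z)}) := by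
      ext e
      simp only [Set.mem_diff, Set.mem_insert_iff, Set.mem_singleton_iff]
      constructor
      · rintro ⟨h1 | h1, h2⟩
        · exact Or.inl h1
        · exact Or.inr ⟨h1, h2⟩
      · rintro (rfl | ⟨h1, h2⟩)
        · exact ⟨Or.inl rfl, fun hh => hwz hh.symm⟩
        · exact ⟨Or.inr h1, h2⟩
    rw [hset] at hcon
    -- bridge property of s(w,z) in fromEdgeSet s
    have hadjs : (fromEdgeSet s).Adj w z := (fromEdgeSet_adj _).mpr ⟨hmem', hne⟩
    have hbr := (isAcyclic_iff_forall_adj_isBridge.mp hacy) hadjs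
    rw [isBridge_iff] at hbr
    have hbr2 := hbr
    rw [deleteEdges, fromEdgeSet_sdiff'] at hbr2
    rcases reach_insert hcon with h1 | ⟨h1, h2⟩ | ⟨h1, h2⟩
    · exact hbr2 h1
    · have hmono : fromEdgeSet (s \ {s(w,z)}) ≤ fromEdgeSet s :=
        fromEdgeSet_mono Set.diff_subset
      exact hr (((h1.mono hmono).symm).trans
        (hadjs.reachable.trans (h2.mono hmono).symm))
    · have hmono : fromEdgeSet (s \ {s(w,z)}) ≤ fromEdgeSet s :=
        fromEdgeSet_mono Set.diff_subset
      exact hr ((h2.mono hmono).trans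
        ((hadjs.reachable.symm).trans (h1.mono hmono)))

lemma exists_le_avg {β : Type*} (s : Finset β) (hs : s.Nonempty) (w g : β → ℝ)
    (hw : ∀ a ∈ s, 0 < w a) :
    ∃ a ∈ s, (∑ b ∈ s, w b) * g a ≤ ∑ b ∈ s, w b * g b := by
  obtain ⟨a, ha, hmin⟩ := s.exists_min_image g hs
  refine ⟨a, ha, ?_⟩
  rw [Finset.sum_mul]
  exact Finset.sum_le_sum fun b hb =>
    mul_le_mul_of_nonneg_left (hmin b hb) (hw b hb).le

lemma derand {Ξ ι β : Type*} [DecidableEq ι] [Nonempty β] (U : Finset Ξ)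
    (Es : ι → Finset β) (x : β → ℝ) (g : Ξ → β → ℝ) :
    ∀ (I : Finset ι),
    (∀ i ∈ I, (Es i).Nonempty) →
    (∀ i ∈ I, ∀ e ∈ Es i, 0 < x e) →
    (∀ ξ ∈ U, ∀ i ∈ I, ∀ e ∈ Es i, 0 ≤ g ξ e) →
    ∀ (ρ : Ξ → ℝ), (∀ ξ ∈ U, 0 ≤ ρ ξ) →
    ∃ f : ι → β, (∀ i ∈ I, f i ∈ Es i) ∧
      ∑ ξ ∈ U, ρ ξ * ∏ i ∈ I, g ξ (f i) ≤
      ∑ ξ ∈ U, ρ ξ * ∏ i ∈ I, ((∑ e ∈ Es i, x e * g ξ e) / (∑ e ∈ Es i, x e)) := by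
  intro I
  induction I using Finset.cons_induction with
  | empty =>
    intro _ _ _ ρ _
    exact ⟨fun _ => Classical.arbitrary β, by simp, by simp⟩
  | cons i J hiJ ih =>
    intro hne hx hg ρ hρ
    have hicons : i ∈ Finset.cons i J hiJ := Finset.mem_cons_self i J
    have hX : 0 < ∑ e ∈ Es i, x e :=
      Finset.sum_pos (fun e he => hx i hicons e he) (hne i hicons)
    set μ : ι → Ξ → ℝ := fun j ξ => (∑ e ∈ Es j, x e * g ξ e) / (∑ e ∈ Es j, x e)
      with hμdef
    obtain ⟨e₀, he₀, hle⟩ := exists_le_avg (Es i) (hne i hicons) x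
      (fun e => ∑ ξ ∈ U, ρ ξ * g ξ e * ∏ j ∈ J, μ j ξ) (hx i hicons)
    have hrhs : ∑ e ∈ Es i, x e * (∑ ξ ∈ U, ρ ξ * g ξ e * ∏ j ∈ J, μ j ξ)
        = (∑ e ∈ Es i, x e) * ∑ ξ ∈ U, ρ ξ * ∏ j ∈ Finset.cons i J hiJ, μ j ξ := by
      simp only [Finset.mul_sum, Finset.prod_cons]
      rw [Finset.sum_comm]
      refine Finset.sum_congr rfl fun ξ _ => ?_
      calc ∑ e ∈ Es i, x e * (ρ ξ * g ξ e * ∏ j ∈ J, μ j ξ)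
          = (∑ e ∈ Es i, x e * g ξ e) * (ρ ξ * ∏ j ∈ J, μ j ξ) := by
            rw [Finset.sum_mul]
            exact Finset.sum_congr rfl fun e _ => by ring
        _ = ((∑ e ∈ Es i, x e) * μ i ξ) * (ρ ξ * ∏ j ∈ J, μ j ξ) := by
            rw [hμdef]
            rw [mul_comm (∑ e ∈ Es i, x e) _, div_mul_cancel₀ _ hX.ne']
        _ = (∑ e ∈ Es i, x e) * (ρ ξ * (μ i ξ * ∏ j ∈ J, μ j ξ)) := by ring
    rw [hrhs] at hle
    have hG : (∑ ξ ∈ U, ρ ξ * g ξ e₀ * ∏ j ∈ J, μ j ξ) ≤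
        ∑ ξ ∈ U, ρ ξ * ∏ j ∈ Finset.cons i J hiJ, μ j ξ :=
      le_of_mul_le_mul_left hle hX
    have hsub : ∀ j ∈ J, j ∈ Finset.cons i J hiJ := fun j hj => Finset.mem_cons_of_mem hj
    obtain ⟨f, hfJ, hfle⟩ := ih (fun j hj => hne j (hsub j hj))
      (fun j hj => hx j (hsub j hj))
      (fun ξ hξ j hj => hg ξ hξ j (hsub j hj))
      (fun ξ => ρ ξ * g ξ e₀)
      (fun ξ hξ => mul_nonneg (hρ ξ hξ) (hg ξ hξ i hicons e₀ he₀))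
    refine ⟨Function.update f i e₀, ?_, ?_⟩
    · intro j hj
      rcases Finset.mem_cons.mp hj with rfl | hj'
      · simpa using he₀
      · have hne' : j ≠ i := by rintro rfl; exact hiJ hj'
        rw [Function.update_of_ne hne']
        exact hfJ j hj'
    · calc ∑ ξ ∈ U, ρ ξ * ∏ j ∈ Finset.cons i J hiJ, g ξ (Function.update f i e₀ j)
          = ∑ ξ ∈ U, (ρ ξ * g ξ e₀) * ∏ j ∈ J, g ξ (f j) := by
            refine Finset.sum_congr rfl fun ξ _ => ?_
            rw [Finset.prod_cons, Function.update_self]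
            rw [Finset.prod_congr rfl fun j hj =>
              congrArg (g ξ) (Function.update_of_ne (by rintro rfl; exact hiJ hj) e₀ f)]
            ring
        _ ≤ ∑ ξ ∈ U, (ρ ξ * g ξ e₀) * ∏ j ∈ J, μ j ξ := hfle
        _ = ∑ ξ ∈ U, ρ ξ * g ξ e₀ * ∏ j ∈ J, μ j ξ := by
            exact Finset.sum_congr rfl fun ξ _ => by ring
        _ ≤ ∑ ξ ∈ U, ρ ξ * ∏ j ∈ Finset.cons i J hiJ, μ j ξ := hG
lemma exp_convex_bd {a t : ℝ} (h0 : 0 ≤ t) (h1 : t ≤ 1) :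
    Real.exp (a * t) ≤ 1 + t * (Real.exp a - 1) := by
  have := convexOn_exp.2 (Set.mem_univ (0:ℝ)) (Set.mem_univ a)
    (by linarith : (0:ℝ) ≤ 1 - t) h0 (by ring)
  simp only [smul_eq_mul, mul_zero, Real.exp_zero] at this
  calc Real.exp (a * t) = Real.exp ((1-t) * 0 + t * a) := by ring_nf
    _ ≤ (1-t) * 1 + t * Real.exp a := by simpa [mul_comm] using this
    _ = 1 + t * (Real.exp a - 1) := by ring

lemma select_numeric {ι β : Type*} [DecidableEq ι] [Nonempty β] (K : ℕ) (hK : 3 ≤ K)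
    (L : ℝ) (hL : 0 < L) (I : Finset ι) (Es : ι → Finset β) (x : β → ℝ)
    (c : Fin K → β → ℝ)
    (hX1 : ∀ i ∈ I, 1 ≤ ∑ e ∈ Es i, x e)
    (hx : ∀ i ∈ I, ∀ e ∈ Es i, 0 < x e)
    (hc0 : ∀ ξ, ∀ i ∈ I, ∀ e ∈ Es i, 0 ≤ c ξ e)
    (hcL : ∀ ξ, ∀ i ∈ I, ∀ e ∈ Es i, c ξ e ≤ L)
    (hsum : ∀ ξ, ∑ i ∈ I, ∑ e ∈ Es i, c ξ e * x e ≤ L) :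
    ∃ f : ι → β, (∀ i ∈ I, f i ∈ Es i) ∧
      ∀ ξ, ∑ i ∈ I, c ξ (f i) ≤ 2 * (Real.log K / Real.log (Real.log K)) * L := by
  have hK0 : (0:ℝ) < K := by positivity
  have hlog1 : 1 < Real.log K := by
    rw [Real.lt_log_iff_exp_lt hK0]
    calc Real.exp 1 < 2.7182818286 := Real.exp_one_lt_d9
      _ < 3 := by norm_num
      _ ≤ (K:ℝ) := by exact_mod_cast hK
  set lam := Real.log K with hlam
  have hθ : 0 < Real.log lam := Real.log_pos hlog1
  have hne : ∀ i ∈ I, (Es i).Nonempty := by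
    intro i hi
    rcases Finset.eq_empty_or_nonempty (Es i) with h | h
    · exfalso; have := hX1 i hi; rw [h] at this; simp at this; linarith
    · exact h
  set g : Fin K → β → ℝ := fun ξ e => Real.exp (Real.log lam * (c ξ e / L)) with hg
  obtain ⟨f, hf, hb⟩ := derand (Finset.univ : Finset (Fin K)) Es x g I hne hx
    (fun ξ _ i hi e he => (Real.exp_pos _).le) (fun _ => 1) (fun _ _ => zero_le_one)
  simp only [one_mul] at hb
  refine ⟨f, hf, ?_⟩
  intro ξ₀
  -- bound for each i and ξ of the average μ
  have hμ : ∀ ξ, ∀ i ∈ I, (∑ e ∈ Es i, x e * g ξ e) / (∑ e ∈ Es i, x e) ≤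
      Real.exp ((lam - 1) * ((∑ e ∈ Es i, c ξ e * x e) / L)) := by
    intro ξ i hi
    have hXpos : 0 < ∑ e ∈ Es i, x e := lt_of_lt_of_le one_pos (hX1 i hi)
    have hy0 : 0 ≤ ∑ e ∈ Es i, c ξ e * x e :=
      Finset.sum_nonneg fun e he => mul_nonneg (hc0 ξ i hi e he) (hx i hi e he).le
    have hnum : ∑ e ∈ Es i, x e * g ξ e ≤
        (∑ e ∈ Es i, x e) + (lam - 1) / L * ∑ e ∈ Es i, c ξ e * x e := by
      have hpt : ∀ e ∈ Es i, x e * g ξ e ≤ x e + (lam - 1)/L * (c ξ e * x e) := by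
        intro e he
        have ht0 : 0 ≤ c ξ e / L := div_nonneg (hc0 ξ i hi e he) hL.le
        have ht1 : c ξ e / L ≤ 1 := (div_le_one hL).mpr (hcL ξ i hi e he)
        have := exp_convex_bd (a := Real.log lam) ht0 ht1
        rw [Real.exp_log (by linarith : (0:ℝ) < lam)] at this
        have hxe := (hx i hi e he).le
        calc x e * g ξ e ≤ x e * (1 + (c ξ e / L) * (lam - 1)) := by
              exact mul_le_mul_of_nonneg_left this hxe
          _ = x e + (lam - 1)/L * (c ξ e * x e) := by field_simp
      calc ∑ e ∈ Es i, x e * g ξ e ≤ ∑ e ∈ Es i, (x e + (lam-1)/L * (c ξ e * x e)) :=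
            Finset.sum_le_sum hpt
        _ = (∑ e ∈ Es i, x e) + (lam - 1)/L * ∑ e ∈ Es i, c ξ e * x e := by
            rw [Finset.sum_add_distrib, Finset.mul_sum]
    have h2 : (∑ e ∈ Es i, x e * g ξ e) / (∑ e ∈ Es i, x e) ≤
        1 + (lam - 1)/L * ∑ e ∈ Es i, c ξ e * x e := by
      rw [div_le_iff₀ hXpos]
      calc ∑ e ∈ Es i, x e * g ξ e ≤
          (∑ e ∈ Es i, x e) + (lam - 1) / L * ∑ e ∈ Es i, c ξ e * x e := hnum
        _ ≤ (1 + (lam - 1)/L * ∑ e ∈ Es i, c ξ e * x e) * (∑ e ∈ Es i, x e) := by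
            have hc1 : 0 ≤ (lam - 1)/L * ∑ e ∈ Es i, c ξ e * x e :=
              mul_nonneg (div_nonneg (by linarith) hL.le) hy0
            nlinarith [hX1 i hi]
    calc (∑ e ∈ Es i, x e * g ξ e) / (∑ e ∈ Es i, x e)
        ≤ 1 + (lam - 1)/L * ∑ e ∈ Es i, c ξ e * x e := h2
      _ ≤ Real.exp ((lam - 1)/L * ∑ e ∈ Es i, c ξ e * x e) := by
          have := Real.add_one_le_exp ((lam - 1)/L * ∑ e ∈ Es i, c ξ e * x e)
          linarith
      _ = Real.exp ((lam - 1) * ((∑ e ∈ Es i, c ξ e * x e) / L)) := by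
          rw [div_mul_eq_mul_div, mul_div_assoc]
  -- RHS of derand bounded by K exp(lam - 1)
  have hRHS : ∑ ξ : Fin K, ∏ i ∈ I, ((∑ e ∈ Es i, x e * g ξ e) / (∑ e ∈ Es i, x e)) ≤
      (K:ℝ) * Real.exp (lam - 1) := by
    have hterm : ∀ ξ : Fin K, ∏ i ∈ I, ((∑ e ∈ Es i, x e * g ξ e) / (∑ e ∈ Es i, x e)) ≤
        Real.exp (lam - 1) := by
      intro ξ
      calc ∏ i ∈ I, ((∑ e ∈ Es i, x e * g ξ e) / (∑ e ∈ Es i, x e))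
          ≤ ∏ i ∈ I, Real.exp ((lam - 1) * ((∑ e ∈ Es i, c ξ e * x e) / L)) := by
            refine Finset.prod_le_prod (fun i hi => ?_) (fun i hi => hμ ξ i hi)
            refine div_nonneg (Finset.sum_nonneg fun e he => ?_)
              (lt_of_lt_of_le one_pos (hX1 i hi)).le
            exact mul_nonneg (hx i hi e he).le (Real.exp_pos _).le
        _ = Real.exp (∑ i ∈ I, (lam - 1) * ((∑ e ∈ Es i, c ξ e * x e) / L)) :=
            (Real.exp_sum _ _).symm
        _ ≤ Real.exp (lam - 1) := by
            apply Real.exp_le_exp.mpr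
            have : ∑ i ∈ I, (lam - 1) * ((∑ e ∈ Es i, c ξ e * x e) / L)
                = (lam - 1) / L * ∑ i ∈ I, ∑ e ∈ Es i, c ξ e * x e := by
              rw [Finset.mul_sum]
              exact Finset.sum_congr rfl fun i _ => by ring
            rw [this]
            calc (lam - 1)/L * ∑ i ∈ I, ∑ e ∈ Es i, c ξ e * x e
                ≤ (lam - 1)/L * L := by
                  apply mul_le_mul_of_nonneg_left (hsum ξ)
                  exact div_nonneg (by linarith) hL.le
              _ = lam - 1 := by field_simp
    calc ∑ ξ : Fin K, ∏ i ∈ I, ((∑ e ∈ Es i, x e * g ξ e) / (∑ e ∈ Es i, x e))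
        ≤ ∑ _ξ : Fin K, Real.exp (lam - 1) := Finset.sum_le_sum fun ξ _ => hterm ξ
      _ = (K:ℝ) * Real.exp (lam - 1) := by
          rw [Finset.sum_const, Finset.card_univ, Fintype.card_fin, nsmul_eq_mul]
  -- single term lower bound
  have hsingle : ∏ i ∈ I, g ξ₀ (f i) ≤ ∑ ξ : Fin K, ∏ i ∈ I, g ξ (f i) := by
    exact Finset.single_le_sum (f := fun ξ => ∏ i ∈ I, g ξ (f i))
      (fun ξ _ => Finset.prod_nonneg fun i _ => (Real.exp_pos _).le)
      (Finset.mem_univ ξ₀)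
  have hsum2 : ∑ i ∈ I, Real.log lam * (c ξ₀ (f i) / L)
      = Real.log lam / L * ∑ i ∈ I, c ξ₀ (f i) := by
    rw [Finset.mul_sum]
    exact Finset.sum_congr rfl fun i _ => by ring
  have hprod : ∏ i ∈ I, g ξ₀ (f i) =
      Real.exp (Real.log lam / L * ∑ i ∈ I, c ξ₀ (f i)) := by
    rw [← hsum2, Real.exp_sum]
  have hfinal : Real.exp (Real.log lam / L * ∑ i ∈ I, c ξ₀ (f i)) ≤
      Real.exp (2 * lam) := by
    calc Real.exp (Real.log lam / L * ∑ i ∈ I, c ξ₀ (f i))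
        = ∏ i ∈ I, g ξ₀ (f i) := hprod.symm
      _ ≤ ∑ ξ : Fin K, ∏ i ∈ I, g ξ (f i) := hsingle
      _ ≤ ∑ ξ : Fin K, ∏ i ∈ I, ((∑ e ∈ Es i, x e * g ξ e) / (∑ e ∈ Es i, x e)) := hb
      _ ≤ (K:ℝ) * Real.exp (lam - 1) := hRHS
      _ = Real.exp (2 * lam - 1) := by
          rw [show (K:ℝ) = Real.exp lam from (Real.exp_log hK0).symm, ← Real.exp_add]
          ring_nf
      _ ≤ Real.exp (2 * lam) := Real.exp_le_exp.mpr (by linarith)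
  have hle := Real.exp_le_exp.mp hfinal
  -- conclude
  have hLθ : 0 < Real.log lam / L := div_pos hθ hL
  have h2 : ∑ i ∈ I, c ξ₀ (f i) ≤ 2 * lam / (Real.log lam / L) := by
    rw [le_div_iff₀ hLθ, mul_comm]
    exact hle
  have h3 : 2 * lam / (Real.log lam / L) = 2 * (lam / Real.log lam) * L := by
    field_simp
  rw [h3] at h2
  exact h2

open scoped Classical in
/-- The deterministic `O(log n · log K / log log K)`-approximation theorem for
min-max spanning tree, for graphs with the `α`-independence property: whenever
`V` is partitioned into parts inducing connected subgraphs, among the parts one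
can find at least a `1/α` fraction that are pairwise non-adjacent in `G`.
Given a fractional solution `x` crossing every cut with weight `≥ 1`, of max
scenario cost `≤ L` and support edge costs `≤ L`, there is a spanning tree `T`
with `Σ_{e∈T} c ξ e ≤ C·α·ln n·(ln K / ln ln K)·L` for every scenario `ξ`. -/
theorem stmt6 :
    ∃ C : ℝ, 0 < C ∧
      ∀ (V : Type) [Fintype V] [DecidableEq V] (G : SimpleGraph V)
        (α : ℝ) (K : ℕ) (c : Fin K → Sym2 V → ℝ) (x : Sym2 V → ℝ) (L : ℝ),
        2 ≤ Fintype.card V → G.Connected → 1 < α → 3 ≤ K → 0 < L →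
        (∀ P : Finset (Finset V),
          (∀ p ∈ P, p.Nonempty) →
          (∀ p ∈ P, ∀ q ∈ P, p ≠ q → Disjoint p q) →
          (P.biUnion id = Finset.univ) →
          (∀ p ∈ P, (G.induce (↑p : Set V)).Connected) →
          ∃ I ⊆ P,
            (∀ p ∈ I, ∀ q ∈ I, p ≠ q → ∀ a ∈ p, ∀ b ∈ q, ¬ G.Adj a b) ∧
            (P.card : ℝ) ≤ α * I.card) →
        (∀ ξ, ∀ e ∈ G.edgeSet, 0 ≤ c ξ e) →
        (∀ e, 0 ≤ x e ∧ x e ≤ 1) →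
        (∀ S : Finset V, S.Nonempty → S ≠ Finset.univ →
          1 ≤ ∑ e ∈ G.edgeFinset.filter
            (fun e => ∃ a b, e = s(a, b) ∧ a ∈ S ∧ b ∉ S), x e) →
        (∀ ξ, ∑ e ∈ G.edgeFinset, c ξ e * x e ≤ L) →
        (∀ ξ, ∀ e ∈ G.edgeSet, 0 < x e → c ξ e ≤ L) →
        ∃ T : Finset (Sym2 V), ↑T ⊆ G.edgeSet ∧
          (fromEdgeSet (↑T : Set (Sym2 V))).Connected ∧
          (fromEdgeSet (↑T : Set (Sym2 V))).IsAcyclic ∧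
          ∀ ξ, ∑ e ∈ T, c ξ e ≤
            C * α * Real.log (Fintype.card V) *
              (Real.log K / Real.log (Real.log K)) * L := by
  refine ⟨2, by norm_num, ?_⟩
  intro V _ _ G α K c x L hn hconn hα hK hL hpart hc0 hx01 hcut hfrac hsupp
  classical
  have hVne : Nonempty V := by
    rw [← Fintype.card_pos_iff]; omega
  obtain ⟨v₀⟩ := id hVne
  haveI : Nonempty (Sym2 V) := ⟨s(v₀, v₀)⟩
  have hα0 : (0:ℝ) < α := by linarith
  have hK0 : (0:ℝ) < K := by positivity
  have hlog1 : 1 < Real.log K := by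
    rw [Real.lt_log_iff_exp_lt hK0]
    calc Real.exp 1 < 2.7182818286 := Real.exp_one_lt_d9
      _ < 3 := by norm_num
      _ ≤ (K:ℝ) := by exact_mod_cast hK
  have hθ : 0 < Real.log (Real.log K) := Real.log_pos hlog1
  set D : ℝ := 2 * (Real.log K / Real.log (Real.log K)) * L with hD_def
  have hD : 0 < D := by
    apply mul_pos (mul_pos two_pos (div_pos (by linarith) hθ)) hL
  -- the main recursion
  have main : ∀ m : ℕ, ∀ P : Finset (Finset V), ∀ F : Finset (Sym2 V),
      P.card = m →
      (∀ p ∈ P, p.Nonempty) →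
      (∀ p ∈ P, ∀ q ∈ P, p ≠ q → Disjoint p q) →
      (P.biUnion id = Finset.univ) →
      (∀ e ∈ F, ∃ p ∈ P, ∀ u v : V, e = s(u,v) → u ∈ p ∧ v ∈ p) →
      (∀ p ∈ P, ∀ a ∈ p, ∀ b ∈ p,
        (fromEdgeSet (↑F : Set (Sym2 V))).Reachable a b) →
      ((↑F : Set (Sym2 V)) ⊆ G.edgeSet) →
      (fromEdgeSet (↑F : Set (Sym2 V))).IsAcyclic →
      ∃ T : Finset (Sym2 V), F ⊆ T ∧ (↑T : Set (Sym2 V)) ⊆ G.edgeSet ∧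
        (∀ a b : V, (fromEdgeSet (↑T : Set (Sym2 V))).Reachable a b) ∧
        (fromEdgeSet (↑T : Set (Sym2 V))).IsAcyclic ∧
        ∀ ξ, ∑ e ∈ T \ F, c ξ e ≤ D * (α * Real.log m) := by
    intro m
    induction m using Nat.strong_induction_on with
    | _ m IH =>
    intro P F hm h1 h2 h3 h4 h5 h6 h7
    rcases Nat.lt_or_ge m 2 with hm2 | hm2
    · -- m = 0 or 1
      interval_cases m
      · exfalso
        rw [Finset.card_eq_zero] at hm
        subst hm
        simp only [Finset.biUnion_empty] at h3
        have : v₀ ∈ (∅ : Finset V) := h3 ▸ Finset.mem_univ v₀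
        simp at this
      · obtain ⟨p, hp⟩ := Finset.card_eq_one.mp hm
        subst hp
        have hpuniv : p = Finset.univ := by
          have := h3
          simpa using this
        refine ⟨F, subset_refl _, h6, ?_, h7, ?_⟩
        · intro a b
          exact h5 p (Finset.mem_singleton_self p)
            a (hpuniv ▸ Finset.mem_univ a) b (hpuniv ▸ Finset.mem_univ b)
        · intro ξ
          simp only [Finset.sdiff_self, Finset.sum_empty, Nat.cast_one,
            Real.log_one, mul_zero]
          exact le_refl 0
    ·
      -- PHASE: m ≥ 2
      have hFcl : ∀ p ∈ P, ∀ e ∈ (↑F : Set (Sym2 V)), ∀ u v : V, e = s(u,v) →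
          (u ∈ p ↔ v ∈ p) := by
        intro p hp e he u v heq
        obtain ⟨q, hq, hin⟩ := h4 e (Finset.mem_coe.mp he)
        obtain ⟨hu, hv⟩ := hin u v heq
        constructor
        · intro hup
          have hpq : p = q := by
            by_contra hne
            exact Finset.disjoint_left.mp (h2 p hp q hq hne) hup hu
          rw [hpq]; exact hv
        · intro hvp
          have hpq : p = q := by
            by_contra hne
            exact Finset.disjoint_left.mp (h2 p hp q hq hne) hvp hv
          rw [hpq]; exact hu
      have hindcon : ∀ p ∈ P, (G.induce (↑p : Set V)).Connected := by
        intro p hp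
        obtain ⟨w, hw⟩ := h1 p hp
        rw [connected_iff]
        constructor
        · rintro ⟨a, ha⟩ ⟨b, hb⟩
          exact reach_induce h6
            (fun e he u v heq => by
              simpa only [Finset.mem_coe] using hFcl p hp e he u v heq)
            (h5 p hp a (Finset.mem_coe.mp ha) b (Finset.mem_coe.mp hb)) ha hb
        · exact ⟨⟨w, Finset.mem_coe.mpr hw⟩⟩
      obtain ⟨I, hIP, hind, hIcard⟩ := hpart P h1 h2 h3 hindcon
      rw [hm] at hIcard
      have hmR : (2:ℝ) ≤ (m:ℝ) := by exact_mod_cast hm2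
      have hIne : I.Nonempty := by
        rcases Finset.eq_empty_or_nonempty I with rfl | h
        · exfalso; simp only [Finset.card_empty, Nat.cast_zero, mul_zero] at hIcard
          linarith
        · exact h
      have hnotuniv : ∀ p ∈ P, p ≠ Finset.univ := by
        intro p hp hcon
        have h1P : 1 < P.card := by omega
        obtain ⟨q, hq, hqp⟩ := Finset.exists_mem_ne h1P p
        obtain ⟨w, hw⟩ := h1 q hq
        exact Finset.disjoint_left.mp (h2 q hq p hp hqp) hw (hcon ▸ Finset.mem_univ w)
      set E : Finset V → Finset (Sym2 V) := fun p =>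
        G.edgeFinset.filter (fun e => 0 < x e ∧ ∃ a b, e = s(a,b) ∧ a ∈ p ∧ b ∉ p)
        with hE_def
      have hEX : ∀ i ∈ I, 1 ≤ ∑ e ∈ E i, x e := by
        intro i hi
        have hip := hIP hi
        have h1' := hcut i (h1 i hip) (hnotuniv i hip)
        have hsplit := (Finset.sum_filter_add_sum_filter_not
          (G.edgeFinset.filter (fun e => ∃ a b, e = s(a,b) ∧ a ∈ i ∧ b ∉ i))
          (fun e => 0 < x e) x).symm
        have hzero : ∑ e ∈ (G.edgeFinset.filter
            (fun e => ∃ a b, e = s(a,b) ∧ a ∈ i ∧ b ∉ i)).filter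
            (fun e => ¬ 0 < x e), x e = 0 :=
          Finset.sum_eq_zero fun e he =>
            le_antisymm (not_lt.mp (Finset.mem_filter.mp he).2) (hx01 e).1
        have hEeq : (G.edgeFinset.filter
            (fun e => ∃ a b, e = s(a,b) ∧ a ∈ i ∧ b ∉ i)).filter
            (fun e => 0 < x e) = E i := by
          rw [hE_def, Finset.filter_filter]
          apply Finset.filter_congr
          intro e _
          tauto
        rw [hsplit, hzero, hEeq, add_zero] at h1'
        exact h1'
      have hxpos : ∀ i ∈ I, ∀ e ∈ E i, 0 < x e :=
        fun i hi e he => (Finset.mem_filter.mp he).2.1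
      have hEedge : ∀ i ∈ I, ∀ e ∈ E i, e ∈ G.edgeSet :=
        fun i hi e he => mem_edgeFinset.mp (Finset.mem_filter.mp he).1
      have hc0' : ∀ ξ, ∀ i ∈ I, ∀ e ∈ E i, 0 ≤ c ξ e :=
        fun ξ i hi e he => hc0 ξ e (hEedge i hi e he)
      have hcL' : ∀ ξ, ∀ i ∈ I, ∀ e ∈ E i, c ξ e ≤ L :=
        fun ξ i hi e he => hsupp ξ e (hEedge i hi e he) (hxpos i hi e he)
      have hEdisj : ∀ p ∈ I, ∀ q ∈ I, p ≠ q → Disjoint (E p) (E q) := by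
        intro p hp q hq hpq
        rw [Finset.disjoint_left]
        intro e hep heq
        obtain ⟨hef, hxp, a, b, heqe, ha, hb⟩ := Finset.mem_filter.mp hep
        obtain ⟨_, _, a', b', heqe', ha', hb'⟩ := Finset.mem_filter.mp heq
        have hadj : G.Adj a b := by
          rw [← mem_edgeSet, ← heqe]; exact mem_edgeFinset.mp hef
        rw [heqe] at heqe'
        rcases Sym2.eq_iff.mp heqe' with ⟨rfl, rfl⟩ | ⟨rfl, rfl⟩
        · exact Finset.disjoint_left.mp (h2 p (hIP hp) q (hIP hq) hpq) ha ha'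
        · exact hind p hp q hq hpq a ha b ha' hadj
      have hsumL : ∀ ξ, ∑ i ∈ I, ∑ e ∈ E i, c ξ e * x e ≤ L := by
        intro ξ
        rw [← Finset.sum_biUnion (fun p hp q hq hpq =>
          hEdisj p (Finset.mem_coe.mp hp) q (Finset.mem_coe.mp hq) hpq)]
        calc ∑ e ∈ I.biUnion E, c ξ e * x e
            ≤ ∑ e ∈ G.edgeFinset, c ξ e * x e := by
              apply Finset.sum_le_sum_of_subset_of_nonneg
              · intro e he
                obtain ⟨i, hi, hei⟩ := Finset.mem_biUnion.mp he
                exact (Finset.mem_filter.mp hei).1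
              · intro e he _
                exact mul_nonneg (hc0 ξ e (mem_edgeFinset.mp he)) (hx01 e).1
          _ ≤ L := hfrac ξ
      obtain ⟨f, hfE, hfcost⟩ :=
        select_numeric K hK L hL I E x c hEX hxpos hc0' hcL' hsumL
      have hdata : ∀ i : Finset V, ∃ (a b : V) (q : Finset V), i ∈ I →
          (f i = s(a,b) ∧ a ∈ i ∧ b ∉ i ∧ q ∈ P ∧ q ∉ I ∧ b ∈ q ∧ a ≠ b) := by
        intro i
        by_cases hi : i ∈ I
        · obtain ⟨hef, hxp, a, b, heqe, ha, hb⟩ := Finset.mem_filter.mp (hfE i hi)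
          have hadj : G.Adj a b := by
            rw [← mem_edgeSet, ← heqe]; exact mem_edgeFinset.mp hef
          have hbu : b ∈ P.biUnion id := h3 ▸ Finset.mem_univ b
          obtain ⟨q, hq, hbq⟩ := Finset.mem_biUnion.mp hbu
          have hqi : q ≠ i := fun h => hb (h ▸ hbq)
          have hqI : q ∉ I := by
            intro hqI
            exact hind i hi q hqI (Ne.symm hqi) a ha b hbq hadj
          exact ⟨a, b, q, fun _ => ⟨heqe, ha, hb, hq, hqI, hbq, hadj.ne⟩⟩
        · exact ⟨v₀, v₀, ∅, fun h => absurd h hi⟩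
      choose A B Q hABQ using hdata
      have hfi : ∀ i ∈ I, f i = s(A i, B i) := fun i hi => (hABQ i hi).1
      have hAi : ∀ i ∈ I, A i ∈ i := fun i hi => (hABQ i hi).2.1
      have hBi : ∀ i ∈ I, B i ∉ i := fun i hi => (hABQ i hi).2.2.1
      have hQP : ∀ i ∈ I, Q i ∈ P := fun i hi => (hABQ i hi).2.2.2.1
      have hQI : ∀ i ∈ I, Q i ∉ I := fun i hi => (hABQ i hi).2.2.2.2.1
      have hBQ : ∀ i ∈ I, B i ∈ Q i := fun i hi => (hABQ i hi).2.2.2.2.2.1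
      have hAB : ∀ i ∈ I, A i ≠ B i := fun i hi => (hABQ i hi).2.2.2.2.2.2
      have hQPI : ∀ i ∈ I, Q i ∈ P \ I :=
        fun i hi => Finset.mem_sdiff.mpr ⟨hQP i hi, hQI i hi⟩
      have hfinj : ∀ i ∈ I, ∀ j ∈ I, f i = f j → i = j := by
        intro i hi j hj hfij
        by_contra hne
        exact Finset.disjoint_left.mp (hEdisj i hi j hj hne) (hfE i hi)
          (hfij ▸ hfE j hj)
      set N : Finset V → Finset V := fun q =>
        q ∪ (I.filter (fun j => Q j = q)).biUnion id with hN_def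
      set P' : Finset (Finset V) := (P \ I).image N with hP'_def
      set F' : Finset (Sym2 V) := F ∪ I.image f with hF'_def
      have hmemN : ∀ q v, v ∈ N q ↔ (v ∈ q ∨ ∃ j, j ∈ I ∧ Q j = q ∧ v ∈ j) := by
        intro q v
        rw [hN_def]
        simp only [Finset.mem_union, Finset.mem_biUnion, Finset.mem_filter, id]
        constructor
        · rintro (h | ⟨j, ⟨hj, hQ⟩, hv⟩)
          exacts [Or.inl h, Or.inr ⟨j, hj, hQ, hv⟩]
        · rintro (h | ⟨j, hj, hQ, hv⟩)
          exacts [Or.inl h, Or.inr ⟨j, ⟨hj, hQ⟩, hv⟩]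
      have holdsub : ∀ p ∈ P, ∃ q ∈ P \ I, p ⊆ N q := by
        intro p hp
        by_cases hpI : p ∈ I
        · exact ⟨Q p, hQPI p hpI,
            fun v hv => (hmemN _ v).mpr (Or.inr ⟨p, hpI, rfl, hv⟩)⟩
        · exact ⟨p, Finset.mem_sdiff.mpr ⟨hp, hpI⟩,
            fun v hv => (hmemN _ v).mpr (Or.inl hv)⟩
      have hNdisj : ∀ q ∈ P \ I, ∀ q' ∈ P \ I, q ≠ q' → Disjoint (N q) (N q') := by
        intro q hq q' hq' hne
        obtain ⟨hqP, hqI⟩ := Finset.mem_sdiff.mp hq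
        obtain ⟨hq'P, hq'I⟩ := Finset.mem_sdiff.mp hq'
        rw [Finset.disjoint_left]
        intro v hv hv'
        rcases (hmemN q v).mp hv with h | ⟨j, hj, hQj, hvj⟩
        · rcases (hmemN q' v).mp hv' with h' | ⟨j', hj', hQj', hvj'⟩
          · exact Finset.disjoint_left.mp (h2 q hqP q' hq'P hne) h h'
          · have hj'q : j' ≠ q := fun hh => hqI (hh ▸ hj')
            exact Finset.disjoint_left.mp (h2 j' (hIP hj') q hqP hj'q) hvj' h
        · rcases (hmemN q' v).mp hv' with h' | ⟨j', hj', hQj', hvj'⟩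
          · have hjq' : j ≠ q' := fun hh => hq'I (hh ▸ hj)
            exact Finset.disjoint_left.mp (h2 j (hIP hj) q' hq'P hjq') hvj h'
          · by_cases hjj : j = j'
            · subst hjj
              exact hne (by rw [← hQj, hQj'])
            · exact Finset.disjoint_left.mp (h2 j (hIP hj) j' (hIP hj') hjj) hvj hvj'
      have hNne : ∀ q ∈ P \ I, (N q).Nonempty := by
        intro q hq
        obtain ⟨w, hw⟩ := h1 q (Finset.mem_sdiff.mp hq).1
        exact ⟨w, (hmemN q w).mpr (Or.inl hw)⟩
      have hNinj : Set.InjOn N ↑(P \ I) := by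
        intro q hq q' hq' heq
        by_contra hne
        obtain ⟨w, hw⟩ := hNne q (Finset.mem_coe.mp hq)
        exact Finset.disjoint_left.mp
          (hNdisj q (Finset.mem_coe.mp hq) q' (Finset.mem_coe.mp hq') hne)
          hw (heq ▸ hw)
      have hP'card : P'.card = m - I.card := by
        rw [hP'_def, Finset.card_image_of_injOn hNinj, Finset.card_sdiff_of_subset hIP, hm]
      have hIcard1 : 1 ≤ I.card := Finset.card_pos.mpr hIne
      have hIcardm : I.card ≤ m := hm ▸ Finset.card_le_card hIP
      have hm'lt : m - I.card < m := by omega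
      -- new invariants
      have inv1' : ∀ p' ∈ P', p'.Nonempty := by
        intro p' hp'
        obtain ⟨q, hq, rfl⟩ := Finset.mem_image.mp hp'
        exact hNne q hq
      have inv2' : ∀ p' ∈ P', ∀ q'' ∈ P', p' ≠ q'' → Disjoint p' q'' := by
        intro p' hp' q'' hq'' hne
        obtain ⟨q, hq, rfl⟩ := Finset.mem_image.mp hp'
        obtain ⟨q', hq', rfl⟩ := Finset.mem_image.mp hq''
        exact hNdisj q hq q' hq' (fun h => hne (by rw [h]))
      have inv3' : P'.biUnion id = Finset.univ := by
        apply Finset.eq_univ_iff_forall.mpr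
        intro v
        obtain ⟨p, hp, hv⟩ := Finset.mem_biUnion.mp (h3 ▸ Finset.mem_univ v)
        obtain ⟨q, hq, hsub⟩ := holdsub p hp
        exact Finset.mem_biUnion.mpr
          ⟨N q, Finset.mem_image.mpr ⟨q, hq, rfl⟩, hsub hv⟩
      have inv4' : ∀ e ∈ F', ∃ p ∈ P', ∀ u v : V, e = s(u,v) → u ∈ p ∧ v ∈ p := by
        intro e he
        rw [hF'_def, Finset.mem_union] at he
        rcases he with heF | heI
        · obtain ⟨p, hp, hin⟩ := h4 e heF
          obtain ⟨q, hq, hsub⟩ := holdsub p hp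
          exact ⟨N q, Finset.mem_image.mpr ⟨q, hq, rfl⟩,
            fun u v heq => ⟨hsub (hin u v heq).1, hsub (hin u v heq).2⟩⟩
        · obtain ⟨i, hi, rfl⟩ := Finset.mem_image.mp heI
          refine ⟨N (Q i), Finset.mem_image.mpr ⟨Q i, hQPI i hi, rfl⟩, ?_⟩
          intro u v heq
          rw [hfi i hi] at heq
          rcases Sym2.eq_iff.mp heq with ⟨rfl, rfl⟩ | ⟨rfl, rfl⟩
          · exact ⟨(hmemN _ _).mpr (Or.inr ⟨i, hi, rfl, hAi i hi⟩),
              (hmemN _ _).mpr (Or.inl (hBQ i hi))⟩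
          · exact ⟨(hmemN _ _).mpr (Or.inl (hBQ i hi)),
              (hmemN _ _).mpr (Or.inr ⟨i, hi, rfl, hAi i hi⟩)⟩
      have hFsubF' : F ⊆ F' := by rw [hF'_def]; exact Finset.subset_union_left
      have hFF' : fromEdgeSet (↑F : Set (Sym2 V)) ≤
          fromEdgeSet (↑F' : Set (Sym2 V)) :=
        fromEdgeSet_mono (Finset.coe_subset.mpr hFsubF')
      have hadjF' : ∀ i ∈ I,
          (fromEdgeSet (↑F' : Set (Sym2 V))).Adj (A i) (B i) := by
        intro i hi
        rw [fromEdgeSet_adj]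
        refine ⟨?_, hAB i hi⟩
        rw [Finset.mem_coe, hF'_def, Finset.mem_union]
        right
        rw [← hfi i hi]
        exact Finset.mem_image.mpr ⟨i, hi, rfl⟩
      have hreachN : ∀ q ∈ P \ I, ∀ v ∈ N q, ∀ w ∈ q,
          (fromEdgeSet (↑F' : Set (Sym2 V))).Reachable v w := by
        intro q hq v hv w hw
        obtain ⟨hqP, _⟩ := Finset.mem_sdiff.mp hq
        rcases (hmemN q v).mp hv with h | ⟨j, hj, hQj, hvj⟩
        · exact (h5 q hqP v h w hw).mono hFF'
        · have r1 := (h5 j (hIP hj) v hvj (A j) (hAi j hj)).mono hFF'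
          have r2 := (hadjF' j hj).reachable
          have r3 := (h5 q hqP (B j) (hQj ▸ hBQ j hj) w hw).mono hFF'
          exact (r1.trans r2).trans r3
      have inv5' : ∀ p' ∈ P', ∀ a ∈ p', ∀ b ∈ p',
          (fromEdgeSet (↑F' : Set (Sym2 V))).Reachable a b := by
        intro p' hp' a ha b hb
        obtain ⟨q, hq, rfl⟩ := Finset.mem_image.mp hp'
        obtain ⟨w, hw⟩ := h1 q (Finset.mem_sdiff.mp hq).1
        exact (hreachN q hq a ha w hw).trans (hreachN q hq b hb w hw).symm
      have inv6' : (↑F' : Set (Sym2 V)) ⊆ G.edgeSet := by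
        intro e he
        rw [Finset.mem_coe, hF'_def, Finset.mem_union] at he
        rcases he with heF | heI
        · exact h6 (Finset.mem_coe.mpr heF)
        · obtain ⟨i, hi, rfl⟩ := Finset.mem_image.mp heI
          exact hEedge i hi (f i) (hfE i hi)
      have hconfinei : ∀ (i : Finset V), i ∈ I → ∀ (J : Finset (Finset V)),
          J ⊆ I → i ∉ J →
          ¬ (fromEdgeSet (↑(F ∪ J.image f) : Set (Sym2 V))).Reachable
            (A i) (B i) := by
        intro i hi J hJI hiJ hcon
        have hS : ∀ e ∈ (↑(F ∪ J.image f) : Set (Sym2 V)), ∀ u v : V,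
            e = s(u,v) → ((fun z => z ∈ i) u ↔ (fun z => z ∈ i) v) := by
          intro e he u v heq
          rw [Finset.mem_coe, Finset.mem_union] at he
          rcases he with heF | heJ
          · exact hFcl i (hIP hi) e (Finset.mem_coe.mpr heF) u v heq
          · obtain ⟨j, hj, rfl⟩ := Finset.mem_image.mp heJ
            have hjI := hJI hj
            have hji : j ≠ i := fun h => hiJ (h ▸ hj)
            rw [hfi j hjI] at heq
            have hAnotin : A j ∉ i := fun h =>
              Finset.disjoint_left.mp (h2 j (hIP hjI) i (hIP hi) hji)
                (hAi j hjI) h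
            have hBnotin : B j ∉ i := by
              intro h
              have hQii : Q j ≠ i := fun hh => (hQI j hjI) (hh ▸ hi)
              exact Finset.disjoint_left.mp
                (h2 (Q j) (hQP j hjI) i (hIP hi) hQii) (hBQ j hjI) h
            rcases Sym2.eq_iff.mp heq with ⟨rfl, rfl⟩ | ⟨rfl, rfl⟩
            · exact iff_of_false hAnotin hBnotin
            · exact iff_of_false hBnotin hAnotin
        exact (hBi i hi) (confine hS hcon (hAi i hi))
      have hacyJ : ∀ J : Finset (Finset V), J ⊆ I →
          (fromEdgeSet (↑(F ∪ J.image f) : Set (Sym2 V))).IsAcyclic := by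
        intro J
        induction J using Finset.induction_on with
        | empty => intro _; simpa using h7
        | @insert i J hiJ ihJ =>
          intro hins
          have hiI : i ∈ I := hins (Finset.mem_insert_self i J)
          have hJI : J ⊆ I := fun j hj => hins (Finset.mem_insert_of_mem hj)
          have hset : F ∪ (insert i J).image f = insert (f i) (F ∪ J.image f) := by
            rw [Finset.image_insert, Finset.union_insert]
          rw [hset, Finset.coe_insert, hfi i hiI]
          exact extend_acyclic (hAB i hiI) (ihJ hJI) (hconfinei i hiI J hJI hiJ)
      have inv7' : (fromEdgeSet (↑F' : Set (Sym2 V))).IsAcyclic := by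
        rw [hF'_def]
        exact hacyJ I (subset_refl I)
      -- recursion
      obtain ⟨T, hF'T, hTE, hTreach, hTacy, hTcost⟩ :=
        IH (m - I.card) hm'lt P' F' hP'card inv1' inv2' inv3' inv4' inv5'
          inv6' inv7'
      refine ⟨T, Finset.Subset.trans hFsubF' hF'T, hTE, hTreach, hTacy, ?_⟩
      intro ξ
      -- split the cost
      have hdisjTF : Disjoint (T \ F') (F' \ F) := by
        rw [Finset.disjoint_left]
        intro e he he'
        exact (Finset.mem_sdiff.mp he).2 (Finset.mem_sdiff.mp he').1
      have hunion : T \ F = (T \ F') ∪ (F' \ F) := by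
        ext e
        simp only [Finset.mem_sdiff, Finset.mem_union]
        constructor
        · rintro ⟨heT, heF⟩
          by_cases h : e ∈ F'
          · exact Or.inr ⟨h, heF⟩
          · exact Or.inl ⟨heT, h⟩
        · rintro (⟨heT, heF'⟩ | ⟨heF', heF⟩)
          · exact ⟨heT, fun h => heF' (hFsubF' h)⟩
          · exact ⟨hF'T heF', heF⟩
      have hphase : ∑ e ∈ F' \ F, c ξ e ≤ D := by
        calc ∑ e ∈ F' \ F, c ξ e ≤ ∑ e ∈ I.image f, c ξ e := by
              apply Finset.sum_le_sum_of_subset_of_nonneg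
              · intro e he
                obtain ⟨heF', heF⟩ := Finset.mem_sdiff.mp he
                rw [hF'_def, Finset.mem_union] at heF'
                rcases heF' with h | h
                · exact absurd h heF
                · exact h
              · intro e he _
                obtain ⟨i, hi, rfl⟩ := Finset.mem_image.mp he
                exact hc0 ξ (f i) (hEedge i hi (f i) (hfE i hi))
          _ = ∑ i ∈ I, c ξ (f i) :=
              Finset.sum_image (fun i hi j hj h => hfinj i hi j hj h)
          _ ≤ D := by rw [hD_def]; exact hfcost ξ
      -- numeric recursion bound
      have hm'1 : 1 ≤ m - I.card := by
        obtain ⟨i₀, hi₀⟩ := hIne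
        have : (N (Q i₀)) ∈ P' :=
          Finset.mem_image.mpr ⟨Q i₀, hQPI i₀ hi₀, rfl⟩
        have hpos : 0 < P'.card := Finset.card_pos.mpr ⟨_, this⟩
        omega
      have hkey : α * Real.log (↑(m - I.card)) + 1 ≤ α * Real.log m := by
        have hm'R : ((m - I.card : ℕ):ℝ) ≤ (m:ℝ) * (1 - 1/α) := by
          have hcast : ((m - I.card : ℕ):ℝ) = (m:ℝ) - (I.card:ℝ) := by
            rw [Nat.cast_sub hIcardm]
          have hIge : (m:ℝ)/α ≤ (I.card:ℝ) := by
            rw [div_le_iff₀ hα0]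
            linarith [hIcard]
          rw [hcast]
          have : (m:ℝ) * (1 - 1/α) = (m:ℝ) - (m:ℝ)/α := by ring
          rw [this]
          linarith
        have h1m' : (1:ℝ) ≤ ((m - I.card : ℕ):ℝ) := by exact_mod_cast hm'1
        have hfrac1 : (0:ℝ) < 1 - 1/α := by
          have h1 : 1/α < 1 := by rw [div_lt_one hα0]; exact hα
          linarith
        have hlogm' : Real.log (↑(m - I.card)) ≤
            Real.log m + Real.log (1 - 1/α) := by
          calc Real.log (↑(m - I.card)) ≤ Real.log ((m:ℝ) * (1 - 1/α)) :=
                Real.log_le_log (by linarith) hm'R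
            _ = Real.log m + Real.log (1 - 1/α) :=
                Real.log_mul (by linarith) hfrac1.ne'
        have hlogneg : Real.log (1 - 1/α) ≤ -(1/α) := by
          rw [Real.log_le_iff_le_exp hfrac1]
          have := Real.add_one_le_exp (-(1/α))
          linarith
        have hmul := mul_le_mul_of_nonneg_left hlogm' hα0.le
        have hmul2 := mul_le_mul_of_nonneg_left hlogneg hα0.le
        have hinv : α * (1/α) = 1 := by field_simp
        nlinarith [hmul, hmul2, hinv]
      calc ∑ e ∈ T \ F, c ξ e
          = ∑ e ∈ T \ F', c ξ e + ∑ e ∈ F' \ F, c ξ e := by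
            rw [hunion, Finset.sum_union hdisjTF]
        _ ≤ D * (α * Real.log (↑(m - I.card))) + D := by
            have := hTcost ξ
            linarith [this, hphase]
        _ = D * (α * Real.log (↑(m - I.card)) + 1) := by ring
        _ ≤ D * (α * Real.log m) := by
            apply mul_le_mul_of_nonneg_left hkey hD.le

  -- apply the recursion to the singleton partition
  have hP0card : (Finset.univ.image (fun v : V => ({v} : Finset V))).card
      = Fintype.card V := by
    rw [Finset.card_image_of_injective _ Finset.singleton_injective,
      Finset.card_univ]
  obtain ⟨T, hFT, hTE, hTreach, hTacy, hTcost⟩ :=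
    main (Fintype.card V) (Finset.univ.image (fun v : V => ({v} : Finset V))) ∅
      hP0card
      (by intro p hp
          obtain ⟨v, _, rfl⟩ := Finset.mem_image.mp hp
          exact ⟨v, Finset.mem_singleton_self v⟩)
      (by intro p hp q hq hpq
          obtain ⟨v, _, rfl⟩ := Finset.mem_image.mp hp
          obtain ⟨w, _, rfl⟩ := Finset.mem_image.mp hq
          rw [Finset.disjoint_left]
          intro a ha ha'
          rw [Finset.mem_singleton] at ha ha'
          subst ha; subst ha'
          exact hpq rfl)
      (by apply Finset.eq_univ_iff_forall.mpr
          intro v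
          exact Finset.mem_biUnion.mpr ⟨{v},
            Finset.mem_image.mpr ⟨v, Finset.mem_univ v, rfl⟩,
            Finset.mem_singleton_self v⟩)
      (by intro e he; simp at he)
      (by intro p hp a ha b hb
          obtain ⟨v, _, rfl⟩ := Finset.mem_image.mp hp
          rw [Finset.mem_singleton] at ha hb
          subst ha; subst hb
          exact Reachable.refl _)
      (by simp)
      (by rw [Finset.coe_empty, fromEdgeSet_empty]; exact isAcyclic_bot)
  refine ⟨T, hTE, ?_, hTacy, ?_⟩
  · rw [connected_iff]
    exact ⟨fun a b => hTreach a b, hVne⟩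
  · intro ξ
    have := hTcost ξ
    rw [Finset.sdiff_empty] at this
    calc ∑ e ∈ T, c ξ e ≤ D * (α * Real.log (Fintype.card V)) := this
      _ = 2 * α * Real.log (Fintype.card V) *
            (Real.log K / Real.log (Real.log K)) * L := by
          rw [hD_def]; ring
end

section
/- There exists a universal constant C > 0 such that the following holds (rounding for min-max representatives selection). Let E be a finite set partitioned into p nonempty pairwise disjoint sets E_1, …, E_p, and let U be a finite set of scenarios with |U| = K ≥ 3, each scenario ξ assigning a nonnegative cost c^ξ_e to every e ∈ E. Let x : E → [0,1] satisfy Σ_{e∈E_i} x_e = 1 for every i ∈ {1,…,p}, let L = max_{ξ∈U} Σ_{e∈E} c^ξ_e x_e > 0, and suppose c^ξ_e ≤ L for every ξ ∈ U and every e with x_e > 0. Then there exists X ⊆ E with |X ∩ E_i| = 1 for every i such that Σ_{e∈X} c^ξ_e ≤ C · L · ln K / ln ln K for every ξ ∈ U. -/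
private lemma e_mul_log_le {s : ℝ} (hs : 0 < s) : Real.exp 1 * Real.log s ≤ s := by
  have h := Real.add_one_le_exp (Real.log s - 1)
  rw [Real.exp_sub, Real.exp_log hs] at h
  have h' : Real.log s ≤ s / Real.exp 1 := by linarith
  have he : (0:ℝ) < Real.exp 1 := Real.exp_pos 1
  calc Real.exp 1 * Real.log s ≤ Real.exp 1 * (s / Real.exp 1) := by
        exact mul_le_mul_of_nonneg_left h' he.le
    _ = s := by field_simp

private lemma key_ineq {s : ℝ} (hs : 0 < s) :
    s ≤ Real.exp 2 * (1 + s - Real.log s) := by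
  have h1 := e_mul_log_le hs
  have he : (2.7:ℝ) < Real.exp 1 := by
    have := Real.exp_one_gt_d9; linarith
  have he2 : Real.exp 2 = Real.exp 1 * Real.exp 1 := by
    rw [← Real.exp_add]; norm_num
  have hq : (0:ℝ) < Real.exp 1 * Real.exp 1 - Real.exp 1 - 1 := by nlinarith [he]
  nlinarith [mul_le_mul_of_nonneg_left h1 (Real.exp_pos 1).le, mul_pos hs hq,
    Real.exp_pos 1]

/-- MGF (Chernoff) bound for one scenario, phrased with finite sums. -/
private lemma mgf_bound {ι : Type} [Fintype ι] [DecidableEq ι] {p : ℕ}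
    (E : Fin p → Finset ι) (x d : ι → ℝ)
    (hx0 : ∀ e, 0 ≤ x e) (hx1 : ∀ i, ∑ e ∈ E i, x e = 1)
    (hd0 : ∀ e, 0 ≤ d e) (hd1 : ∀ e, 0 < x e → d e ≤ 1)
    (hmean : ∑ i, ∑ e ∈ E i, x e * d e ≤ 1)
    {lam t : ℝ} (hlam : 0 ≤ lam) (hexp : Real.exp lam = t) :
    ∑ f ∈ Fintype.piFinset E, (∏ i, x (f i)) * Real.exp (lam * ∑ i, d (f i))
      ≤ Real.exp (t - 1) := by
  have ht1 : 1 ≤ t := hexp ▸ Real.one_le_exp hlam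
  have step1 : ∑ f ∈ Fintype.piFinset E,
        (∏ i, x (f i)) * Real.exp (lam * ∑ i, d (f i))
      = ∏ i, ∑ e ∈ E i, x e * Real.exp (lam * d e) := by
    rw [Finset.prod_univ_sum]
    refine (Finset.sum_congr rfl fun f _ => ?_).symm
    rw [Finset.prod_mul_distrib]
    congr 1
    rw [Finset.mul_sum, Real.exp_sum]
  have hterm : ∀ i : Fin p, ∑ e ∈ E i, x e * Real.exp (lam * d e)
      ≤ Real.exp ((t - 1) * ∑ e ∈ E i, x e * d e) := by
    intro i
    have h1 : ∑ e ∈ E i, x e * Real.exp (lam * d e)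
        ≤ ∑ e ∈ E i, x e * (1 + d e * (t - 1)) := by
      refine Finset.sum_le_sum fun e _ => ?_
      rcases eq_or_lt_of_le (hx0 e) with h | h
      · rw [← h]; simp
      · refine mul_le_mul_of_nonneg_left ?_ h.le
        have hde1 := hd1 e h
        have hde0 := hd0 e
        have hcx := convexOn_exp.2 (Set.mem_univ (0:ℝ)) (Set.mem_univ lam)
          (by linarith : (0:ℝ) ≤ 1 - d e) hde0 (by ring)
        simp only [smul_eq_mul, mul_zero, zero_add, Real.exp_zero, mul_one,
          hexp] at hcx
        have : Real.exp (lam * d e) = Real.exp (d e * lam) := by rw [mul_comm]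
        rw [this]
        nlinarith [hcx]
    have h2 : ∑ e ∈ E i, x e * (1 + d e * (t - 1))
        = (∑ e ∈ E i, x e) + (t - 1) * ∑ e ∈ E i, x e * d e := by
      rw [Finset.mul_sum, ← Finset.sum_add_distrib]
      exact Finset.sum_congr rfl fun e _ => by ring
    have h3 := Real.add_one_le_exp ((t - 1) * ∑ e ∈ E i, x e * d e)
    rw [h2, hx1 i] at h1
    linarith
  calc ∑ f ∈ Fintype.piFinset E, (∏ i, x (f i)) * Real.exp (lam * ∑ i, d (f i))
      = ∏ i, ∑ e ∈ E i, x e * Real.exp (lam * d e) := step1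
    _ ≤ ∏ i, Real.exp ((t - 1) * ∑ e ∈ E i, x e * d e) :=
        Finset.prod_le_prod
          (fun i _ => Finset.sum_nonneg fun e _ =>
            mul_nonneg (hx0 e) (Real.exp_pos _).le)
          (fun i _ => hterm i)
    _ = Real.exp (∑ i, (t - 1) * ∑ e ∈ E i, x e * d e) := (Real.exp_sum _ _).symm
    _ ≤ Real.exp (t - 1) := by
        apply Real.exp_le_exp.2
        rw [← Finset.mul_sum]
        have hsnn : (0:ℝ) ≤ ∑ i, ∑ e ∈ E i, x e * d e :=
          Finset.sum_nonneg fun i _ => Finset.sum_nonneg fun e _ =>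
            mul_nonneg (hx0 e) (hd0 e)
        nlinarith [hmean]

/-- Derandomized LP-rounding for min-max representatives selection
(Theorem 1 of the paper): the ground set is partitioned into nonempty disjoint
sets `E 0, …, E (p-1)`; any fractional solution `x` placing total weight `1` on
each part, with max scenario cost `L` (attained) and support costs `≤ L`, can
be rounded to a set `X` picking exactly one element per part with
`Σ_{e∈X} c ξ e ≤ C·L·ln K / ln ln K` for every scenario `ξ`. -/
theorem stmt7 :
    ∃ C : ℝ, 0 < C ∧
      ∀ (ι : Type) [Fintype ι] [DecidableEq ι] (p K : ℕ)
        (E : Fin p → Finset ι) (c : Fin K → ι → ℝ) (x : ι → ℝ) (L : ℝ),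
        3 ≤ K →
        (∀ i, (E i).Nonempty) →
        (∀ i j, i ≠ j → Disjoint (E i) (E j)) →
        (Finset.univ.biUnion E = Finset.univ) →
        (∀ ξ e, 0 ≤ c ξ e) →
        (∀ e, 0 ≤ x e ∧ x e ≤ 1) →
        (∀ i, ∑ e ∈ E i, x e = 1) →
        0 < L →
        (∀ ξ, ∑ e, c ξ e * x e ≤ L) →
        (∃ ξ, ∑ e, c ξ e * x e = L) →
        (∀ ξ e, 0 < x e → c ξ e ≤ L) →
        ∃ X : Finset ι, (∀ i, (X ∩ E i).card = 1) ∧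
          ∀ ξ, ∑ e ∈ X, c ξ e ≤ C * L * Real.log K / Real.log (Real.log K) := by
  classical
  refine ⟨Real.exp 2, Real.exp_pos 2, ?_⟩
  intro ι _ _ p K E c x L hK hEne hEdisj hEcover hc hx hx1 hL hcxL _hex hsup
  set u := Real.log (K : ℝ) with hu_def
  have hK3 : (3:ℝ) ≤ (K:ℝ) := by exact_mod_cast hK
  have hKpos : (0:ℝ) < (K:ℝ) := by linarith
  have hu1 : 1 < u := by
    have h3 : Real.exp 1 < 3 := lt_of_lt_of_le Real.exp_one_lt_d9 (by norm_num)
    have := Real.log_lt_log (Real.exp_pos 1) (lt_of_lt_of_le h3 hK3)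
    rwa [Real.log_exp] at this
  have hu0 : 0 < u := by linarith
  set s := Real.log u with hs_def
  have hs0 : 0 < s := Real.log_pos hu1
  set t := Real.exp 2 * u / s with ht_def
  have ht0 : 0 < t := by positivity
  set lam := Real.log t with hlam_def
  have hexp_lam : Real.exp lam = t := Real.exp_log ht0
  have hlam_eq : lam = 2 + s - Real.log s := by
    rw [hlam_def, ht_def, Real.log_div (by positivity : (0:ℝ) < Real.exp 2 * u).ne'
      hs0.ne', Real.log_mul (Real.exp_pos 2).ne' hu0.ne', Real.log_exp]
  have hlam1 : 1 ≤ lam := by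
    have := Real.log_le_sub_one_of_pos hs0
    rw [hlam_eq]; linarith
  have hlam0 : 0 ≤ lam := by linarith
  have hkey : u ≤ t * (lam - 1) := by
    have h := key_ineq hs0
    have h2 : u * s ≤ Real.exp 2 * u * (1 + s - Real.log s) := by
      nlinarith [mul_le_mul_of_nonneg_left h hu0.le]
    rw [hlam_eq, ht_def, div_mul_eq_mul_div, le_div_iff₀ hs0]
    nlinarith [h2]
  -- weights
  set F := Fintype.piFinset E with hF_def
  have hw0 : ∀ f : Fin p → ι, (0:ℝ) ≤ ∏ i, x (f i) :=
    fun f => Finset.prod_nonneg fun i _ => (hx (f i)).1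
  have htotal : ∑ f ∈ F, ∏ i, x (f i) = 1 := by
    rw [hF_def, ← Finset.prod_univ_sum]
    simp [hx1]
  -- partition sum identity
  have hpart : ∀ g : ι → ℝ, ∑ i, ∑ e ∈ E i, g e = ∑ e, g e := by
    intro g
    rw [← Finset.sum_biUnion (fun i _ j _ hij => hEdisj i j hij), hEcover]
  -- Markov bound per scenario
  have hmarkov : ∀ ξ : Fin K,
      ∑ f ∈ F, (if t * L < ∑ i, c ξ (f i) then ∏ i, x (f i) else 0)
        ≤ Real.exp (t - 1 - lam * t) := by
    intro ξ
    have hmean : ∑ i, ∑ e ∈ E i, x e * (c ξ e / L) ≤ 1 := by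
      rw [hpart fun e => x e * (c ξ e / L)]
      have : ∑ e, x e * (c ξ e / L) = (∑ e, c ξ e * x e) / L := by
        rw [Finset.sum_div]
        exact Finset.sum_congr rfl fun e _ => by ring
      rw [this, div_le_one hL]
      exact hcxL ξ
    have hmgf := mgf_bound E x (fun e => c ξ e / L) (fun e => (hx e).1) hx1
      (fun e => div_nonneg (hc ξ e) hL.le)
      (fun e he => (div_le_one hL).2 (hsup ξ e he)) hmean hlam0 hexp_lam
    have hstep : ∀ f ∈ F, (if t * L < ∑ i, c ξ (f i) then ∏ i, x (f i) else 0)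
        ≤ Real.exp (-(lam * t)) * ((∏ i, x (f i)) *
            Real.exp (lam * ∑ i, c ξ (f i) / L)) := by
      intro f _
      have hwf := hw0 f
      split_ifs with h
      · have hY : t ≤ ∑ i, c ξ (f i) / L := by
          rw [← Finset.sum_div, le_div_iff₀ hL]
          linarith [h]
        have hone : 1 ≤ Real.exp (-(lam * t)) *
            Real.exp (lam * ∑ i, c ξ (f i) / L) := by
          rw [← Real.exp_add]
          refine Real.one_le_exp ?_
          nlinarith [hlam0, hY]
        calc ∏ i, x (f i) = (∏ i, x (f i)) * 1 := (mul_one _).symm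
          _ ≤ (∏ i, x (f i)) * (Real.exp (-(lam * t)) *
              Real.exp (lam * ∑ i, c ξ (f i) / L)) :=
                mul_le_mul_of_nonneg_left hone hwf
          _ = _ := by ring
      · positivity
    calc ∑ f ∈ F, (if t * L < ∑ i, c ξ (f i) then ∏ i, x (f i) else 0)
        ≤ ∑ f ∈ F, Real.exp (-(lam * t)) * ((∏ i, x (f i)) *
            Real.exp (lam * ∑ i, c ξ (f i) / L)) := Finset.sum_le_sum hstep
      _ = Real.exp (-(lam * t)) * ∑ f ∈ F, (∏ i, x (f i)) *
            Real.exp (lam * ∑ i, c ξ (f i) / L) := by rw [Finset.mul_sum]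
      _ ≤ Real.exp (-(lam * t)) * Real.exp (t - 1) :=
            mul_le_mul_of_nonneg_left hmgf (Real.exp_pos _).le
      _ = Real.exp (t - 1 - lam * t) := by rw [← Real.exp_add]; ring_nf
  -- union bound
  have hunion : ∑ f ∈ F,
      (if ∀ ξ : Fin K, ∑ i, c ξ (f i) ≤ t * L then (0:ℝ) else ∏ i, x (f i)) < 1 := by
    have h1 : ∀ f ∈ F,
        (if ∀ ξ : Fin K, ∑ i, c ξ (f i) ≤ t * L then (0:ℝ) else ∏ i, x (f i))
          ≤ ∑ ξ : Fin K, (if t * L < ∑ i, c ξ (f i) then ∏ i, x (f i) else 0) := by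
      intro f _
      have hnn : ∀ ξ : Fin K,
          (0:ℝ) ≤ if t * L < ∑ i, c ξ (f i) then ∏ i, x (f i) else 0 := by
        intro ξ; split_ifs; exacts [hw0 f, le_refl 0]
      split_ifs with hP
      · exact Finset.sum_nonneg fun ξ _ => hnn ξ
      · push_neg at hP
        obtain ⟨ξ0, hξ0⟩ := hP
        have := Finset.single_le_sum (fun ξ _ => hnn ξ) (Finset.mem_univ ξ0)
        rwa [if_pos hξ0] at this
    have h2 : Real.exp (t - 1 - lam * t) < Real.exp (-u) := by
      apply Real.exp_lt_exp.2
      nlinarith [hkey]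
    have h3 : (K:ℝ) * Real.exp (-u) = 1 := by
      rw [hu_def, Real.exp_neg, Real.exp_log hKpos]
      field_simp
    calc ∑ f ∈ F, (if ∀ ξ : Fin K, ∑ i, c ξ (f i) ≤ t * L then (0:ℝ)
            else ∏ i, x (f i))
        ≤ ∑ f ∈ F, ∑ ξ : Fin K,
            (if t * L < ∑ i, c ξ (f i) then ∏ i, x (f i) else 0) :=
              Finset.sum_le_sum h1
      _ = ∑ ξ : Fin K, ∑ f ∈ F,
            (if t * L < ∑ i, c ξ (f i) then ∏ i, x (f i) else 0) :=
              Finset.sum_comm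
      _ ≤ ∑ _ξ : Fin K, Real.exp (t - 1 - lam * t) :=
              Finset.sum_le_sum fun ξ _ => hmarkov ξ
      _ = (K:ℝ) * Real.exp (t - 1 - lam * t) := by
              simp [Finset.sum_const, Finset.card_univ, nsmul_eq_mul]
      _ < (K:ℝ) * Real.exp (-u) := by
              exact mul_lt_mul_of_pos_left h2 hKpos
      _ = 1 := h3
  -- extract a good selection
  have hgood : ∃ f ∈ F, ∀ ξ : Fin K, ∑ i, c ξ (f i) ≤ t * L := by
    by_contra hcon
    push_neg at hcon
    have heq : ∑ f ∈ F,
        (if ∀ ξ : Fin K, ∑ i, c ξ (f i) ≤ t * L then (0:ℝ) else ∏ i, x (f i))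
          = ∑ f ∈ F, ∏ i, x (f i) := by
      refine Finset.sum_congr rfl fun f hf => ?_
      rw [if_neg]
      intro hall
      obtain ⟨ξ, hξ⟩ := hcon f hf
      exact absurd (hall ξ) (not_le.2 hξ)
    rw [heq, htotal] at hunion
    exact lt_irrefl 1 hunion
  obtain ⟨f, hfF, hfgood⟩ := hgood
  have hfE : ∀ i, f i ∈ E i := Fintype.mem_piFinset.1 hfF
  have hinj : ∀ i j : Fin p, f i = f j → i = j := by
    intro i j hij
    by_contra hne
    exact (Finset.disjoint_left.1 (hEdisj i j hne) (hfE i)) (hij ▸ hfE j)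
  refine ⟨Finset.image f Finset.univ, ?_, ?_⟩
  · intro i
    have hset : Finset.image f Finset.univ ∩ E i = {f i} := by
      ext a
      simp only [Finset.mem_inter, Finset.mem_image, Finset.mem_univ, true_and,
        Finset.mem_singleton]
      constructor
      · rintro ⟨⟨j, rfl⟩, haE⟩
        rcases eq_or_ne j i with rfl | hji
        · rfl
        · exact absurd haE (Finset.disjoint_left.1 (hEdisj j i hji) (hfE j))
      · rintro rfl; exact ⟨⟨i, rfl⟩, hfE i⟩
    rw [hset, Finset.card_singleton]
  · intro ξ
    have hsum : ∑ e ∈ Finset.image f Finset.univ, c ξ e = ∑ i, c ξ (f i) :=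
      Finset.sum_image fun i _ j _ h => hinj i j h
    rw [hsum]
    calc ∑ i, c ξ (f i) ≤ t * L := hfgood ξ
      _ = Real.exp 2 * L * u / s := by rw [ht_def]; ring
end

section
/- There exists a universal constant C > 0 such that the following holds (rounding for min-max selecting items). Let E be a finite set, p a positive integer, and U a finite set of scenarios with |U| = K ≥ 3, each scenario ξ assigning a nonnegative cost c^ξ_e to every e ∈ E. Let x : E → [0,1] satisfy Σ_{e∈E} x_e = p, let L = max_{ξ∈U} Σ_{e∈E} c^ξ_e x_e > 0, and suppose c^ξ_e ≤ L for every ξ ∈ U and every e with x_e > 0. Then there exists X ⊆ E with |X| = p such that Σ_{e∈X} c^ξ_e ≤ C · L · ln K / ln ln K for every ξ ∈ U. -/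
open Finset

private lemma exp_interp {a t : ℝ} (ha0 : 0 ≤ a) (ha1 : a ≤ 1) :
    Real.exp (a * t) ≤ 1 + a * (Real.exp t - 1) := by
  have h := convexOn_exp.2 (Set.mem_univ t) (Set.mem_univ (0:ℝ)) ha0
    (sub_nonneg.mpr ha1) (by ring)
  simp only [smul_eq_mul, mul_zero, add_zero, Real.exp_zero, mul_one] at h
  linarith

private lemma sum_eq_card {ι : Type} [DecidableEq ι] (T : Finset ι) (y : ι → ℝ)
    (h : ∀ e ∈ T, y e = 0 ∨ y e = 1) :
    ∑ e ∈ T, y e = ((T.filter fun e => y e = 1).card : ℝ) := by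
  classical
  rw [← Finset.sum_filter_add_sum_filter_not T (fun e => y e = 1)]
  have h1 : ∑ e ∈ T.filter (fun e => y e = 1), y e
      = ((T.filter fun e => y e = 1).card : ℝ) := by
    rw [Finset.sum_congr rfl (fun e he => (Finset.mem_filter.mp he).2)]
    simp
  have h2 : ∑ e ∈ T.filter (fun e => ¬ y e = 1), y e = 0 := by
    apply Finset.sum_eq_zero
    intro e he
    rcases Finset.mem_filter.mp he with ⟨heT, hne⟩
    rcases h e heT with h0 | h1'
    · exact h0
    · exact absurd h1' hne
  rw [h1, h2, add_zero]

private lemma pipage_int {ι : Type} [Fintype ι] [DecidableEq ι] (S : Finset ι) (K : ℕ)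
    (g : Fin K → ι → ℝ) (hg : ∀ ξ, ∀ e ∈ S, 1 ≤ g ξ e) (p : ℕ) (y : ι → ℝ)
    (hy : ∀ e ∈ S, 0 ≤ y e ∧ y e ≤ 1) (hsum : ∑ e ∈ S, y e = (p : ℝ))
    (hint : ∀ e ∈ S, y e = 0 ∨ y e = 1) :
    ∃ X ⊆ S, X.card = p ∧
      ∀ ξ, ∏ e ∈ X, g ξ e ≤ ∑ ζ, ∏ e ∈ S, (1 + y e * (g ζ e - 1)) := by
  classical
  refine ⟨S.filter (fun e => y e = 1), Finset.filter_subset _ _, ?_, ?_⟩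
  · have h := sum_eq_card S y hint
    rw [hsum] at h
    exact_mod_cast h.symm
  · intro ξ
    have hprod : ∀ ζ, ∏ e ∈ S, (1 + y e * (g ζ e - 1))
        = ∏ e ∈ S.filter (fun e => y e = 1), g ζ e := by
      intro ζ
      rw [← Finset.prod_filter_mul_prod_filter_not S (fun e => y e = 1)]
      have e1 : ∏ e ∈ S.filter (fun e => y e = 1), (1 + y e * (g ζ e - 1))
          = ∏ e ∈ S.filter (fun e => y e = 1), g ζ e :=
        Finset.prod_congr rfl (fun e he => by rw [(Finset.mem_filter.mp he).2]; ring)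
      have e2 : ∏ e ∈ S.filter (fun e => ¬ y e = 1), (1 + y e * (g ζ e - 1)) = 1 :=
        Finset.prod_eq_one (fun e he => by
          rcases Finset.mem_filter.mp he with ⟨heS, hne⟩
          rcases hint e heS with h0 | h1
          · rw [h0]; ring
          · exact absurd h1 hne)
      rw [e1, e2, mul_one]
    calc ∏ e ∈ S.filter (fun e => y e = 1), g ξ e
        = ∏ e ∈ S, (1 + y e * (g ξ e - 1)) := (hprod ξ).symm
      _ ≤ ∑ ζ, ∏ e ∈ S, (1 + y e * (g ζ e - 1)) := by
          apply Finset.single_le_sum (f := fun ζ => ∏ e ∈ S, (1 + y e * (g ζ e - 1)))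
          · intro ζ _
            apply Finset.prod_nonneg
            intro e he
            nlinarith [(hy e he).1, hg ζ e he]
          · exact Finset.mem_univ ξ

private lemma pipage {ι : Type} [Fintype ι] [DecidableEq ι] (S : Finset ι) (K : ℕ)
    (g : Fin K → ι → ℝ) (hg : ∀ ξ, ∀ e ∈ S, 1 ≤ g ξ e) (p : ℕ) :
    ∀ (n : ℕ) (y : ι → ℝ), (∀ e ∈ S, 0 ≤ y e ∧ y e ≤ 1) → (∑ e ∈ S, y e = (p : ℝ)) →
      (S.filter fun e => y e ≠ 0 ∧ y e ≠ 1).card ≤ n →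
      ∃ X ⊆ S, X.card = p ∧
        ∀ ξ, ∏ e ∈ X, g ξ e ≤ ∑ ζ, ∏ e ∈ S, (1 + y e * (g ζ e - 1)) := by
  classical
  intro n
  induction n with
  | zero =>
    intro y hy hsum hcard
    apply pipage_int S K g hg p y hy hsum
    intro e he
    by_contra hcon
    push_neg at hcon
    have hmem : e ∈ S.filter fun e => y e ≠ 0 ∧ y e ≠ 1 :=
      Finset.mem_filter.mpr ⟨he, hcon.1, hcon.2⟩
    have h0 : (S.filter fun e => y e ≠ 0 ∧ y e ≠ 1) = ∅ :=
      Finset.card_eq_zero.mp (Nat.le_zero.mp hcard)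
    rw [h0] at hmem
    exact absurd hmem (Finset.notMem_empty e)
  | succ n IH =>
    intro y hy hsum hcard
    by_cases hle : (S.filter fun e => y e ≠ 0 ∧ y e ≠ 1).card ≤ n
    · exact IH y hy hsum hle
    set F := S.filter fun e => y e ≠ 0 ∧ y e ≠ 1 with hFdef
    have hFcard : F.card = n + 1 := by omega
    -- F has at least 2 elements
    have hF2 : 1 < F.card := by
      rcases Nat.lt_or_ge 1 F.card with h2 | h2
      · exact h2
      exfalso
      have h1 : F.card = 1 := by omega
      obtain ⟨i, hFi⟩ := Finset.card_eq_one.mp h1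
      have hiF : i ∈ F := by rw [hFi]; exact Finset.mem_singleton_self i
      obtain ⟨hiS, hi0, hi1⟩ :=
        (show i ∈ S ∧ y i ≠ 0 ∧ y i ≠ 1 by
          have := Finset.mem_filter.mp hiF; exact ⟨this.1, this.2.1, this.2.2⟩)
      have hothers : ∀ e ∈ S.erase i, y e = 0 ∨ y e = 1 := by
        intro e he
        obtain ⟨hei, heS⟩ := Finset.mem_erase.mp he
        by_contra hcon
        push_neg at hcon
        have : e ∈ F := Finset.mem_filter.mpr ⟨heS, hcon.1, hcon.2⟩
        rw [hFi] at this
        exact hei (Finset.mem_singleton.mp this)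
      have hsplit : y i + ∑ e ∈ S.erase i, y e = ∑ e ∈ S, y e :=
        Finset.add_sum_erase S y hiS
      have hm := sum_eq_card (S.erase i) y hothers
      set m := ((S.erase i).filter fun e => y e = 1).card with hmdef
      have hyi0 : 0 < y i := lt_of_le_of_ne (hy i hiS).1 (Ne.symm hi0)
      have hyi1 : y i < 1 := lt_of_le_of_ne (hy i hiS).2 hi1
      have heq : y i = (p : ℝ) - m := by rw [← hsum, ← hsplit, hm]; ring
      have h1' : (m : ℝ) < p := by linarith [heq ▸ hyi0]
      have h2' : (p : ℝ) < m + 1 := by linarith [heq ▸ hyi1]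
      have h1n : m < p := by exact_mod_cast h1'
      have h2n : p < m + 1 := by exact_mod_cast h2'
      omega
    obtain ⟨i, hiF, j, hjF, hij⟩ := Finset.one_lt_card.mp hF2
    obtain ⟨hiS, hi0, hi1⟩ :=
      (show i ∈ S ∧ y i ≠ 0 ∧ y i ≠ 1 by
        have := Finset.mem_filter.mp hiF; exact ⟨this.1, this.2.1, this.2.2⟩)
    obtain ⟨hjS, hj0, hj1⟩ :=
      (show j ∈ S ∧ y j ≠ 0 ∧ y j ≠ 1 by
        have := Finset.mem_filter.mp hjF; exact ⟨this.1, this.2.1, this.2.2⟩)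
    have hyi0 : 0 < y i := lt_of_le_of_ne (hy i hiS).1 (Ne.symm hi0)
    have hyi1 : y i < 1 := lt_of_le_of_ne (hy i hiS).2 hi1
    have hyj0 : 0 < y j := lt_of_le_of_ne (hy j hjS).1 (Ne.symm hj0)
    have hyj1 : y j < 1 := lt_of_le_of_ne (hy j hjS).2 hj1
    set t₁ := min (y i) (1 - y j) with ht₁def
    set t₂ := min (1 - y i) (y j) with ht₂def
    have ht₁pos : 0 < t₁ := lt_min hyi0 (by linarith)
    have ht₂pos : 0 < t₂ := lt_min (by linarith) hyj0
    have ht₁a : t₁ ≤ y i := min_le_left _ _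
    have ht₁b : t₁ ≤ 1 - y j := min_le_right _ _
    have ht₂a : t₂ ≤ 1 - y i := min_le_left _ _
    have ht₂b : t₂ ≤ y j := min_le_right _ _
    set R := (S.erase i).erase j with hRdef
    have hjSi : j ∈ S.erase i := Finset.mem_erase.mpr ⟨Ne.symm hij, hjS⟩
    have hRmem : ∀ e ∈ R, e ≠ i ∧ e ≠ j ∧ e ∈ S := by
      intro e he
      have h1 := Finset.mem_erase.mp he
      have h2 := Finset.mem_erase.mp h1.2
      exact ⟨h2.1, h1.1, h2.2⟩
    set yt : ℝ → ι → ℝ := fun t e => if e = i then y i + t else if e = j then y j - t else y e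
      with hytdef
    have hyti : ∀ t, yt t i = y i + t := by intro t; simp [hytdef]
    have hytj : ∀ t, yt t j = y j - t := by
      intro t; simp [hytdef, if_neg (Ne.symm hij)]
    have hyte : ∀ t e, e ≠ i → e ≠ j → yt t e = y e := by
      intro t e hei hej; simp [hytdef, if_neg hei, if_neg hej]
    have decompP : ∀ (z : ι → ℝ) (ζ : Fin K),
        ∏ e ∈ S, (1 + z e * (g ζ e - 1)) =
          (1 + z i * (g ζ i - 1)) * ((1 + z j * (g ζ j - 1)) *
            ∏ e ∈ R, (1 + z e * (g ζ e - 1))) := by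
      intro z ζ
      rw [← Finset.mul_prod_erase S _ hiS, ← Finset.mul_prod_erase (S.erase i) _ hjSi]
    have decompS : ∀ (z : ι → ℝ), ∑ e ∈ S, z e = z i + (z j + ∑ e ∈ R, z e) := by
      intro z
      rw [← Finset.add_sum_erase S _ hiS, ← Finset.add_sum_erase (S.erase i) _ hjSi]
    set q : ℝ → ℝ := fun t => ∑ ζ, ∏ e ∈ S, (1 + yt t e * (g ζ e - 1)) with hqdef
    have hqform : ∀ t, q t = ∑ ζ, (1 + (y i + t) * (g ζ i - 1)) *
        ((1 + (y j - t) * (g ζ j - 1)) * ∏ e ∈ R, (1 + y e * (g ζ e - 1))) := by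
      intro t
      apply Finset.sum_congr rfl
      intro ζ _
      rw [decompP (yt t) ζ, hyti, hytj]
      congr 1
      congr 1
      apply Finset.prod_congr rfl
      intro e he
      obtain ⟨hei, hej, _⟩ := hRmem e he
      rw [hyte t e hei hej]
    have hq0 : q 0 = ∑ ζ, ∏ e ∈ S, (1 + y e * (g ζ e - 1)) := by
      rw [hqform 0]
      apply Finset.sum_congr rfl
      intro ζ _
      rw [decompP y ζ]
      norm_num
    -- per-scenario nonnegativity of pieces
    have hP : ∀ ζ, (0:ℝ) ≤ ∏ e ∈ R, (1 + y e * (g ζ e - 1)) := by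
      intro ζ
      apply Finset.prod_nonneg
      intro e he
      obtain ⟨_, _, heS⟩ := hRmem e he
      nlinarith [(hy e heS).1, hg ζ e heS]
    have hu : ∀ ζ, (0:ℝ) ≤ g ζ i - 1 := fun ζ => by linarith [hg ζ i hiS]
    have hv : ∀ ζ, (0:ℝ) ≤ g ζ j - 1 := fun ζ => by linarith [hg ζ j hjS]
    -- concavity inequality
    have hkey : t₁ * q t₂ + t₂ * q (-t₁) ≤ (t₁ + t₂) * q 0 := by
      rw [hqform t₂, hqform (-t₁), hqform 0, Finset.mul_sum, Finset.mul_sum, Finset.mul_sum,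
        ← Finset.sum_add_distrib]
      apply Finset.sum_le_sum
      intro ζ _
      have hPζ := hP ζ
      have huζ := hu ζ
      have hvζ := hv ζ
      set P := ∏ e ∈ R, (1 + y e * (g ζ e - 1))
      set u := g ζ i - 1
      set v := g ζ j - 1
      have hnn : 0 ≤ P * u * v * (t₁ * t₂ * (t₁ + t₂)) := by
        apply mul_nonneg (mul_nonneg (mul_nonneg hPζ huζ) hvζ)
        apply mul_nonneg (mul_nonneg ht₁pos.le ht₂pos.le)
        linarith
      nlinarith [hnn]
    have hchoice : q t₂ ≤ q 0 ∨ q (-t₁) ≤ q 0 := by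
      by_contra hcon
      push_neg at hcon
      obtain ⟨h1, h2⟩ := hcon
      have hA := mul_lt_mul_of_pos_left h1 ht₁pos
      have hB := mul_lt_mul_of_pos_left h2 ht₂pos
      have hC : (t₁ + t₂) * q 0 = t₁ * q 0 + t₂ * q 0 := by ring
      linarith
    -- the common finishing move
    have main : ∀ t : ℝ, (yt t i = 0 ∨ yt t i = 1 ∨ yt t j = 0 ∨ yt t j = 1) →
        0 ≤ y i + t → y i + t ≤ 1 → 0 ≤ y j - t → y j - t ≤ 1 →
        q t ≤ q 0 →
        ∃ X ⊆ S, X.card = p ∧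
          ∀ ξ, ∏ e ∈ X, g ξ e ≤ ∑ ζ, ∏ e ∈ S, (1 + y e * (g ζ e - 1)) := by
      intro t hint hb1 hb2 hb3 hb4 hqle
      have hy' : ∀ e ∈ S, 0 ≤ yt t e ∧ yt t e ≤ 1 := by
        intro e heS
        by_cases hei : e = i
        · subst hei; rw [hyti]; exact ⟨hb1, hb2⟩
        by_cases hej : e = j
        · subst hej; rw [hytj]; exact ⟨hb3, hb4⟩
        rw [hyte t e hei hej]; exact hy e heS
      have hsum' : ∑ e ∈ S, yt t e = (p : ℝ) := by
        rw [decompS (yt t), hyti, hytj]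
        have hR' : ∑ e ∈ R, yt t e = ∑ e ∈ R, y e := by
          apply Finset.sum_congr rfl
          intro e he
          obtain ⟨hei, hej, _⟩ := hRmem e he
          exact hyte t e hei hej
        rw [hR']
        have := decompS y
        rw [← hsum, this]
        ring
      have hcard' : (S.filter fun e => yt t e ≠ 0 ∧ yt t e ≠ 1).card ≤ n := by
        -- there is k ∈ {i,j} with yt t k integral; filter ⊆ F.erase k
        have hsub : ∃ k, k ∈ F ∧
            (S.filter fun e => yt t e ≠ 0 ∧ yt t e ≠ 1) ⊆ F.erase k := by
          have hcases : (yt t i = 0 ∨ yt t i = 1) ∨ (yt t j = 0 ∨ yt t j = 1) := by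
            tauto
          rcases hcases with hki | hkj
          · refine ⟨i, hiF, ?_⟩
            intro e he
            obtain ⟨heS, he0, he1⟩ :=
              (show e ∈ S ∧ yt t e ≠ 0 ∧ yt t e ≠ 1 by
                have := Finset.mem_filter.mp he; exact ⟨this.1, this.2.1, this.2.2⟩)
            have hei : e ≠ i := by
              rintro rfl
              rcases hki with h | h
              · exact he0 h
              · exact he1 h
            refine Finset.mem_erase.mpr ⟨hei, ?_⟩
            by_cases hej : e = j
            · subst hej; exact hjF
            · rw [hyte t e hei hej] at he0 he1
              exact Finset.mem_filter.mpr ⟨heS, he0, he1⟩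
          · refine ⟨j, hjF, ?_⟩
            intro e he
            obtain ⟨heS, he0, he1⟩ :=
              (show e ∈ S ∧ yt t e ≠ 0 ∧ yt t e ≠ 1 by
                have := Finset.mem_filter.mp he; exact ⟨this.1, this.2.1, this.2.2⟩)
            have hej : e ≠ j := by
              rintro rfl
              rcases hkj with h | h
              · exact he0 h
              · exact he1 h
            refine Finset.mem_erase.mpr ⟨hej, ?_⟩
            by_cases hei : e = i
            · subst hei; exact hiF
            · rw [hyte t e hei hej] at he0 he1
              exact Finset.mem_filter.mpr ⟨heS, he0, he1⟩
        obtain ⟨k, hkF, hsub⟩ := hsub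
        calc (S.filter fun e => yt t e ≠ 0 ∧ yt t e ≠ 1).card
            ≤ (F.erase k).card := Finset.card_le_card hsub
          _ = F.card - 1 := Finset.card_erase_of_mem hkF
          _ ≤ n := by omega
      obtain ⟨X, hXS, hXcard, hX⟩ := IH (yt t) hy' hsum' hcard'
      refine ⟨X, hXS, hXcard, fun ξ => ?_⟩
      calc ∏ e ∈ X, g ξ e ≤ ∑ ζ, ∏ e ∈ S, (1 + yt t e * (g ζ e - 1)) := hX ξ
        _ = q t := rfl
        _ ≤ q 0 := hqle
        _ = ∑ ζ, ∏ e ∈ S, (1 + y e * (g ζ e - 1)) := hq0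
    rcases hchoice with hup | hdown
    · -- move by t₂
      apply main t₂ ?_ (by linarith) (by linarith) (by linarith) (by linarith) hup
      rcases min_choice (1 - y i) (y j) with h | h
      · right; left; rw [hyti]; rw [ht₂def, h]; ring
      · right; right; left; rw [hytj]; rw [ht₂def, h]; ring
    · -- move by -t₁
      apply main (-t₁) ?_ (by linarith) (by linarith) (by linarith) (by linarith) hdown
      rcases min_choice (y i) (1 - y j) with h | h
      · left; rw [hyti]; rw [ht₁def, h]; ring
      · right; right; right; rw [hytj]; rw [ht₁def, h]; ring

/-- Derandomized LP-rounding for min-max selecting items (Theorem 1 of the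
paper): any fractional solution `x` of total weight `p`, with max scenario cost
`L` (attained) and support costs `≤ L`, can be rounded to a set `X` of exactly
`p` elements with `Σ_{e∈X} c ξ e ≤ C·L·ln K / ln ln K` for every scenario. -/
theorem stmt8 :
    ∃ C : ℝ, 0 < C ∧
      ∀ (ι : Type) [Fintype ι] [DecidableEq ι] (p K : ℕ)
        (c : Fin K → ι → ℝ) (x : ι → ℝ) (L : ℝ),
        0 < p → 3 ≤ K →
        (∀ ξ e, 0 ≤ c ξ e) →
        (∀ e, 0 ≤ x e ∧ x e ≤ 1) →
        (∑ e, x e = (p : ℝ)) →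
        0 < L →
        (∀ ξ, ∑ e, c ξ e * x e ≤ L) →
        (∃ ξ, ∑ e, c ξ e * x e = L) →
        (∀ ξ e, 0 < x e → c ξ e ≤ L) →
        ∃ X : Finset ι, X.card = p ∧
          ∀ ξ, ∑ e ∈ X, c ξ e ≤ C * L * Real.log K / Real.log (Real.log K) := by
  classical
  refine ⟨2, by norm_num, ?_⟩
  intro ι _ _ p K c x L hp hK hc hx hxsum hL hcxle _hex hsupp
  set β := Real.log K with hβdef
  have hK3 : (3:ℝ) ≤ (K:ℝ) := by exact_mod_cast hK
  have hexp3 : Real.exp 1 < 3 := lt_of_lt_of_le Real.exp_one_lt_d9 (by norm_num)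
  have hβ1 : 1 < β := by
    rw [hβdef]
    rw [show (1:ℝ) = Real.log (Real.exp 1) by rw [Real.log_exp]]
    apply Real.log_lt_log (Real.exp_pos 1)
    linarith
  have hβpos : 0 < β := by linarith
  have hlogβ : 0 < Real.log β := Real.log_pos hβ1
  set S : Finset ι := Finset.univ.filter (fun e => 0 < x e) with hSdef
  set g : Fin K → ι → ℝ := fun ζ e => Real.exp (Real.log β * (c ζ e / L)) with hgdef
  have hg : ∀ ζ, ∀ e ∈ S, 1 ≤ g ζ e := by
    intro ζ e _
    apply Real.one_le_exp
    apply mul_nonneg hlogβ.le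
    exact div_nonneg (hc ζ e) hL.le
  have hx0 : ∀ e ∉ S, x e = 0 := by
    intro e he
    rw [hSdef] at he
    simp only [Finset.mem_filter, Finset.mem_univ, true_and, not_lt] at he
    linarith [(hx e).1]
  have hsumS : ∑ e ∈ S, x e = (p : ℝ) := by
    rw [← hxsum]
    exact Finset.sum_subset (Finset.subset_univ S) (fun e _ he => hx0 e he)
  have hxS : ∀ e ∈ S, 0 ≤ x e ∧ x e ≤ 1 := fun e _ => hx e
  obtain ⟨X, hXS, hXcard, hXbound⟩ :=
    pipage S K g hg p ((S.filter fun e => x e ≠ 0 ∧ x e ≠ 1).card) x hxS hsumS le_rfl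
  refine ⟨X, hXcard, ?_⟩
  intro ξ
  -- upper bound on the potential at x
  have hterm : ∀ ζ : Fin K, ∏ e ∈ S, (1 + x e * (g ζ e - 1)) ≤ Real.exp (β - 1) := by
    intro ζ
    have step1 : ∏ e ∈ S, (1 + x e * (g ζ e - 1))
        ≤ ∏ e ∈ S, Real.exp (x e * (c ζ e / L) * (β - 1)) := by
      apply Finset.prod_le_prod
      · intro e he
        nlinarith [(hx e).1, hg ζ e he]
      · intro e he
        have ha0 : 0 ≤ c ζ e / L := div_nonneg (hc ζ e) hL.le
        have ha1 : c ζ e / L ≤ 1 := by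
          rw [div_le_one hL]
          apply hsupp ζ e
          rw [hSdef] at he
          exact (Finset.mem_filter.mp he).2
        have hbern : g ζ e ≤ 1 + (c ζ e / L) * (β - 1) := by
          have h := exp_interp ha0 ha1 (t := Real.log β)
          rw [Real.exp_log hβpos] at h
          calc g ζ e = Real.exp ((c ζ e / L) * Real.log β) := by
                rw [hgdef]; ring_nf
            _ ≤ 1 + (c ζ e / L) * (β - 1) := h
        have h3 : x e * (g ζ e - 1) ≤ x e * (c ζ e / L) * (β - 1) := by
          have h4 : g ζ e - 1 ≤ (c ζ e / L) * (β - 1) := by linarith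
          calc x e * (g ζ e - 1) ≤ x e * ((c ζ e / L) * (β - 1)) :=
                mul_le_mul_of_nonneg_left h4 (hx e).1
            _ = x e * (c ζ e / L) * (β - 1) := by ring
        linarith [Real.add_one_le_exp (x e * (c ζ e / L) * (β - 1))]
    have step2 : ∏ e ∈ S, Real.exp (x e * (c ζ e / L) * (β - 1))
        = Real.exp (∑ e ∈ S, x e * (c ζ e / L) * (β - 1)) := (Real.exp_sum _ _).symm
    have hsum1 : ∑ e ∈ S, c ζ e * x e ≤ L := by
      apply le_trans _ (hcxle ζ)
      apply Finset.sum_le_sum_of_subset_of_nonneg (Finset.subset_univ S)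
      intro e _ _
      exact mul_nonneg (hc ζ e) (hx e).1
    have step3 : ∑ e ∈ S, x e * (c ζ e / L) * (β - 1) ≤ β - 1 := by
      have heq : ∑ e ∈ S, x e * (c ζ e / L) * (β - 1)
          = (β - 1) / L * ∑ e ∈ S, c ζ e * x e := by
        rw [Finset.mul_sum]
        apply Finset.sum_congr rfl
        intro e _
        field_simp
      rw [heq]
      have hnn : 0 ≤ (β - 1) / L := div_nonneg (by linarith) hL.le
      calc (β - 1) / L * ∑ e ∈ S, c ζ e * x e ≤ (β - 1) / L * L :=
            mul_le_mul_of_nonneg_left hsum1 hnn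
        _ = β - 1 := by field_simp
    calc ∏ e ∈ S, (1 + x e * (g ζ e - 1))
        ≤ ∏ e ∈ S, Real.exp (x e * (c ζ e / L) * (β - 1)) := step1
      _ = Real.exp (∑ e ∈ S, x e * (c ζ e / L) * (β - 1)) := step2
      _ ≤ Real.exp (β - 1) := Real.exp_le_exp.mpr step3
  have hΦ : ∑ ζ, ∏ e ∈ S, (1 + x e * (g ζ e - 1)) ≤ (K:ℝ) * Real.exp (β - 1) := by
    calc ∑ ζ, ∏ e ∈ S, (1 + x e * (g ζ e - 1))
        ≤ ∑ _ζ : Fin K, Real.exp (β - 1) := Finset.sum_le_sum (fun ζ _ => hterm ζ)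
      _ = (K:ℝ) * Real.exp (β - 1) := by
          rw [Finset.sum_const, Finset.card_univ, Fintype.card_fin, nsmul_eq_mul]
  -- lower bound: product over X
  have hXval : ∏ e ∈ X, g ξ e
      = Real.exp (Real.log β * ((∑ e ∈ X, c ξ e) / L)) := by
    rw [hgdef]
    rw [← Real.exp_sum]
    congr 1
    rw [← Finset.mul_sum, ← Finset.sum_div]
  have hchain : Real.exp (Real.log β * ((∑ e ∈ X, c ξ e) / L))
      ≤ (K:ℝ) * Real.exp (β - 1) := by
    rw [← hXval]
    exact le_trans (hXbound ξ) hΦ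
  have hKexp : 0 < (K:ℝ) * Real.exp (β - 1) :=
    mul_pos (by linarith) (Real.exp_pos _)
  have hlog : Real.log β * ((∑ e ∈ X, c ξ e) / L)
      ≤ Real.log ((K:ℝ) * Real.exp (β - 1)) := by
    rw [← Real.exp_log hKexp] at hchain
    exact Real.exp_le_exp.mp hchain
  have hlogval : Real.log ((K:ℝ) * Real.exp (β - 1)) = β + (β - 1) := by
    rw [Real.log_mul (by linarith) (Real.exp_ne_zero _), Real.log_exp, hβdef]
  rw [hlogval] at hlog
  have hT : Real.log β * ((∑ e ∈ X, c ξ e) / L) ≤ 2 * β := by linarith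
  have hTdiv : (∑ e ∈ X, c ξ e) / L ≤ 2 * β / Real.log β := by
    rw [le_div_iff₀ hlogβ]
    calc (∑ e ∈ X, c ξ e) / L * Real.log β
        = Real.log β * ((∑ e ∈ X, c ξ e) / L) := by ring
      _ ≤ 2 * β := hT
  have hfin : ∑ e ∈ X, c ξ e ≤ 2 * β / Real.log β * L := by
    rw [div_le_iff₀ hL] at hTdiv
    exact hTdiv
  calc ∑ e ∈ X, c ξ e ≤ 2 * β / Real.log β * L := hfin
    _ = 2 * L * β / Real.log β := by ring
end

section
/- Let V be a finite set, A ⊆ V × V a set of arcs, l : A → {0,1} arc lengths, s, t ∈ V, and d : V → ℕ a function with d(s) = 0 and d(v) ≤ d(u) + l(u,v) for every arc (u,v) ∈ A. For each integer i ≥ 1, let E_i = {(u,v) ∈ A : d(u) = i−1 and d(v) = i}. Then: (a) the sets E_i are pairwise disjoint; (b) no arc e with l(e) = 0 belongs to any E_i; and (c) for every walk v_0 = s, v_1, …, v_m = t with (v_j, v_{j+1}) ∈ A for all j, and for every i with 1 ≤ i ≤ d(t), there exists an index j < m with d(v_j) = i−1, d(v_{j+1}) = i and l(v_j, v_{j+1})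 = 1; in particular each E_i with 1 ≤ i ≤ d(t) is an s–t cut-set containing only arcs of length 1. -/
lemma cross_aux (P : ℕ → Prop) : ∀ m : ℕ, P 0 → ¬ P m →
    ∃ j < m, P j ∧ ¬ P (j + 1) := by
  intro m
  induction m with
  | zero => intro h0 hm; exact absurd h0 hm
  | succ n ih =>
    intro h0 hm
    by_cases hn : P n
    · exact ⟨n, Nat.lt_succ_self n, hn, hm⟩
    · obtain ⟨j, hj, hp, hnp⟩ := ih h0 hn
      exact ⟨j, hj.trans (Nat.lt_succ_self n), hp, hnp⟩

/-- Lemma 2 of the paper. Let `l` be `0/1` arc lengths and `d` a distance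
potential from `s` (`d s = 0` and `d v ≤ d u + l (u,v)` for every arc `(u,v)`).
With `E_i = {(u,v) ∈ A : d u = i-1, d v = i}`: (a) the sets `E_i`, `i ≥ 1`, are
pairwise disjoint; (b) no arc of length `0` belongs to any `E_i`; (c) every
walk `w 0 = s, …, w m = t` crosses, for each `1 ≤ i ≤ d t`, some arc of `E_i`
of length `1` — so each `E_i` is an `s`–`t` cut-set of length-`1` arcs. -/
theorem stmt11 {V : Type} [DecidableEq V] (A : Finset (V × V))
    (l : V × V → ℕ) (hl : ∀ e ∈ A, l e = 0 ∨ l e = 1)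
    (s t : V) (d : V → ℕ) (hds : d s = 0)
    (hpot : ∀ e ∈ A, d e.2 ≤ d e.1 + l e) :
    (∀ i j : ℕ, 1 ≤ i → 1 ≤ j → i ≠ j →
      Disjoint (A.filter (fun e => d e.1 = i - 1 ∧ d e.2 = i))
        (A.filter (fun e => d e.1 = j - 1 ∧ d e.2 = j))) ∧
    (∀ i : ℕ, 1 ≤ i →
      ∀ e ∈ A.filter (fun e => d e.1 = i - 1 ∧ d e.2 = i), l e ≠ 0) ∧
    (∀ (m : ℕ) (w : ℕ → V), w 0 = s → w m = t →
      (∀ j < m, (w j, w (j + 1)) ∈ A) →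
      ∀ i : ℕ, 1 ≤ i → i ≤ d t →
        ∃ j < m, d (w j) = i - 1 ∧ d (w (j + 1)) = i ∧
          l (w j, w (j + 1)) = 1) := by
  refine ⟨?_, ?_, ?_⟩
  · intro i j hi hj hij
    rw [Finset.disjoint_left]
    intro e he he'
    simp only [Finset.mem_filter] at he he'
    exact hij (he.2.2 ▸ he'.2.2)
  · intro i hi e he hle
    simp only [Finset.mem_filter] at he
    have := hpot e he.1
    rw [hle, he.2.1, he.2.2, Nat.add_zero] at this
    omega
  · intro m w hw0 hwm hA i hi hit
    have h0 : d (w 0) < i := by rw [hw0, hds]; omega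
    have hm : ¬ d (w m) < i := by rw [hwm]; omega
    obtain ⟨j, hj, hp, hnp⟩ := cross_aux (fun j => d (w j) < i) m h0 hm
    have hmem := hA j hj
    have hpot' := hpot _ hmem
    have hl' := hl _ hmem
    simp only at hpot' hl'
    refine ⟨j, hj, by omega, by omega, by omega⟩
end

section
/- There exists a universal constant C > 0 such that the following holds. Let E be a finite set, E_1, …, E_p ⊆ E pairwise disjoint subsets, and U a finite set of scenarios with |U| = K ≥ 3, each scenario ξ assigning a nonnegative cost c^ξ_e to every e ∈ E. Let x : E → [0,1] satisfy Σ_{e∈E_i} x_e ≥ 1 for every i ∈ {1,…,p}, and suppose for some L > 0 that Σ_{e∈E} c^ξ_e x_e ≤ L for every ξ ∈ U and c^ξ_e ≤ L for every ξ ∈ U and every e with x_e > 0. Then there exists X ⊆ E_1 ∪ … ∪ E_p with |X ∩ E_i| = 1 for every i such that Σ_{e∈X} c^ξ_e ≤ C · L · ln K / ln ln K for every ξ ∈ U. -/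
/-- Union bound for finite sums of nonnegative reals. -/
lemma stmt12_sum_biUnion_le {α β : Type*} [DecidableEq α] (B : Finset β)
    (t : β → Finset α) (w : α → ℝ) (hw : ∀ a, 0 ≤ w a) :
    ∑ a ∈ B.biUnion t, w a ≤ ∑ b ∈ B, ∑ a ∈ t b, w a := by
  classical
  induction B using Finset.induction_on with
  | empty => simp
  | insert _ _ hb ih =>
    rename_i b B
    rw [Finset.biUnion_insert, Finset.sum_insert hb]
    have h1 := Finset.sum_union_inter (s₁ := t b) (s₂ := B.biUnion t) (f := w)
    have h2 : 0 ≤ ∑ a ∈ t b ∩ B.biUnion t, w a :=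
      Finset.sum_nonneg fun a _ => hw a
    linarith [ih]

/-- Lemma 3 (and Lemma 5) of the paper: given pairwise disjoint subsets
`E 0, …, E (p-1)` of the ground set, each of fractional weight at least `1`,
and a fractional solution of max scenario cost `≤ L` with support costs `≤ L`,
one can pick exactly one element from each `E i` so that the chosen set has
scenario cost at most `C·L·ln K / ln ln K` under every scenario. -/
theorem stmt12 :
    ∃ C : ℝ, 0 < C ∧
      ∀ (ι : Type) [Fintype ι] [DecidableEq ι] (p K : ℕ)
        (E : Fin p → Finset ι) (c : Fin K → ι → ℝ) (x : ι → ℝ) (L : ℝ),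
        3 ≤ K →
        (∀ i j, i ≠ j → Disjoint (E i) (E j)) →
        (∀ ξ e, 0 ≤ c ξ e) →
        (∀ e, 0 ≤ x e ∧ x e ≤ 1) →
        (∀ i, 1 ≤ ∑ e ∈ E i, x e) →
        0 < L →
        (∀ ξ, ∑ e, c ξ e * x e ≤ L) →
        (∀ ξ e, 0 < x e → c ξ e ≤ L) →
        ∃ X : Finset ι, X ⊆ Finset.univ.biUnion E ∧
          (∀ i, (X ∩ E i).card = 1) ∧
          ∀ ξ, ∑ e ∈ X, c ξ e ≤ C * L * Real.log K / Real.log (Real.log K) := by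
  classical
  refine ⟨3, by norm_num, ?_⟩
  intro ι _ _ p K E c x L hK hdisj hc hx hE hL hsum hsupp
  -- basic numeric facts
  have hK3 : (3 : ℝ) ≤ (K : ℝ) := by exact_mod_cast hK
  have hK0 : (0 : ℝ) < K := by linarith
  set lgK : ℝ := Real.log K with hlgK_def
  have hlgK1 : 1 < lgK := by
    rw [hlgK_def, Real.lt_log_iff_exp_lt hK0]
    calc Real.exp 1 < 2.7182818286 := Real.exp_one_lt_d9
    _ < 3 := by norm_num
    _ ≤ K := hK3
  have hlgK0 : 0 < lgK := by linarith
  set lam : ℝ := Real.log lgK with hlam_def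
  have hlam0 : 0 < lam := Real.log_pos hlgK1
  have hexplam : Real.exp lam = lgK := Real.exp_log hlgK0
  set M : ℝ := 3 * L * lgK / lam with hM_def
  -- the probability space
  set S : Fin p → ℝ := fun i => ∑ e ∈ E i, x e with hS_def
  have hS1 : ∀ i, 1 ≤ S i := hE
  have hS0 : ∀ i, 0 < S i := fun i => lt_of_lt_of_le one_pos (hS1 i)
  set w : (Fin p → ι) → ℝ := fun f => ∏ i, x (f i) / S i with hw_def
  have hwnn : ∀ f, 0 ≤ w f := fun f =>
    Finset.prod_nonneg fun i _ => div_nonneg (hx (f i)).1 (hS0 i).le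
  set Ω : Finset (Fin p → ι) := Fintype.piFinset E with hΩ_def
  set Z : Fin K → (Fin p → ι) → ℝ := fun ξ f => ∑ i, c ξ (f i) with hZ_def
  -- total mass is 1
  have htotal : ∑ f ∈ Ω, w f = 1 := by
    rw [hΩ_def, hw_def, ← Finset.prod_univ_sum E (fun i e => x e / S i)]
    refine Finset.prod_eq_one fun i _ => ?_
    rw [← Finset.sum_div]
    exact div_self (hS0 i).ne'
  -- MGF bound for each scenario
  have hmgf : ∀ ξ, ∑ f ∈ Ω, w f * Real.exp (lam / L * Z ξ f) ≤ Real.exp lgK := by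
    intro ξ
    have hrw : ∀ f : Fin p → ι,
        w f * Real.exp (lam / L * Z ξ f)
          = ∏ i, (x (f i) / S i * Real.exp (lam / L * c ξ (f i))) := by
      intro f
      rw [hw_def, hZ_def]
      simp only [Finset.mul_sum, Real.exp_sum]
      rw [← Finset.prod_mul_distrib]
    simp only [hrw]
    rw [← Finset.prod_univ_sum E (fun i e => x e / S i * Real.exp (lam / L * c ξ e))]
    -- per-index bound
    set t : Fin p → ℝ := fun i => (∑ e ∈ E i, x e * c ξ e) / (S i * L) with ht_def
    have htnn : ∀ i, 0 ≤ t i := fun i =>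
      div_nonneg (Finset.sum_nonneg fun e _ => mul_nonneg (hx e).1 (hc ξ e))
        (mul_nonneg (hS0 i).le hL.le)
    have hfac : ∀ i, ∑ e ∈ E i, x e / S i * Real.exp (lam / L * c ξ e)
        ≤ Real.exp ((lgK - 1) * t i) := by
      intro i
      have hterm : ∀ e ∈ E i, x e / S i * Real.exp (lam / L * c ξ e)
          ≤ x e / S i * (1 + (lgK - 1) * (c ξ e / L)) := by
        intro e _
        rcases eq_or_lt_of_le (hx e).1 with h0 | h0
        · rw [← h0]; simp
        · have hcL : c ξ e ≤ L := hsupp ξ e h0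
          set y : ℝ := c ξ e / L with hy_def
          have hy0 : 0 ≤ y := div_nonneg (hc ξ e) hL.le
          have hy1 : y ≤ 1 := (div_le_one hL).2 hcL
          have harg : lam / L * c ξ e = (1 - y) * 0 + y * lam := by
            rw [hy_def]; field_simp; ring
          have hconv := convexOn_exp.2 (Set.mem_univ (0 : ℝ)) (Set.mem_univ lam)
            (by linarith : (0:ℝ) ≤ 1 - y) hy0 (by ring)
          simp only [smul_eq_mul] at hconv
          have hexp : Real.exp (lam / L * c ξ e) ≤ 1 + (lgK - 1) * y := by
            rw [harg]
            calc Real.exp ((1 - y) * 0 + y * lam)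
                ≤ (1 - y) * Real.exp 0 + y * Real.exp lam := hconv
              _ = 1 + (lgK - 1) * y := by rw [Real.exp_zero, hexplam]; ring
          have hxS : 0 ≤ x e / S i := div_nonneg (hx e).1 (hS0 i).le
          exact mul_le_mul_of_nonneg_left hexp hxS
      calc ∑ e ∈ E i, x e / S i * Real.exp (lam / L * c ξ e)
          ≤ ∑ e ∈ E i, x e / S i * (1 + (lgK - 1) * (c ξ e / L)) :=
            Finset.sum_le_sum hterm
        _ = 1 + (lgK - 1) * t i := by
            have : ∀ e ∈ E i, x e / S i * (1 + (lgK - 1) * (c ξ e / L))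
                = x e / S i + (lgK - 1) / (S i * L) * (x e * c ξ e) := by
              intro e _
              have hLne : L ≠ 0 := hL.ne'
              have hSne : S i ≠ 0 := (hS0 i).ne'
              field_simp
            rw [Finset.sum_congr rfl this, Finset.sum_add_distrib, ← Finset.sum_div,
              ← Finset.mul_sum, div_self (hS0 i).ne', ht_def]
            rw [div_mul_eq_mul_div, mul_div_assoc]
        _ ≤ Real.exp ((lgK - 1) * t i) := by
            have := Real.add_one_le_exp ((lgK - 1) * t i)
            linarith
    have hfacnn : ∀ i ∈ Finset.univ (α := Fin p),
        0 ≤ ∑ e ∈ E i, x e / S i * Real.exp (lam / L * c ξ e) := by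
      intro i _
      exact Finset.sum_nonneg fun e _ =>
        mul_nonneg (div_nonneg (hx e).1 (hS0 i).le) (Real.exp_pos _).le
    calc ∏ i, ∑ e ∈ E i, x e / S i * Real.exp (lam / L * c ξ e)
        ≤ ∏ i, Real.exp ((lgK - 1) * t i) :=
          Finset.prod_le_prod hfacnn fun i _ => hfac i
      _ = Real.exp ((lgK - 1) * ∑ i, t i) := by
          rw [← Real.exp_sum, Finset.mul_sum]
      _ ≤ Real.exp lgK := by
          apply Real.exp_le_exp.2
          have hTsum : ∑ i, t i ≤ 1 := by
            have h1 : ∀ i, t i ≤ (∑ e ∈ E i, x e * c ξ e) / L := by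
              intro i
              apply div_le_div_of_nonneg_left
                (Finset.sum_nonneg fun e _ => mul_nonneg (hx e).1 (hc ξ e)) hL
              · calc L = 1 * L := (one_mul L).symm
                  _ ≤ S i * L := by
                    exact mul_le_mul_of_nonneg_right (hS1 i) hL.le
            calc ∑ i, t i ≤ ∑ i, (∑ e ∈ E i, x e * c ξ e) / L :=
                  Finset.sum_le_sum fun i _ => h1 i
              _ = (∑ i, ∑ e ∈ E i, x e * c ξ e) / L := by rw [Finset.sum_div]
              _ ≤ 1 := by
                  rw [div_le_one hL]
                  have hdisj' : (↑(Finset.univ : Finset (Fin p)) : Set (Fin p)).PairwiseDisjoint E :=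
                    fun i _ j _ hij => hdisj i j hij
                  calc ∑ i, ∑ e ∈ E i, x e * c ξ e
                      = ∑ e ∈ Finset.univ.biUnion E, x e * c ξ e :=
                        (Finset.sum_biUnion hdisj').symm
                    _ ≤ ∑ e, x e * c ξ e :=
                        Finset.sum_le_sum_of_subset_of_nonneg
                          (Finset.subset_univ _)
                          (fun e _ _ => mul_nonneg (hx e).1 (hc ξ e))
                    _ = ∑ e, c ξ e * x e := by
                        exact Finset.sum_congr rfl fun e _ => mul_comm _ _
                    _ ≤ L := hsum ξ
          nlinarith [hTsum, htnn]
  -- Markov bound for each scenario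
  have hmarkov : ∀ ξ, ∑ f ∈ Ω.filter (fun f => M < Z ξ f), w f
      ≤ Real.exp (lgK - lam * M / L) := by
    intro ξ
    have hstep : ∀ f ∈ Ω.filter (fun f => M < Z ξ f),
        w f ≤ Real.exp (-(lam * M / L)) * (w f * Real.exp (lam / L * Z ξ f)) := by
      intro f hf
      rw [Finset.mem_filter] at hf
      have hZM : M < Z ξ f := hf.2
      have h1 : (1 : ℝ) ≤ Real.exp (lam / L * (Z ξ f - M)) := by
        rw [← Real.exp_zero]
        apply Real.exp_le_exp.2
        have : 0 < lam / L := div_pos hlam0 hL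
        nlinarith
      calc w f = w f * 1 := (mul_one _).symm
        _ ≤ w f * Real.exp (lam / L * (Z ξ f - M)) :=
            mul_le_mul_of_nonneg_left h1 (hwnn f)
        _ = Real.exp (-(lam * M / L)) * (w f * Real.exp (lam / L * Z ξ f)) := by
            have harg : lam / L * (Z ξ f - M) = -(lam * M / L) + lam / L * Z ξ f := by
              ring
            rw [harg, Real.exp_add]
            ring
    calc ∑ f ∈ Ω.filter (fun f => M < Z ξ f), w f
        ≤ ∑ f ∈ Ω.filter (fun f => M < Z ξ f),
            Real.exp (-(lam * M / L)) * (w f * Real.exp (lam / L * Z ξ f)) :=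
          Finset.sum_le_sum hstep
      _ = Real.exp (-(lam * M / L)) *
            ∑ f ∈ Ω.filter (fun f => M < Z ξ f), w f * Real.exp (lam / L * Z ξ f) := by
          rw [Finset.mul_sum]
      _ ≤ Real.exp (-(lam * M / L)) * ∑ f ∈ Ω, w f * Real.exp (lam / L * Z ξ f) := by
          apply mul_le_mul_of_nonneg_left _ (Real.exp_pos _).le
          apply Finset.sum_le_sum_of_subset_of_nonneg (Finset.filter_subset _ _)
          intro f _ _
          exact mul_nonneg (hwnn f) (Real.exp_pos _).le
      _ ≤ Real.exp (-(lam * M / L)) * Real.exp lgK :=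
          mul_le_mul_of_nonneg_left (hmgf ξ) (Real.exp_pos _).le
      _ = Real.exp (lgK - lam * M / L) := by
          rw [← Real.exp_add]; ring_nf
  -- the exponent evaluates nicely
  have hMval : lam * M / L = 3 * lgK := by
    rw [hM_def]
    field_simp
  have hbadξ : ∀ ξ : Fin K, ∑ f ∈ Ω.filter (fun f => M < Z ξ f), w f
      ≤ Real.exp (-(2 * lgK)) := by
    intro ξ
    calc ∑ f ∈ Ω.filter (fun f => M < Z ξ f), w f
        ≤ Real.exp (lgK - lam * M / L) := hmarkov ξ
      _ = Real.exp (-(2 * lgK)) := by rw [hMval]; ring_nf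
  -- union bound: total bad mass < 1
  have hexpval : Real.exp (-(2 * lgK)) = 1 / (K : ℝ) ^ 2 := by
    rw [show -(2 * lgK) = -(lgK + lgK) by ring, Real.exp_neg, Real.exp_add,
      Real.exp_log hK0]
    rw [one_div]
    congr 1
    ring
  have hbadtotal : ∑ f ∈ Ω.filter (fun f => ¬ ∀ ξ, Z ξ f ≤ M), w f ≤ 1 / 3 := by
    have hsub : Ω.filter (fun f => ¬ ∀ ξ, Z ξ f ≤ M)
        ⊆ (Finset.univ : Finset (Fin K)).biUnion
            (fun ξ => Ω.filter (fun f => M < Z ξ f)) := by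
      intro f hf
      rw [Finset.mem_filter] at hf
      push_neg at hf
      obtain ⟨hfΩ, ξ, hξ⟩ := hf
      rw [Finset.mem_biUnion]
      exact ⟨ξ, Finset.mem_univ ξ, Finset.mem_filter.2 ⟨hfΩ, hξ⟩⟩
    calc ∑ f ∈ Ω.filter (fun f => ¬ ∀ ξ, Z ξ f ≤ M), w f
        ≤ ∑ f ∈ (Finset.univ : Finset (Fin K)).biUnion
            (fun ξ => Ω.filter (fun f => M < Z ξ f)), w f :=
          Finset.sum_le_sum_of_subset_of_nonneg hsub (fun f _ _ => hwnn f)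
      _ ≤ ∑ ξ : Fin K, ∑ f ∈ Ω.filter (fun f => M < Z ξ f), w f :=
          stmt12_sum_biUnion_le _ _ _ hwnn
      _ ≤ ∑ _ξ : Fin K, Real.exp (-(2 * lgK)) :=
          Finset.sum_le_sum fun ξ _ => hbadξ ξ
      _ = (K : ℝ) * (1 / (K : ℝ) ^ 2) := by
          rw [Finset.sum_const, Finset.card_univ, Fintype.card_fin, hexpval,
            nsmul_eq_mul]
      _ ≤ 1 / 3 := by
          have hKne : (K : ℝ) ≠ 0 := hK0.ne'
          have h : (K : ℝ) * (1 / (K : ℝ) ^ 2) = 1 / (K : ℝ) := by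
            field_simp
          rw [h]
          exact one_div_le_one_div_of_le (by norm_num) hK3
  -- find a good outcome
  have hgood : ∃ f ∈ Ω, ∀ ξ, Z ξ f ≤ M := by
    by_contra hcon
    push_neg at hcon
    have : Ω.filter (fun f => ¬ ∀ ξ, Z ξ f ≤ M) = Ω := by
      apply Finset.filter_true_of_mem
      intro f hf
      push_neg
      exact hcon f hf
    rw [this, htotal] at hbadtotal
    norm_num at hbadtotal
  obtain ⟨f, hfΩ, hfgood⟩ := hgood
  have hfE : ∀ i, f i ∈ E i := by
    rw [hΩ_def, Fintype.mem_piFinset] at hfΩ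
    exact hfΩ
  -- f is injective
  have hfinj : Function.Injective f := by
    intro i j hij
    by_contra hne
    exact (Finset.disjoint_left.1 (hdisj i j hne)) (hfE i) (by rw [hij]; exact hfE j)
  refine ⟨Finset.univ.image f, ?_, ?_, ?_⟩
  · intro e he
    rw [Finset.mem_image] at he
    obtain ⟨i, _, rfl⟩ := he
    exact Finset.mem_biUnion.2 ⟨i, Finset.mem_univ i, hfE i⟩
  · intro i
    have : Finset.univ.image f ∩ E i = {f i} := by
      ext e
      simp only [Finset.mem_inter, Finset.mem_image, Finset.mem_singleton]
      constructor
      · rintro ⟨⟨j, _, rfl⟩, hei⟩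
        by_contra hne
        have hji : j ≠ i := by
          intro h; exact hne (by rw [h])
        exact (Finset.disjoint_left.1 (hdisj j i hji)) (hfE j) hei
      · rintro rfl
        exact ⟨⟨i, Finset.mem_univ i, rfl⟩, hfE i⟩
    rw [this, Finset.card_singleton]
  · intro ξ
    have hsum_img : ∑ e ∈ Finset.univ.image f, c ξ e = ∑ i, c ξ (f i) :=
      Finset.sum_image fun i _ j _ h => hfinj h
    rw [hsum_img]
    calc ∑ i, c ξ (f i) = Z ξ f := by rw [hZ_def]
      _ ≤ M := hfgood ξ
      _ = 3 * L * Real.log K / Real.log (Real.log K) := by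
          rw [hM_def, hlam_def, hlgK_def]
end

section
/- Let G = (V,E) be a finite simple graph and F ⊆ E an acyclic set of edges whose spanning subgraph (V,F) has connected components C_1, …, C_q. Let I ⊆ {1,…,q} be such that no edge of G has one endpoint in C_i and the other in C_j for distinct i, j ∈ I. For each i ∈ I let e_i ∈ E be an edge with exactly one endpoint in C_i. Then the edges e_i, i ∈ I, are pairwise distinct, the edge set F ∪ {e_i : i ∈ I} is acyclic, and the spanning subgraph (V, F ∪ {e_i : i ∈ I}) has exactly q − |I| connected components. -/
open SimpleGraph

private lemma card_subtype_ne_add_one {α : Type} [Finite α] (a : α) :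
    Nat.card {b : α // b ≠ a} + 1 = Nat.card α := by
  classical
  haveI : Fintype α := Fintype.ofFinite α
  have : Nat.card (Option {b : α // b ≠ a}) = Nat.card α :=
    Nat.card_congr (Equiv.optionSubtypeNe a)
  rwa [Nat.card_eq_fintype_card (α := Option _), Fintype.card_option,
    ← Nat.card_eq_fintype_card] at this

/-- Reachability in a graph plus one extra edge. -/
private lemma walk_reach_sup {V : Type} {H : SimpleGraph V} {a b : V} :
    ∀ {x y : V}, (H ⊔ fromEdgeSet {s(a, b)}).Walk x y →
      H.Reachable x y ∨ (H.Reachable x a ∧ H.Reachable b y) ∨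
        (H.Reachable x b ∧ H.Reachable a y) := by
  intro x y w
  induction w with
  | nil => exact Or.inl (Reachable.refl _)
  | @cons u v' w' h p ih =>
    rcases (sup_adj _ _ _ _).mp h with h' | h'
    · rcases ih with hr | ⟨h1, h2⟩ | ⟨h1, h2⟩
      · exact Or.inl (h'.reachable.trans hr)
      · exact Or.inr (Or.inl ⟨h'.reachable.trans h1, h2⟩)
      · exact Or.inr (Or.inr ⟨h'.reachable.trans h1, h2⟩)
    · rw [fromEdgeSet_adj, Set.mem_singleton_iff] at h'
      rcases Sym2.eq_iff.mp h'.1 with ⟨rfl, rfl⟩ | ⟨rfl, rfl⟩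
      · rcases ih with hr | ⟨h1, h2⟩ | ⟨h1, h2⟩
        · exact Or.inr (Or.inl ⟨Reachable.refl _, hr⟩)
        · exact Or.inr (Or.inl ⟨Reachable.refl _, h2⟩)
        · exact Or.inl h2
      · rcases ih with hr | ⟨h1, h2⟩ | ⟨h1, h2⟩
        · exact Or.inr (Or.inr ⟨Reachable.refl _, hr⟩)
        · exact Or.inl h2
        · exact Or.inr (Or.inr ⟨Reachable.refl _, h2⟩)

/-- A set closed under adjacency absorbs walks. -/
private lemma walk_confined {V : Type} {H : SimpleGraph V} {S : Set V}
    (hS : ∀ ⦃x y : V⦄, x ∈ S → H.Adj x y → y ∈ S) :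
    ∀ {x y : V}, x ∈ S → H.Walk x y → y ∈ S := by
  intro x y hx w
  induction w with
  | nil => exact hx
  | cons h p ih => exact ih (hS hx h)

/-- Adding one edge between two distinct components of an acyclic graph. -/
private lemma step_lemma {V : Type} [Fintype V] {E : Set (Sym2 V)} {a b : V}
    (hacyc : (fromEdgeSet E).IsAcyclic)
    (hne : (fromEdgeSet E).connectedComponentMk a ≠
      (fromEdgeSet E).connectedComponentMk b) :
    (fromEdgeSet (E ∪ {s(a, b)})).IsAcyclic ∧
    Nat.card (fromEdgeSet (E ∪ {s(a, b)})).ConnectedComponent + 1 =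
      Nat.card (fromEdgeSet E).ConnectedComponent := by
  classical
  set H := fromEdgeSet E with hH
  set H' := fromEdgeSet (E ∪ {s(a, b)}) with hH'
  have hab : a ≠ b := by
    rintro rfl; exact hne rfl
  have habE : s(a, b) ∉ E := by
    intro hmem
    exact hne (ConnectedComponent.sound
      ((fromEdgeSet_adj _).mpr ⟨hmem, hab⟩ : H.Adj a b).reachable)
  have hsup : H' = H ⊔ fromEdgeSet {s(a, b)} := by
    rw [hH', hH, fromEdgeSet_union]
  have hle : H ≤ H' := by rw [hsup]; exact le_sup_left
  have hdel : H' \ fromEdgeSet {s(a, b)} = H := by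
    ext x y
    simp only [sdiff_adj, hH', hH, fromEdgeSet_adj, Set.mem_union, Set.mem_singleton_iff,
      not_and, not_ne_iff]
    constructor
    · rintro ⟨⟨hF | hab', hne'⟩, himp⟩
      · exact ⟨hF, hne'⟩
      · exact absurd (himp hab') hne'
    · rintro ⟨hF, hne'⟩
      exact ⟨⟨Or.inl hF, hne'⟩, fun h => absurd (h ▸ hF) habE⟩
  -- acyclicity
  have hacyc' : H'.IsAcyclic := by
    intro v c hc
    by_cases hmem : s(a, b) ∈ c.edges
    · have : H'.Adj a b ∧ (H' \ fromEdgeSet {s(a, b)}).Reachable a b :=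
        (adj_and_reachable_delete_edges_iff_exists_cycle).mpr ⟨v, c, hc, hmem⟩
      rw [hdel] at this
      exact hne (ConnectedComponent.sound this.2)
    · have hedges : ∀ e ∈ c.edges, e ∈ H.edgeSet := by
        intro e he
        have h1 : e ∈ H'.edgeSet := c.edges_subset_edgeSet he
        rw [hH', edgeSet_fromEdgeSet] at h1
        rw [hH, edgeSet_fromEdgeSet]
        rcases h1 with ⟨h1, h2⟩
        rcases h1 with h1 | h1
        · exact ⟨h1, h2⟩
        · exact absurd (h1 ▸ he) hmem
      exact hacyc (c.transfer H hedges) (hc.transfer hedges)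
  refine ⟨hacyc', ?_⟩
  -- counting
  let f : H.ConnectedComponent → H'.ConnectedComponent :=
    ConnectedComponent.map (Hom.ofLE hle)
  have hfmk : ∀ x : V, f (H.connectedComponentMk x) = H'.connectedComponentMk x :=
    fun x => rfl
  have key : ∀ c d : H.ConnectedComponent, f c = f d →
      c = d ∨ (c = H.connectedComponentMk a ∧ d = H.connectedComponentMk b) ∨
        (c = H.connectedComponentMk b ∧ d = H.connectedComponentMk a) := by
    intro c d
    refine ConnectedComponent.ind₂ (fun x y hf => ?_) c d
    rw [hfmk, hfmk] at hf
    have hreach : H'.Reachable x y := ConnectedComponent.exact hf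
    obtain ⟨w⟩ := hreach
    rw [hsup] at w
    rcases walk_reach_sup w with hr | ⟨h1, h2⟩ | ⟨h1, h2⟩
    · exact Or.inl (ConnectedComponent.sound hr)
    · exact Or.inr (Or.inl ⟨ConnectedComponent.sound h1,
        (ConnectedComponent.sound h2).symm⟩)
    · exact Or.inr (Or.inr ⟨ConnectedComponent.sound h1,
        (ConnectedComponent.sound h2).symm⟩)
  have hfab : f (H.connectedComponentMk a) = f (H.connectedComponentMk b) := by
    rw [hfmk, hfmk]
    exact ConnectedComponent.sound
      ((fromEdgeSet_adj _).mpr ⟨Or.inr rfl, hab⟩ : H'.Adj a b).reachable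
  let g : {c : H.ConnectedComponent // c ≠ H.connectedComponentMk b} →
      H'.ConnectedComponent := fun c => f c.1
  have hg : Function.Bijective g := by
    constructor
    · rintro ⟨c, hc⟩ ⟨d, hd⟩ hcd
      rcases key c d hcd with h | ⟨h1, h2⟩ | ⟨h1, h2⟩
      · exact Subtype.ext h
      · exact absurd h2 hd
      · exact absurd h1 hc
    · intro d'
      refine ConnectedComponent.ind (fun x => ?_) d'
      by_cases hx : H.connectedComponentMk x = H.connectedComponentMk b
      · refine ⟨⟨H.connectedComponentMk a, hne⟩, ?_⟩
        show f (H.connectedComponentMk a) = H'.connectedComponentMk x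
        rw [hfab, ← hx, hfmk]
      · exact ⟨⟨H.connectedComponentMk x, hx⟩, hfmk x⟩
  have := Nat.card_eq_of_bijective g hg
  rw [← this, card_subtype_ne_add_one]

/-- Correctness of one round of the deterministic min-max spanning tree
algorithm: if `F` is an acyclic set of edges of `G`, `I` an "independent" set
of connected components of `(V,F)` (no edge of `G` joins two distinct
components of `I`), and for each `i ∈ I` the pair `e i` is an edge of `G` with
exactly one endpoint in the component `i`, then the chosen edges are pairwise
distinct, `F` together with them is still acyclic, and the number of connected
components drops by exactly `|I|`. -/
theorem stmt14 {V : Type} [Fintype V] [DecidableEq V] (G : SimpleGraph V)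
    (F : Finset (Sym2 V)) (hFG : ↑F ⊆ G.edgeSet)
    (hacyc : (fromEdgeSet (↑F : Set (Sym2 V))).IsAcyclic)
    (I : Finset ((fromEdgeSet (↑F : Set (Sym2 V))).ConnectedComponent))
    (e : (fromEdgeSet (↑F : Set (Sym2 V))).ConnectedComponent → V × V)
    (hadj : ∀ i ∈ I, G.Adj (e i).1 (e i).2)
    (hin : ∀ i ∈ I,
      (fromEdgeSet (↑F : Set (Sym2 V))).connectedComponentMk (e i).1 = i)
    (hout : ∀ i ∈ I,
      (fromEdgeSet (↑F : Set (Sym2 V))).connectedComponentMk (e i).2 ≠ i)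
    (hind : ∀ i ∈ I, ∀ j ∈ I, i ≠ j → ∀ a b : V,
      (fromEdgeSet (↑F : Set (Sym2 V))).connectedComponentMk a = i →
      (fromEdgeSet (↑F : Set (Sym2 V))).connectedComponentMk b = j →
      ¬ G.Adj a b) :
    (∀ i ∈ I, ∀ j ∈ I, i ≠ j →
      s((e i).1, (e i).2) ≠ s((e j).1, (e j).2)) ∧
    (fromEdgeSet ((↑F : Set (Sym2 V)) ∪
      (fun i => s((e i).1, (e i).2)) '' ↑I)).IsAcyclic ∧
    Nat.card ((fromEdgeSet ((↑F : Set (Sym2 V)) ∪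
        (fun i => s((e i).1, (e i).2)) '' ↑I)).ConnectedComponent) + I.card =
      Nat.card ((fromEdgeSet (↑F : Set (Sym2 V))).ConnectedComponent) := by
  classical
  -- distinctness
  have hdist : ∀ i ∈ I, ∀ j ∈ I, i ≠ j →
      s((e i).1, (e i).2) ≠ s((e j).1, (e j).2) := by
    intro i hi j hj hij heq
    rcases Sym2.eq_iff.mp heq with ⟨h1, h2⟩ | ⟨h1, h2⟩
    · exact hij ((hin i hi).symm.trans (h1 ▸ hin j hj))
    · have hb : (fromEdgeSet (↑F : Set (Sym2 V))).connectedComponentMk (e i).2 = j :=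
        h2 ▸ hin j hj
      exact hind i hi j hj hij (e i).1 (e i).2 (hin i hi) hb (hadj i hi)
  refine ⟨hdist, ?_⟩
  -- the main induction
  have main : ∀ S : Finset ((fromEdgeSet (↑F : Set (Sym2 V))).ConnectedComponent), S ⊆ I →
      (fromEdgeSet ((↑F : Set (Sym2 V)) ∪
        (fun i => s((e i).1, (e i).2)) '' ↑S)).IsAcyclic ∧
      Nat.card ((fromEdgeSet ((↑F : Set (Sym2 V)) ∪
        (fun i => s((e i).1, (e i).2)) '' ↑S)).ConnectedComponent) + S.card =
      Nat.card ((fromEdgeSet (↑F : Set (Sym2 V))).ConnectedComponent) := by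
    intro S
    induction S using Finset.induction_on with
    | empty =>
      intro _
      simp only [Finset.coe_empty, Set.image_empty, Set.union_empty, Finset.card_empty,
        Nat.add_zero]
      exact ⟨hacyc, trivial⟩
    | @insert i S' hiS' ih =>
      intro hsub
      have hiI : i ∈ I := hsub (Finset.mem_insert_self i S')
      have hS'I : S' ⊆ I := fun x hx => hsub (Finset.mem_insert_of_mem hx)
      obtain ⟨hac', hcard'⟩ := ih hS'I
      set T : Set (Sym2 V) := (fun i => s((e i).1, (e i).2)) '' ↑S' with hT
      -- the new edge joins two distinct components of the current graph
      have hclosed : ∀ ⦃x y : V⦄,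
          x ∈ {v : V | (fromEdgeSet (↑F : Set (Sym2 V))).connectedComponentMk v = i} →
          (fromEdgeSet ((↑F : Set (Sym2 V)) ∪ T)).Adj x y →
          y ∈ {v : V | (fromEdgeSet (↑F : Set (Sym2 V))).connectedComponentMk v = i} := by
        intro x y hx hxy
        rw [fromEdgeSet_adj] at hxy
        rcases hxy.1 with hF | hT'
        · have : (fromEdgeSet (↑F : Set (Sym2 V))).Adj x y :=
            (fromEdgeSet_adj _).mpr ⟨hF, hxy.2⟩
          exact (ConnectedComponent.sound this.reachable).symm.trans hx
        · exfalso
          obtain ⟨j, hjS', hj⟩ := hT'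
          have hjI : j ∈ I := hS'I hjS'
          have hji : j ≠ i := fun h => hiS' (h ▸ hjS')
          have hj2 : (fromEdgeSet (↑F : Set (Sym2 V))).connectedComponentMk (e j).2 ≠ i := by
            intro hj2
            exact hind j hjI i hiI hji (e j).1 (e j).2 (hin j hjI) hj2 (hadj j hjI)
          have hx1 : x = (e j).1 ∨ x = (e j).2 := by
            rcases Sym2.eq_iff.mp hj with ⟨h1, h2⟩ | ⟨h1, h2⟩
            · exact Or.inl h1.symm
            · exact Or.inr h2.symm
          rcases hx1 with rfl | rfl
          · exact hji ((hin j hjI).symm.trans hx)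
          · exact hj2 hx
      have hne : (fromEdgeSet ((↑F : Set (Sym2 V)) ∪ T)).connectedComponentMk (e i).1 ≠
          (fromEdgeSet ((↑F : Set (Sym2 V)) ∪ T)).connectedComponentMk (e i).2 := by
        intro heq
        obtain ⟨w⟩ := ConnectedComponent.exact heq
        exact hout i hiI (walk_confined hclosed (hin i hiI) w)
      obtain ⟨hac2, hcard2⟩ := step_lemma (E := (↑F : Set (Sym2 V)) ∪ T) hac' hne
      have hset : (↑F : Set (Sym2 V)) ∪ (fun i => s((e i).1, (e i).2)) '' ↑(insert i S') =
          ((↑F : Set (Sym2 V)) ∪ T) ∪ {s((e i).1, (e i).2)} := by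
        rw [Finset.coe_insert, Set.image_insert_eq, hT]
        ext z
        simp only [Set.mem_union, Set.mem_insert_iff, Set.mem_singleton_iff]
        tauto
      rw [hset, Finset.card_insert_of_notMem hiS']
      exact ⟨hac2, by omega⟩
  exact main I (Finset.Subset.refl I)
end

section
/- Let n ≥ 2 and K ≥ 1 be integers, E a finite set, and for each scenario ξ in a set U of size K let c^ξ : E → [0,1] be costs. Let x : E → [0,1] satisfy Σ_{e∈E} c^ξ_e x_e ≤ 1 for every ξ ∈ U, and let k̂ be an integer with k̂ > ln(2n²K). Let (X_e)_{e∈E} be independent Bernoulli random variables with P(X_e = 1) = 1 − (1 − x_e)^{k̂}. Then for every ξ ∈ U, P( Σ_{e∈E} c^ξ_e X_e > k̂ + (e − 1)·√(k̂ · ln(2n²K)) ) < 1/(2n²K), where e is Euler's number. -/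
open MeasureTheory

lemma aux_exp_lt {t : ℝ} (h0 : 0 < t) (h1 : t < 1) :
    Real.exp t < 1 + t + (Real.exp 1 - 2) * t ^ 2 := by
  have hexp : ∀ u : ℝ, Real.exp u = (1 + u) + ∑' n : ℕ, u ^ (n + 2) / (Nat.factorial (n + 2) : ℝ) := by
    intro u
    have hs := Real.summable_pow_div_factorial u
    have h2 := Summable.sum_add_tsum_nat_add (f := fun n => u ^ n / (Nat.factorial n : ℝ)) 2 hs
    rw [Real.exp_eq_exp_ℝ, NormedSpace.exp_eq_tsum_div]
    simp only at h2 ⊢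
    rw [← h2]
    simp [Finset.sum_range_succ, Nat.factorial]
  have hsum1 : Summable (fun n : ℕ => (1:ℝ) ^ (n + 2) / (Nat.factorial (n + 2) : ℝ)) :=
    (summable_nat_add_iff 2).mpr (Real.summable_pow_div_factorial 1)
  have he1 : Real.exp 1 - 2 = ∑' n : ℕ, (1:ℝ) ^ (n + 2) / (Nat.factorial (n + 2) : ℝ) := by
    rw [hexp 1]; ring
  have hkey : ∑' n : ℕ, t ^ (n + 2) / (Nat.factorial (n + 2) : ℝ) <
      ∑' n : ℕ, ((1:ℝ) ^ (n + 2) / (Nat.factorial (n + 2) : ℝ)) * t ^ 2 := by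
    refine Summable.tsum_lt_tsum_of_nonneg (i := 1) ?_ ?_ ?_ (hsum1.mul_right _)
    · intro n; positivity
    · intro n
      rw [one_pow, div_mul_eq_mul_div, one_mul]
      have : t ^ (n + 2) ≤ t ^ 2 := pow_le_pow_of_le_one h0.le h1.le (by omega)
      gcongr
    · show t ^ (1 + 2) / (Nat.factorial (1 + 2) : ℝ) < (1:ℝ) ^ (1 + 2) / (Nat.factorial (1 + 2) : ℝ) * t ^ 2
      norm_num [Nat.factorial]
      nlinarith [mul_pos h0 h0]
  calc Real.exp t = (1 + t) + ∑' n : ℕ, t ^ (n + 2) / (Nat.factorial (n + 2) : ℝ) := hexp t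
    _ < (1 + t) + ∑' n : ℕ, ((1:ℝ) ^ (n + 2) / (Nat.factorial (n + 2) : ℝ)) * t ^ 2 := by linarith
    _ = 1 + t + (Real.exp 1 - 2) * t ^ 2 := by
        rw [tsum_mul_right, ← he1]

lemma aux_exp_mul_le {d t : ℝ} (hd0 : 0 ≤ d) (hd1 : d ≤ 1) (ht : 0 ≤ t) :
    Real.exp (t * d) ≤ 1 + d * (Real.exp t - 1) := by
  have h := convexOn_exp.2 (Set.mem_univ t) (Set.mem_univ (0:ℝ)) hd0
    (show (0:ℝ) ≤ 1 - d by linarith) (show d + (1 - d) = 1 by ring)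
  simp only [smul_eq_mul, mul_zero, add_zero, Real.exp_zero] at h
  have : t * d = d * t := by ring
  rw [this]
  calc Real.exp (d * t) ≤ d * Real.exp t + (1 - d) * 1 := h
    _ = 1 + d * (Real.exp t - 1) := by ring

/-- Lemma 7 of the paper (with the fractional optimum normalized to `L* = 1`
and all costs in `[0,1]`): if each element `e` is kept independently with
probability `1 - (1 - x e)^k̂` (at least one of `k̂` flips of an `x e`-biased
coin is heads), where `k̂ > ln(2n²K)` and `Σ_e c^ξ_e x_e ≤ 1` for every
scenario, then for each scenario the probability that the total cost of kept
elements exceeds `k̂ + (e-1)·√(k̂·ln(2n²K))` is less than `1/(2n²K)`. -/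
theorem stmt17 {Ω : Type} [MeasurableSpace Ω] (μ : Measure Ω)
    [IsProbabilityMeasure μ]
    {ι : Type} [Fintype ι] (n K : ℕ) (hn : 2 ≤ n) (hK : 1 ≤ K)
    (c : Fin K → ι → ℝ) (hc : ∀ ξ e, 0 ≤ c ξ e ∧ c ξ e ≤ 1)
    (x : ι → ℝ) (hx : ∀ e, 0 ≤ x e ∧ x e ≤ 1)
    (hfrac : ∀ ξ, ∑ e, c ξ e * x e ≤ 1)
    (khat : ℕ) (hkhat : Real.log (2 * n ^ 2 * K) < khat)
    (X : ι → Ω → ℝ) (hmeas : ∀ e, Measurable (X e))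
    (hval : ∀ e ω, X e ω = 0 ∨ X e ω = 1)
    (hp : ∀ e, μ {ω | X e ω = 1} = ENNReal.ofReal (1 - (1 - x e) ^ khat))
    (hindep : ProbabilityTheory.iIndepFun X μ) :
    ∀ ξ, μ {ω | (khat : ℝ) + (Real.exp 1 - 1) *
        Real.sqrt (khat * Real.log (2 * n ^ 2 * K)) <
        ∑ e, c ξ e * X e ω} <
      ENNReal.ofReal (1 / (2 * n ^ 2 * K)) := by
  intro ξ
  classical
  open ProbabilityTheory in
  set M : ℝ := 2 * (n:ℝ) ^ 2 * (K:ℝ) with hMdef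
  have hn2 : (2:ℝ) ≤ n := by exact_mod_cast hn
  have hK1 : (1:ℝ) ≤ K := by exact_mod_cast hK
  have hM8 : (8:ℝ) ≤ M := by nlinarith
  have hM1 : (1:ℝ) < M := by linarith
  have hM0 : (0:ℝ) < M := by linarith
  set L := Real.log M with hLdef
  have hL0 : 0 < L := Real.log_pos hM1
  have hLk : L < (khat:ℝ) := hkhat
  have hk0 : (0:ℝ) < khat := hL0.trans hLk
  set t := Real.sqrt (L / khat) with htdef
  have ht0 : 0 < t := Real.sqrt_pos.2 (div_pos hL0 hk0)
  have ht2 : t ^ 2 = L / khat := Real.sq_sqrt (le_of_lt (div_pos hL0 hk0))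
  have ht1 : t < 1 := by
    have h' : t ^ 2 < 1 := by rw [ht2]; exact (div_lt_one hk0).2 hLk
    nlinarith
  set Y : ι → Ω → ℝ := fun e ω => c ξ e * X e ω with hYdef
  have hmeasY : ∀ e, Measurable (Y e) := fun e => (hmeas e).const_mul _
  have hindepY : ProbabilityTheory.iIndepFun Y μ :=
    hindep.comp (fun e r => c ξ e * r) (fun e => measurable_id.const_mul _)
  set p : ι → ℝ := fun e => 1 - (1 - x e) ^ khat with hpdef
  have hp0 : ∀ e, 0 ≤ p e := by
    intro e
    have h1 : (1 - x e) ^ khat ≤ 1 :=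
      pow_le_one₀ (by linarith [(hx e).2]) (by linarith [(hx e).1])
    simp only [hpdef]; linarith
  have hpk : ∀ e, p e ≤ (khat:ℝ) * x e := by
    intro e
    have hb := one_add_mul_le_pow (a := -(x e)) (by linarith [(hx e).2]) khat
    have : (1:ℝ) + (khat:ℝ) * (-(x e)) ≤ (1 - x e) ^ khat := by
      rw [sub_eq_add_neg]; exact hb
    simp only [hpdef]; linarith
  have hsm : ∀ e, MeasurableSet {ω | X e ω = 1} := fun e =>
    (hmeas e) (measurableSet_singleton 1)
  have hXeq : ∀ e, X e = Set.indicator {ω | X e ω = 1} (1 : Ω → ℝ) := by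
    intro e; funext ω
    rcases hval e ω with h | h
    · have hnm : ω ∉ {ω | X e ω = 1} := by
        simp only [Set.mem_setOf_eq, h]; norm_num
      rw [Set.indicator_of_notMem hnm, h]
    · have hm : ω ∈ {ω | X e ω = 1} := h
      rw [Set.indicator_of_mem hm, h]; rfl
  have hXint : ∀ e, Integrable (X e) μ := by
    intro e; rw [hXeq e]; exact (integrable_const 1).indicator (hsm e)
  have hXintegral : ∀ e, ∫ ω, X e ω ∂μ = p e := by
    intro e
    rw [hXeq e]
    rw [integral_indicator_one (hsm e), measureReal_def, hp e, ENNReal.toReal_ofReal (hp0 e)]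
  have hexpY : ∀ e ω, Real.exp (t * Y e ω) = 1 + (Real.exp (t * c ξ e) - 1) * X e ω := by
    intro e ω
    rcases hval e ω with h | h
    · simp only [hYdef, h, mul_zero, Real.exp_zero, add_zero]
    · simp only [hYdef, h, mul_one]
      ring
  have hintexpY : ∀ e, Integrable (fun ω => Real.exp (t * Y e ω)) μ := by
    intro e
    have heq : (fun ω => Real.exp (t * Y e ω)) =
        fun ω => 1 + (Real.exp (t * c ξ e) - 1) * X e ω := funext (hexpY e)
    rw [heq]
    exact (integrable_const 1).add ((hXint e).const_mul _)
  have hmgfY : ∀ e, ProbabilityTheory.mgf (Y e) μ t = 1 + (Real.exp (t * c ξ e) - 1) * p e := by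
    intro e
    have heq : (fun ω => Real.exp (t * Y e ω)) =
        fun ω => 1 + (Real.exp (t * c ξ e) - 1) * X e ω := funext (hexpY e)
    rw [ProbabilityTheory.mgf, heq]
    rw [integral_add (integrable_const 1) ((hXint e).const_mul _), integral_const,
      integral_const_mul, hXintegral e]
    simp [measure_univ]
  have hq0 : 0 ≤ Real.exp t - 1 := by
    have := Real.add_one_le_exp t; linarith
  have hmgfle : ∀ e, ProbabilityTheory.mgf (Y e) μ t ≤
      Real.exp ((Real.exp t - 1) * (c ξ e * p e)) := by
    intro e
    rw [hmgfY e]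
    have hcv := aux_exp_mul_le (hc ξ e).1 (hc ξ e).2 ht0.le
    have h1 : (Real.exp (t * c ξ e) - 1) * p e ≤ (Real.exp t - 1) * (c ξ e * p e) := by
      have h2 : Real.exp (t * c ξ e) - 1 ≤ c ξ e * (Real.exp t - 1) := by linarith
      calc (Real.exp (t * c ξ e) - 1) * p e ≤ (c ξ e * (Real.exp t - 1)) * p e :=
            mul_le_mul_of_nonneg_right h2 (hp0 e)
        _ = (Real.exp t - 1) * (c ξ e * p e) := by ring
    have h3 := Real.add_one_le_exp ((Real.exp t - 1) * (c ξ e * p e))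
    linarith
  set S : Ω → ℝ := ∑ e, Y e with hSdef
  have hmgfS : ProbabilityTheory.mgf S μ t = ∏ e, ProbabilityTheory.mgf (Y e) μ t :=
    hindepY.mgf_sum hmeasY Finset.univ
  have hintS : Integrable (fun ω => Real.exp (t * S ω)) μ :=
    hindepY.integrable_exp_mul_sum hmeasY (fun i _ => hintexpY i)
  have hSsum : ∀ ω, S ω = ∑ e, c ξ e * X e ω := by
    intro ω; simp [hSdef, hYdef, Finset.sum_apply]
  have hsumcp : ∑ e, c ξ e * p e ≤ (khat:ℝ) := by
    calc ∑ e, c ξ e * p e ≤ ∑ e, c ξ e * ((khat:ℝ) * x e) :=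
          Finset.sum_le_sum fun e _ => mul_le_mul_of_nonneg_left (hpk e) (hc ξ e).1
      _ = (khat:ℝ) * ∑ e, c ξ e * x e := by
          rw [Finset.mul_sum]; exact Finset.sum_congr rfl fun e _ => by ring
      _ ≤ (khat:ℝ) * 1 := mul_le_mul_of_nonneg_left (hfrac ξ) hk0.le
      _ = (khat:ℝ) := mul_one _
  have hmgfSle : ProbabilityTheory.mgf S μ t ≤ Real.exp ((Real.exp t - 1) * (khat:ℝ)) := by
    rw [hmgfS]
    calc ∏ e, ProbabilityTheory.mgf (Y e) μ t
        ≤ ∏ e, Real.exp ((Real.exp t - 1) * (c ξ e * p e)) :=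
          Finset.prod_le_prod (fun e _ => ProbabilityTheory.mgf_nonneg)
            (fun e _ => hmgfle e)
      _ = Real.exp (∑ e, (Real.exp t - 1) * (c ξ e * p e)) := (Real.exp_sum _ _).symm
      _ ≤ Real.exp ((Real.exp t - 1) * (khat:ℝ)) := by
          apply Real.exp_le_exp.2
          rw [← Finset.mul_sum]
          exact mul_le_mul_of_nonneg_left hsumcp hq0
  set a : ℝ := (khat:ℝ) + (Real.exp 1 - 1) * Real.sqrt ((khat:ℝ) * L) with hadef
  have hchernoff := ProbabilityTheory.measure_ge_le_exp_mul_mgf (X := S) (μ := μ) a ht0.le hintS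
  have hsq1 : t * Real.sqrt ((khat:ℝ) * L) = L := by
    rw [htdef, ← Real.sqrt_mul (div_nonneg hL0.le hk0.le)]
    have heq : L / (khat:ℝ) * ((khat:ℝ) * L) = L * L := by
      field_simp
    rw [heq, Real.sqrt_mul_self hL0.le]
  have hsq2 : (khat:ℝ) * t ^ 2 = L := by rw [ht2]; field_simp
  have hexpbound : Real.exp (-t * a) * ProbabilityTheory.mgf S μ t < 1 / M := by
    have h2 : (Real.exp t - 1) * (khat:ℝ) < (t + (Real.exp 1 - 2) * t ^ 2) * (khat:ℝ) := by
      have h3 := aux_exp_lt ht0 ht1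
      have h4 : Real.exp t - 1 < t + (Real.exp 1 - 2) * t ^ 2 := by linarith
      exact mul_lt_mul_of_pos_right h4 hk0
    calc Real.exp (-t * a) * ProbabilityTheory.mgf S μ t
        ≤ Real.exp (-t * a) * Real.exp ((Real.exp t - 1) * (khat:ℝ)) :=
          mul_le_mul_of_nonneg_left hmgfSle (Real.exp_nonneg _)
      _ < Real.exp (-t * a) * Real.exp ((t + (Real.exp 1 - 2) * t ^ 2) * (khat:ℝ)) :=
          mul_lt_mul_of_pos_left (Real.exp_lt_exp.2 h2) (Real.exp_pos _)
      _ = Real.exp (-t * a + (t + (Real.exp 1 - 2) * t ^ 2) * (khat:ℝ)) :=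
          (Real.exp_add _ _).symm
      _ = Real.exp (-L) := by
          congr 1
          rw [hadef]
          linear_combination (-(Real.exp 1 - 1)) * hsq1 + (Real.exp 1 - 2) * hsq2
      _ = 1 / M := by rw [hLdef, Real.exp_neg, Real.exp_log hM0, one_div]
  have hsub : μ {ω | a < ∑ e, c ξ e * X e ω} ≤ μ {ω | a ≤ S ω} := by
    apply measure_mono
    intro ω hω
    simp only [Set.mem_setOf_eq] at hω ⊢
    rw [hSsum ω]
    exact hω.le
  have hne : μ {ω | a < ∑ e, c ξ e * X e ω} ≠ ⊤ := measure_ne_top μ _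
  have hgoal : μ {ω | a < ∑ e, c ξ e * X e ω} < ENNReal.ofReal (1 / M) := by
    rw [ENNReal.lt_ofReal_iff_toReal_lt hne]
    calc (μ {ω | a < ∑ e, c ξ e * X e ω}).toReal
        ≤ (μ {ω | a ≤ S ω}).toReal :=
          ENNReal.toReal_mono (measure_ne_top μ _) hsub
      _ ≤ Real.exp (-t * a) * ProbabilityTheory.mgf S μ t := hchernoff
      _ < 1 / M := hexpbound
  exact hgoal
end
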